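/- arXiv:1909.12863 — 6 statements merged into one kernel-verified Lean document; each statement's English description precedes it below -/
import Mathlib

section
/- Let G be a simple connected bipartite graph with |V(G)| ≥ 3. Then every circuit of P_fmat(G) with coprime integer components has all entries in {−1,0,1}, and its support is the edge set of an even cycle (with the circuit summing to 0 around every vertex of the cycle) or the edge set of a simple path (with the circuit summing to 0 at every internal vertex of the path). -/
noncomputable section

variable {V : Type*} [Fintype V] [DecidableEq V] (G : SimpleGraph V) [DecidableRel G.Adj]

/-- The sum of `g(e)` over the edges `e` incident to the vertex `v`
(i.e. `g(δ_G(v))` for a vector supported on the incident edges). -/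
def vsum {R : Type*} [AddCommMonoid R] (g : G.edgeSet → R) (v : V) : R :=
  ∑ e : G.edgeSet, if v ∈ (e : Sym2 V) then g e else 0

/-- Membership in the fractional matching polytope `P_fmat(G)`:
`x ≥ 0` and `x(δ_G(v)) ≤ 1` for every non-leaf vertex `v`. -/
def memPfmat (x : G.edgeSet → ℝ) : Prop :=
  (∀ e, 0 ≤ x e) ∧ ∀ v : V, G.degree v ≠ 1 → vsum G x v ≤ 1

/-- `supp(By) ⊆ supp(Bg)` for the constraint matrix `B` of `P_fmat(G)`, whose rows are the
degree constraints of the non-leaf vertices together with the nonnegativity rows `−I`. -/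
def SuppLE (y g : G.edgeSet → ℝ) : Prop :=
  (∀ e, y e ≠ 0 → g e ≠ 0) ∧
  (∀ v : V, G.degree v ≠ 1 → vsum G y v ≠ 0 → vsum G g v ≠ 0)

/-- `g` is a circuit of `P_fmat(G)`: `g ≠ 0` and `Bg` is support-minimal in
`{By : y ≠ 0}`, i.e. no nonzero `y` has `supp(By) ⊊ supp(Bg)`. -/
def IsCircuitFM (g : G.edgeSet → ℝ) : Prop :=
  g ≠ 0 ∧ ∀ y : G.edgeSet → ℝ, y ≠ 0 → ¬ (SuppLE G y g ∧ ¬ SuppLE G g y)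

/-- The set `C(P_fmat(G))` of circuits of `P_fmat(G)` with coprime integer components. -/
def CircFM : Set (G.edgeSet → ℤ) :=
  {g | Finset.univ.gcd (fun e => (g e).natAbs) = 1 ∧
       IsCircuitFM G (fun e => ((g e : ℤ) : ℝ))}

/-- `C₁`: vectors with entries `±1` supported on an even cycle, summing to `0`
around every vertex. -/
def C1 : Set (G.edgeSet → ℤ) :=
  {g | ∃ (u : V) (c : G.Walk u u), c.IsCycle ∧ Even c.length ∧
       (∀ e : G.edgeSet, g e ≠ 0 ↔ (e : Sym2 V) ∈ c.edges) ∧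
       (∀ e : G.edgeSet, (e : Sym2 V) ∈ c.edges → g e = 1 ∨ g e = -1) ∧
       (∀ v : V, vsum G g v = 0)}

/-- `C₂`: vectors with entries `±1` supported on an odd cycle, summing to `0` around every
vertex except exactly one. -/
def C2 : Set (G.edgeSet → ℤ) :=
  {g | ∃ (u : V) (c : G.Walk u u), c.IsCycle ∧ Odd c.length ∧
       (∀ e : G.edgeSet, g e ≠ 0 ↔ (e : Sym2 V) ∈ c.edges) ∧
       (∀ e : G.edgeSet, (e : Sym2 V) ∈ c.edges → g e = 1 ∨ g e = -1) ∧
       (∃! w : V, vsum G g w ≠ 0)}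

/-- `C₃`: vectors with entries `±1` supported on a (nonempty) simple path, summing to `0`
at every internal vertex of the path. -/
def C3 : Set (G.edgeSet → ℤ) :=
  {g | ∃ (u w : V) (p : G.Walk u w), p.IsPath ∧ 0 < p.length ∧
       (∀ e : G.edgeSet, g e ≠ 0 ↔ (e : Sym2 V) ∈ p.edges) ∧
       (∀ e : G.edgeSet, (e : Sym2 V) ∈ p.edges → g e = 1 ∨ g e = -1) ∧
       (∀ v : V, v ∈ p.support → v ≠ u → v ≠ w → vsum G g v = 0)}

/-- `C₄`: vectors supported on the union of an odd cycle `c` and a nonempty simple path `p`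
meeting the cycle exactly at one endpoint of the path, with entries `±1` on the cycle and
`±2` on the path, summing to `0` at every vertex of degree at least `2` in the union
(i.e. at every vertex except the free endpoint `w` of the path). -/
def C4 : Set (G.edgeSet → ℤ) :=
  {g | ∃ (u w : V) (c : G.Walk u u) (p : G.Walk u w),
       c.IsCycle ∧ Odd c.length ∧ p.IsPath ∧ 0 < p.length ∧
       (∀ v : V, v ∈ c.support → v ∈ p.support → v = u) ∧
       (∀ e : G.edgeSet, g e ≠ 0 ↔ ((e : Sym2 V) ∈ c.edges ∨ (e : Sym2 V) ∈ p.edges)) ∧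
       (∀ e : G.edgeSet, (e : Sym2 V) ∈ c.edges → g e = 1 ∨ g e = -1) ∧
       (∀ e : G.edgeSet, (e : Sym2 V) ∈ p.edges → g e = 2 ∨ g e = -2) ∧
       (∀ v : V, v ≠ w → vsum G g v = 0)}

/-- `C₅`: vectors supported on the union of two odd cycles joined by a (possibly empty)
simple path — if the path is nonempty the cycles are node-disjoint and the path meets each
cycle exactly at one of its endpoints; if the path is empty the two cycles share exactly
one vertex — with entries `±1` on the cycles, `±2` on the path, summing to `0` at every
vertex. -/
def C5 : Set (G.edgeSet → ℤ) :=
  {g | (∀ v : V, vsum G g v = 0) ∧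
    ((∃ (u w : V) (c₁ : G.Walk u u) (c₂ : G.Walk w w) (p : G.Walk u w),
        c₁.IsCycle ∧ Odd c₁.length ∧ c₂.IsCycle ∧ Odd c₂.length ∧
        p.IsPath ∧ 0 < p.length ∧
        (∀ v : V, v ∈ c₁.support → v ∉ c₂.support) ∧
        (∀ v : V, v ∈ c₁.support → v ∈ p.support → v = u) ∧
        (∀ v : V, v ∈ c₂.support → v ∈ p.support → v = w) ∧
        (∀ e : G.edgeSet, g e ≠ 0 ↔
          ((e : Sym2 V) ∈ c₁.edges ∨ (e : Sym2 V) ∈ c₂.edges ∨ (e : Sym2 V) ∈ p.edges)) ∧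
        (∀ e : G.edgeSet, (e : Sym2 V) ∈ c₁.edges ∨ (e : Sym2 V) ∈ c₂.edges →
          g e = 1 ∨ g e = -1) ∧
        (∀ e : G.edgeSet, (e : Sym2 V) ∈ p.edges → g e = 2 ∨ g e = -2)) ∨
     (∃ (u : V) (c₁ c₂ : G.Walk u u),
        c₁.IsCycle ∧ Odd c₁.length ∧ c₂.IsCycle ∧ Odd c₂.length ∧
        (∀ v : V, v ∈ c₁.support → v ∈ c₂.support → v = u) ∧
        (∀ e : G.edgeSet, g e ≠ 0 ↔
          ((e : Sym2 V) ∈ c₁.edges ∨ (e : Sym2 V) ∈ c₂.edges)) ∧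
        (∀ e : G.edgeSet, (e : Sym2 V) ∈ c₁.edges ∨ (e : Sym2 V) ∈ c₂.edges →
          g e = 1 ∨ g e = -1)))}

set_option linter.unusedSectionVars false
set_option linter.unusedVariables false
set_option maxHeartbeats 1000000

open SimpleGraph



/-- alternating ±s flow along a walk -/
def flow : {u w : V} → G.Walk u w → ℤ → G.edgeSet → ℤ
  | _, _, Walk.nil, _ => fun _ => 0
  | _, _, Walk.cons (v := v) (u := u) _ p, s =>
      fun e => (if (e : Sym2 V) = s(u, v) then s else 0) + flow p (-s) e

@[simp] lemma flow_nil {u : V} (s : ℤ) (e : G.edgeSet) :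
    flow G (Walk.nil : G.Walk u u) s e = 0 := rfl

@[simp] lemma flow_cons {u v w : V} (h : G.Adj u v) (p : G.Walk v w) (s : ℤ) (e : G.edgeSet) :
    flow G (Walk.cons h p) s e
      = (if (e : Sym2 V) = s(u, v) then s else 0) + flow G p (-s) e := rfl

lemma flow_eq_zero_of_not_mem (e : G.edgeSet) :
    ∀ {u w : V} (p : G.Walk u w) (s : ℤ), (e : Sym2 V) ∉ p.edges → flow G p s e = 0
  | _, _, Walk.nil, _, _ => rfl
  | _, _, Walk.cons h p, s, he => by
      rw [Walk.edges_cons, List.mem_cons] at he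
      push_neg at he
      rw [flow_cons, if_neg he.1, flow_eq_zero_of_not_mem e p (-s) he.2, add_zero]

lemma flow_eq_or (e : G.edgeSet) :
    ∀ {u w : V} (p : G.Walk u w) (s : ℤ), p.edges.Nodup → (e : Sym2 V) ∈ p.edges →
      flow G p s e = s ∨ flow G p s e = -s
  | _, _, Walk.nil, _, _, he => by simp at he
  | _, _, Walk.cons h p, s, hnd, he => by
      rw [Walk.edges_cons, List.nodup_cons] at hnd
      rw [Walk.edges_cons, List.mem_cons] at he
      rw [flow_cons]
      rcases he with h1 | h1
      · rw [if_pos h1, flow_eq_zero_of_not_mem G e p (-s) (by rw [h1]; exact hnd.1), add_zero]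
        exact Or.inl rfl
      · have hne : (e : Sym2 V) ≠ s(_, _) := fun hh => hnd.1 (hh ▸ h1)
        rw [if_neg hne, zero_add]
        rcases flow_eq_or e p (-s) hnd.2 h1 with h2 | h2
        · exact Or.inr (by rw [h2])
        · exact Or.inl (by rw [h2]; ring)

lemma vsum_add (h₁ h₂ : G.edgeSet → ℤ) (x : V) :
    vsum G (fun e => h₁ e + h₂ e) x = vsum G h₁ x + vsum G h₂ x := by
  unfold vsum
  rw [← Finset.sum_add_distrib]
  exact Finset.sum_congr rfl fun e _ => by split <;> simp

lemma vsum_sub (h₁ h₂ : G.edgeSet → ℤ) (x : V) :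
    vsum G (fun e => h₁ e - h₂ e) x = vsum G h₁ x - vsum G h₂ x := by
  unfold vsum
  rw [← Finset.sum_sub_distrib]
  exact Finset.sum_congr rfl fun e _ => by split <;> simp

lemma vsum_single (σ : Sym2 V) (hσ : σ ∈ G.edgeSet) (t : ℤ) (x : V) :
    vsum G (fun e => if (e : Sym2 V) = σ then t else 0) x = if x ∈ σ then t else 0 := by
  unfold vsum
  rw [Finset.sum_eq_single (⟨σ, hσ⟩ : G.edgeSet)]
  · simp
  · intro e _ hne
    have hne' : (e : Sym2 V) ≠ σ := fun hh => hne (Subtype.ext hh)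
    simp [hne']
  · simp

lemma vsum_eq_zero_of (h : G.edgeSet → ℤ) (x : V)
    (hx : ∀ e : G.edgeSet, x ∈ (e : Sym2 V) → h e = 0) : vsum G h x = 0 := by
  unfold vsum
  refine Finset.sum_eq_zero fun e _ => ?_
  by_cases hxe : x ∈ (e : Sym2 V)
  · simp [hxe, hx e hxe]
  · simp [hxe]

lemma vsum_eq_single_val (h : G.edgeSet → ℤ) (x : V) (e₀ : G.edgeSet)
    (hx : x ∈ (e₀ : Sym2 V))
    (huniq : ∀ e : G.edgeSet, h e ≠ 0 → x ∈ (e : Sym2 V) → e = e₀) :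
    vsum G h x = h e₀ := by
  unfold vsum
  rw [Finset.sum_eq_single e₀]
  · rw [if_pos hx]
  · intro e _ hne
    by_cases hxe : x ∈ (e : Sym2 V)
    · rw [if_pos hxe]
      by_contra hz
      exact hne (huniq e hz hxe)
    · exact if_neg hxe
  · simp

lemma vsum_cast (h : G.edgeSet → ℤ) (x : V) :
    vsum G (fun e => ((h e : ℤ) : ℝ)) x = ((vsum G h x : ℤ) : ℝ) := by
  unfold vsum
  rw [Int.cast_sum]
  exact Finset.sum_congr rfl fun e _ => by split <;> simp

lemma mem_support_of_edge {u w x : V} (p : G.Walk u w) {σ : Sym2 V} (hσ : σ ∈ p.edges)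
    (hx : x ∈ σ) : x ∈ p.support := by
  obtain ⟨y, rfl⟩ := Sym2.mem_iff_exists.mp hx
  exact p.fst_mem_support_of_mem_edges hσ

lemma path_start_unique {u v w : V} (hadj : G.Adj u v) (q : G.Walk v w)
    (hp : (Walk.cons hadj q).IsPath) {σ : Sym2 V}
    (hσ : σ ∈ (Walk.cons hadj q).edges) (hu : u ∈ σ) : σ = s(u, v) := by
  rw [Walk.edges_cons, List.mem_cons] at hσ
  rcases hσ with h | h
  · exact h
  · exact absurd (mem_support_of_edge G q h hu) ((Walk.cons_isPath_iff hadj q).mp hp).2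

lemma vsum_flow : ∀ {u w : V} (p : G.Walk u w), p.IsPath → ∀ (s : ℤ) (x : V),
    vsum G (flow G p s) x
      = (if x = u then s else 0) + (if x = w then (-1 : ℤ) ^ (p.length + 1) * s else 0)
  | a, _, Walk.nil, _, s, x => by
      have h0 : vsum G (flow G (Walk.nil : G.Walk a a) s) x = 0 :=
        vsum_eq_zero_of G _ x (fun _ _ => rfl)
      rw [h0]
      by_cases hx : x = a <;> simp [hx, pow_one] 
  | u, w, Walk.cons (v := v) hadj q, hp, s, x => by
      have hq : q.IsPath := ((Walk.cons_isPath_iff hadj q).mp hp).1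
      have huq : u ∉ q.support := ((Walk.cons_isPath_iff hadj q).mp hp).2
      have huv : u ≠ v := hadj.ne
      have huw : u ≠ w := fun hh => huq (hh ▸ q.end_mem_support)
      have h1 : vsum G (flow G (Walk.cons hadj q) s) x
          = (if x ∈ s(u,v) then s else 0) + vsum G (flow G q (-s)) x := by
        rw [show flow G (Walk.cons hadj q) s
            = fun (e : G.edgeSet) => (if (e : Sym2 V) = s(u,v) then s else 0) + flow G q (-s) e from rfl]
        rw [vsum_add, vsum_single G s(u,v) ((G.mem_edgeSet).mpr hadj) s x]
      rw [h1, vsum_flow q hq (-s) x, Walk.length_cons]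
      have hpow : (-1 : ℤ) ^ (q.length + 1 + 1) = -((-1:ℤ) ^ (q.length + 1)) := by ring
      by_cases h2 : x = u <;> by_cases h3 : x = v <;> by_cases h4 : x = w <;>
        simp_all [Sym2.mem_iff] <;> ring

lemma vsum_flow_cycle {u : V} {c : G.Walk u u} (hc : c.IsCycle) (heven : Even c.length)
    (s : ℤ) (x : V) : vsum G (flow G c s) x = 0 := by
  obtain ⟨v, hadj, q, rfl⟩ := Walk.not_nil_iff.mp hc.not_nil
  have hq : q.IsPath := ((Walk.cons_isCycle_iff q hadj).mp hc).1
  have h1 : vsum G (flow G (Walk.cons hadj q) s) x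
      = (if x ∈ s(u,v) then s else 0) + vsum G (flow G q (-s)) x := by
    rw [show flow G (Walk.cons hadj q) s
        = fun (e : G.edgeSet) => (if (e : Sym2 V) = s(u,v) then s else 0) + flow G q (-s) e from rfl]
    rw [vsum_add, vsum_single G s(u,v) ((G.mem_edgeSet).mpr hadj) s x]
  rw [h1, vsum_flow G q hq (-s) x]
  rw [Walk.length_cons] at heven
  have hpow : (-1 : ℤ) ^ (q.length + 1) = 1 := Even.neg_one_pow heven
  have huv : u ≠ v := hadj.ne
  by_cases h2 : x = u <;> by_cases h3 : x = v <;>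
    simp_all [Sym2.mem_iff] <;> ring

lemma even_length_of_coloring (f : V → Bool) (hf : ∀ a b : V, G.Adj a b → f a ≠ f b) :
    ∀ {a b : V} (p : G.Walk a b), (f a = f b ↔ Even p.length)
  | _, _, Walk.nil => by simp
  | a, b, Walk.cons (v := v) h q => by
      have h1 := hf _ _ h
      have h2 := even_length_of_coloring f hf q
      rw [Walk.length_cons, Nat.even_add_one, ← h2]
      revert h1
      cases hfa : f a <;> cases hfv : f v <;> cases hfb : f b <;> simp

lemma degree_ne_one {v a b : V} (ha : G.Adj v a) (hb : G.Adj v b) (hab : a ≠ b) :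
    G.degree v ≠ 1 := by
  have h2 : 1 < G.degree v := by
    rw [← card_neighborFinset_eq_degree]
    exact Finset.one_lt_card.mpr ⟨a, by simp [ha], b, by simp [hb], hab⟩
  omega

lemma cycle_degree {u : V} {c : G.Walk u u} (hc : c.IsCycle) {v : V} (hv : v ∈ c.support) :
    G.degree v ≠ 1 := by
  have hc' := hc.rotate hv
  obtain ⟨b, hb, q, heq⟩ := Walk.not_nil_iff.mp hc'.not_nil
  obtain ⟨a, ha, t, hteq⟩ := Walk.exists_eq_cons_of_ne hb.ne q.reverse
  have hmem : s(v, a) ∈ q.edges := by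
    have : s(v, a) ∈ q.reverse.edges := by rw [hteq, Walk.edges_cons]; exact List.mem_cons_self
    rwa [Walk.edges_reverse, List.mem_reverse] at this
  have hnd := hc'.isCircuit.isTrail.edges_nodup
  rw [heq, Walk.edges_cons, List.nodup_cons] at hnd
  refine degree_ne_one G hb ha fun hab => hnd.1 ?_
  rw [show s(v, b) = s(v, a) from by rw [hab]]
  exact hmem

lemma path_internal_degree {u w : V} {p : G.Walk u w} (hp : p.IsPath) {v : V}
    (hv : v ∈ p.support) (hvu : v ≠ u) (hvw : v ≠ w) : G.degree v ≠ 1 := by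
  have hspec := p.take_spec hv
  obtain ⟨a, ha, t, hteq⟩ := Walk.exists_eq_cons_of_ne hvu (p.takeUntil v hv).reverse
  obtain ⟨b, hb, t', ht'eq⟩ := Walk.exists_eq_cons_of_ne hvw (p.dropUntil v hv)
  have hmemq : s(v, a) ∈ (p.takeUntil v hv).edges := by
    have : s(v, a) ∈ (p.takeUntil v hv).reverse.edges := by
      rw [hteq, Walk.edges_cons]; exact List.mem_cons_self
    rwa [Walk.edges_reverse, List.mem_reverse] at this
  have hmemr : s(v, b) ∈ (p.dropUntil v hv).edges := by
    rw [ht'eq, Walk.edges_cons]; exact List.mem_cons_self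
  have hnd : ((p.takeUntil v hv).edges ++ (p.dropUntil v hv).edges).Nodup := by
    rw [← Walk.edges_append, hspec]; exact hp.isTrail.edges_nodup
  have hdisj := (List.nodup_append'.mp hnd).2.2
  refine degree_ne_one G ha hb fun hab => hdisj hmemq ?_
  rw [show s(v, a) = s(v, b) from by rw [hab]]
  exact hmemr

/-- A vector supported on a path, with zero sums at internal vertices, is an alternating flow. -/
lemma eq_flow : ∀ {u w : V} (p : G.Walk u w), p.IsPath →
    ∀ (h : G.edgeSet → ℤ),
    (∀ e : G.edgeSet, (e : Sym2 V) ∉ p.edges → h e = 0) →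
    (∀ x ∈ p.support, x ≠ u → x ≠ w → vsum G h x = 0) →
    ∀ e, h e = flow G p (vsum G h u) e
  | a, _, Walk.nil, _, h, h0, _, e => by
      rw [h0 e (by simp), flow_nil]
  | u, w, Walk.cons (v := v) hadj q, hp, h, h0, hz, e => by
      have hq : q.IsPath := ((Walk.cons_isPath_iff hadj q).mp hp).1
      have huq : u ∉ q.support := ((Walk.cons_isPath_iff hadj q).mp hp).2
      set e₀ : G.edgeSet := ⟨s(u, v), (G.mem_edgeSet).mpr hadj⟩ with he₀
      -- uniqueness of the edge at u
      have huniq : ∀ e : G.edgeSet, h e ≠ 0 → u ∈ (e : Sym2 V) → e = e₀ := by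
        intro e' he' hue'
        have hmem : (e' : Sym2 V) ∈ (Walk.cons hadj q).edges := by
          by_contra hno; exact he' (h0 e' hno)
        exact Subtype.ext (path_start_unique G hadj q hp hmem hue')
      have hvu : vsum G h u = h e₀ :=
        vsum_eq_single_val G h u e₀ (Sym2.mem_mk_left u v) huniq
      -- the remainder vector
      set h' : G.edgeSet → ℤ := fun e => h e - (if (e : Sym2 V) = s(u, v) then h e₀ else 0)
        with hh'
      have h'0 : ∀ e : G.edgeSet, (e : Sym2 V) ∉ q.edges → h' e = 0 := by
        intro e' hne
        by_cases hcase : (e' : Sym2 V) = s(u, v)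
        · have : e' = e₀ := Subtype.ext hcase
          simp [hh', this, hcase, he₀]
        · have : (e' : Sym2 V) ∉ (Walk.cons hadj q).edges := by
            rw [Walk.edges_cons, List.mem_cons]; push_neg; exact ⟨hcase, hne⟩
          simp [hh', h0 e' this, hcase]
      have h'z : ∀ x ∈ q.support, x ≠ v → x ≠ w → vsum G h' x = 0 := by
        intro x hx hxv hxw
        have hxu : x ≠ u := fun hh => huq (hh ▸ hx)
        have h1 : vsum G h x = 0 :=
          hz x (by rw [Walk.support_cons]; exact List.mem_cons_of_mem _ hx) hxu hxw
        have h2 : vsum G h' x = vsum G h x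
            - vsum G (fun e : G.edgeSet => if (e : Sym2 V) = s(u, v) then h e₀ else 0) x :=
          vsum_sub G _ _ x
        rw [h2, h1, vsum_single G s(u, v) ((G.mem_edgeSet).mpr hadj) (h e₀) x,
          if_neg (by simp [Sym2.mem_iff]; exact ⟨hxu, hxv⟩), sub_zero]
      have key := eq_flow q hq h' h'0 h'z
      have hfinal : ∀ e, h' e = flow G q (-(h e₀)) e := by
        by_cases hqnil : q.Nil
        · have hedges : q.edges = [] :=
            List.length_eq_zero_iff.mp (by rw [Walk.length_edges, Walk.nil_iff_length_eq.mp hqnil])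
          intro e'
          rw [h'0 e' (by rw [hedges]; simp),
            flow_eq_zero_of_not_mem G e' q _ (by rw [hedges]; simp)]
        · have hvw' : v ≠ w := by
            intro hvw; subst hvw
            exact hqnil ((Walk.isPath_iff_eq_nil (p := q)).mp hq ▸ Walk.nil_nil)
          have hzv : vsum G h v = 0 :=
            hz v (by rw [Walk.support_cons]; exact List.mem_cons_of_mem _ q.start_mem_support)
              hadj.ne' hvw'
          have hv' : vsum G h' v = - h e₀ := by
            have h2 := vsum_sub G h
              (fun e : G.edgeSet => if (e : Sym2 V) = s(u,v) then h e₀ else 0) v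
            rw [show vsum G h' v = vsum G (fun e : G.edgeSet =>
                h e - (if (e : Sym2 V) = s(u,v) then h e₀ else 0)) v from rfl,
              h2, hzv, vsum_single G s(u,v) ((G.mem_edgeSet).mpr hadj) (h e₀) v,
              if_pos (Sym2.mem_mk_right u v)]
            ring
          intro e'
          rw [key e', hv']
      rw [hvu]
      rw [flow_cons, ← hfinal e]
      simp only [hh']
      ring

/-- At an endpoint of a maximum-length path in the support of `g` (assuming the support
contains no cycle), the only support edge through the endpoint is the first path edge. -/
lemma endpoint_unique (g : G.edgeSet → ℤ)
    (hnc : ¬ ∃ (z : V) (c : G.Walk z z), c.IsCycle ∧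
      ∀ σ ∈ c.edges, ∃ hσ : σ ∈ G.edgeSet, g ⟨σ, hσ⟩ ≠ 0)
    {u w : V} (p : G.Walk u w) (hp : p.IsPath)
    (hpe : ∀ σ ∈ p.edges, ∃ hσ : σ ∈ G.edgeSet, g ⟨σ, hσ⟩ ≠ 0)
    (hmax : ∀ (a b : V) (q : G.Walk a b), q.IsPath →
        (∀ σ ∈ q.edges, ∃ hσ : σ ∈ G.edgeSet, g ⟨σ, hσ⟩ ≠ 0) → q.length ≤ p.length)
    (hlen : 0 < p.length) :
    ∃ e₀ : G.edgeSet, u ∈ (e₀ : Sym2 V) ∧ (e₀ : Sym2 V) ∈ p.edges ∧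
      ∀ e : G.edgeSet, g e ≠ 0 → u ∈ (e : Sym2 V) → e = e₀ := by
  obtain ⟨v, hadj, q, rfl⟩ := Walk.not_nil_iff.mp (Walk.not_nil_iff_lt_length.mpr hlen)
  refine ⟨⟨s(u, v), (G.mem_edgeSet).mpr hadj⟩, Sym2.mem_mk_left u v,
    by rw [Walk.edges_cons]; exact List.mem_cons_self, ?_⟩
  intro e he hue
  by_cases hin : (e : Sym2 V) ∈ (Walk.cons hadj q).edges
  · exact Subtype.ext (path_start_unique G hadj q hp hin hue)
  exfalso
  obtain ⟨x, hex⟩ := Sym2.mem_iff_exists.mp hue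
  have hax : G.Adj u x := (G.mem_edgeSet).mp (hex ▸ e.2)
  by_cases hxs : x ∈ (Walk.cons hadj q).support
  · -- a cycle in the support
    set q' := (Walk.cons hadj q).takeUntil x hxs with hq'def
    have hq' : q'.IsPath := hp.takeUntil hxs
    have hnotin : s(x, u) ∉ q'.edges := by
      intro hcon
      have h1 : s(x, u) ∈ (Walk.cons hadj q).edges :=
        Walk.edges_takeUntil_subset _ hxs hcon
      exact hin (by rw [hex, Sym2.eq_swap]; exact h1)
    have hcyc : (Walk.cons hax.symm q').IsCycle :=
      (Walk.cons_isCycle_iff q' hax.symm).mpr ⟨hq', hnotin⟩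
    refine hnc ⟨x, Walk.cons hax.symm q', hcyc, ?_⟩
    intro σ hσ
    rw [Walk.edges_cons, List.mem_cons] at hσ
    rcases hσ with hσ | hσ
    · have hσe : σ = (e : Sym2 V) := by rw [hσ, Sym2.eq_swap, ← hex]
      subst hσe
      exact ⟨e.2, by rw [Subtype.coe_eta]; exact he⟩
    · exact hpe σ (Walk.edges_takeUntil_subset _ hxs hσ)
  · -- extend the path, contradicting maximality
    have hnew : (Walk.cons hax.symm (Walk.cons hadj q)).IsPath := hp.cons hxs
    have hcond : ∀ σ ∈ (Walk.cons hax.symm (Walk.cons hadj q)).edges,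
        ∃ hσ : σ ∈ G.edgeSet, g ⟨σ, hσ⟩ ≠ 0 := by
      intro σ hσ
      rw [Walk.edges_cons, List.mem_cons] at hσ
      rcases hσ with hσ | hσ
      · have hσe : σ = (e : Sym2 V) := by rw [hσ, Sym2.eq_swap, ← hex]
        subst hσe
        exact ⟨e.2, by rw [Subtype.coe_eta]; exact he⟩
      · exact hpe σ hσ
    have := hmax _ _ _ hnew hcond
    rw [Walk.length_cons] at this
    omega

lemma conclude (g : G.edgeSet → ℤ) (hgcd : Finset.univ.gcd (fun e => (g e).natAbs) = 1)
    {u w : V} (p : G.Walk u w) (hnd : p.edges.Nodup) (t : ℤ)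
    (hgf : ∀ e, g e = flow G p t e) :
    (t = 1 ∨ t = -1) ∧ (∀ e, g e = -1 ∨ g e = 0 ∨ g e = 1) ∧
    (∀ e : G.edgeSet, g e ≠ 0 ↔ (e : Sym2 V) ∈ p.edges) ∧
    (∀ e : G.edgeSet, (e : Sym2 V) ∈ p.edges → g e = 1 ∨ g e = -1) := by
  have hval : ∀ e : G.edgeSet, g e = 0 ∨ g e = t ∨ g e = -t := by
    intro e
    by_cases hm : (e : Sym2 V) ∈ p.edges
    · rcases flow_eq_or G e p t hnd hm with h | h <;> rw [hgf e, h] <;> tauto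
    · rw [hgf e, flow_eq_zero_of_not_mem G e p t hm]; tauto
  have ht : t = 1 ∨ t = -1 := by
    have hdvd : t.natAbs ∣ 1 := by
      rw [← hgcd]
      refine Finset.dvd_gcd fun e _ => ?_
      rcases hval e with h | h | h <;> rw [h] <;> simp [Int.natAbs_neg]
    rcases Int.natAbs_eq t with h | h <;> rw [Nat.dvd_one.mp hdvd] at h <;> omega
  have hmemval : ∀ e : G.edgeSet, (e : Sym2 V) ∈ p.edges → g e = t ∨ g e = -t := by
    intro e hm
    rcases flow_eq_or G e p t hnd hm with h | h <;> rw [hgf e, h] <;> tauto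
  refine ⟨ht, fun e => by rcases hval e with h | h | h <;> rcases ht with h2 | h2 <;> omega,
    fun e => ⟨?_, ?_⟩,
    fun e hm => by rcases hmemval e hm with h | h <;> rcases ht with h2 | h2 <;> omega⟩
  · intro hne
    by_contra hm
    exact hne (by rw [hgf e, flow_eq_zero_of_not_mem G e p t hm])
  · intro hm
    rcases hmemval e hm with h | h <;> rcases ht with h2 | h2 <;> omega

/-- for a simple connected *bipartite* graph `G` with at least three
vertices, every circuit of `P_fmat(G)` with coprime integer components has entries in
`{−1,0,1}` and is supported on an even cycle (summing to `0` around every vertex) or on a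
simple path (summing to `0` at every internal vertex), i.e. it belongs to `C₁ ∪ C₃`. -/
theorem circuits_of_bipartite_fractional_matching_polytope
    (hconn : G.Connected) (hcard : 3 ≤ Fintype.card V)
    (hbip : ∃ f : V → Bool, ∀ a b : V, G.Adj a b → f a ≠ f b)
    (g : G.edgeSet → ℤ) (hg : g ∈ CircFM G) :
    (∀ e : G.edgeSet, g e = -1 ∨ g e = 0 ∨ g e = 1) ∧ (g ∈ C1 G ∨ g ∈ C3 G) := by
  classical
  obtain ⟨hgcd, hgne, hmin⟩ := hg
  obtain ⟨f, hf⟩ := hbip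
  have hg0 : ∃ e, g e ≠ 0 := by
    by_contra hall
    push_neg at hall
    exact hgne (funext fun e => by simp [hall e])
  by_cases hcyc : ∃ (z : V) (c : G.Walk z z), c.IsCycle ∧
      ∀ σ ∈ c.edges, ∃ hσ : σ ∈ G.edgeSet, g ⟨σ, hσ⟩ ≠ 0
  · -- support contains a cycle: C1
    obtain ⟨u, c, hc, hce⟩ := hcyc
    obtain ⟨v0, hadj0, q0, hceq⟩ := Walk.not_nil_iff.mp hc.not_nil
    subst hceq
    have hnd : (Walk.cons hadj0 q0).edges.Nodup := hc.isCircuit.isTrail.edges_nodup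
    have heven : Even (Walk.cons hadj0 q0).length :=
      (even_length_of_coloring G f hf (Walk.cons hadj0 q0)).mp rfl
    set y : G.edgeSet → ℤ := flow G (Walk.cons hadj0 q0) 1 with hydef
    have he₀mem : s(u, v0) ∈ (Walk.cons hadj0 q0).edges := by
      rw [Walk.edges_cons]; exact List.mem_cons_self
    set e₀ : G.edgeSet := ⟨s(u, v0), (G.mem_edgeSet).mpr hadj0⟩ with he₀def
    have hye₀ : y e₀ = 1 ∨ y e₀ = -1 := flow_eq_or G e₀ _ 1 hnd he₀mem
    set yR : G.edgeSet → ℝ := fun e => ((y e : ℤ) : ℝ) with hyRdef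
    have hyR0 : yR ≠ 0 := by
      intro hh
      have h1 := congrFun hh e₀
      simp only [hyRdef, Pi.zero_apply, Int.cast_eq_zero] at h1
      omega
    have hvy : ∀ x, vsum G y x = 0 := fun x => vsum_flow_cycle G hc heven 1 x
    have hsle : SuppLE G yR (fun e => ((g e : ℤ) : ℝ)) := by
      constructor
      · intro e hye
        have h1 : y e ≠ 0 := fun hz => hye (by simp [hyRdef, hz])
        have hmem : (e : Sym2 V) ∈ (Walk.cons hadj0 q0).edges := by
          by_contra hnm
          exact h1 (flow_eq_zero_of_not_mem G e _ 1 hnm)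
        obtain ⟨hσ, hne⟩ := hce _ hmem
        rw [Subtype.coe_eta] at hne
        exact Int.cast_ne_zero.mpr hne
      · intro v _ hvne
        exact absurd (by rw [hyRdef, vsum_cast, hvy v]; norm_num) hvne
    have hgy : SuppLE G (fun e => ((g e : ℤ) : ℝ)) yR := by
      by_contra hk
      exact hmin yR hyR0 ⟨hsle, hk⟩
    have hsupp : ∀ e : G.edgeSet, g e ≠ 0 → (e : Sym2 V) ∈ (Walk.cons hadj0 q0).edges := by
      intro e he
      have h2 : yR e ≠ 0 := hgy.1 e (Int.cast_ne_zero.mpr he)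
      have h3 : y e ≠ 0 := fun hz => h2 (by simp [hyRdef, hz])
      by_contra hnm
      exact h3 (flow_eq_zero_of_not_mem G e _ 1 hnm)
    have hvz : ∀ x, vsum G g x = 0 := by
      intro x
      by_cases hxs : x ∈ (Walk.cons hadj0 q0).support
      · by_contra hne
        have hdx := cycle_degree G hc hxs
        have h4 : vsum G (fun e => ((g e : ℤ) : ℝ)) x ≠ 0 := by
          rw [vsum_cast]
          exact fun hh => hne (by exact_mod_cast hh)
        exact (hgy.2 x hdx h4) (by rw [hyRdef, vsum_cast, hvy x]; norm_num)
      · refine vsum_eq_zero_of G g x fun e hxe => ?_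
        by_contra hne
        exact hxs (mem_support_of_edge G _ (hsupp e hne) hxe)
    have hq0 : q0.IsPath := ((Walk.cons_isCycle_iff q0 hadj0).mp hc).1
    set h' : G.edgeSet → ℤ := fun e => g e - (if (e : Sym2 V) = s(u, v0) then g e₀ else 0)
      with hh'
    have h'0 : ∀ e : G.edgeSet, (e : Sym2 V) ∉ q0.edges → h' e = 0 := by
      intro e hne
      by_cases hcase : (e : Sym2 V) = s(u, v0)
      · have he : e = e₀ := Subtype.ext hcase
        simp [hh', he, he₀def]
      · have hnc2 : (e : Sym2 V) ∉ (Walk.cons hadj0 q0).edges := by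
          rw [Walk.edges_cons, List.mem_cons]
          push_neg
          exact ⟨hcase, hne⟩
        have hgz : g e = 0 := by by_contra hne2; exact hnc2 (hsupp e hne2)
        simp [hh', hgz, hcase]
    have h'z : ∀ x ∈ q0.support, x ≠ v0 → x ≠ u → vsum G h' x = 0 := by
      intro x _ hxv hxu
      rw [hh', vsum_sub G g _ x, hvz x,
        vsum_single G s(u, v0) ((G.mem_edgeSet).mpr hadj0) (g e₀) x,
        if_neg (by rw [Sym2.mem_iff]; push_neg; exact ⟨hxu, hxv⟩)]
      ring
    have key := eq_flow G q0 hq0 h' h'0 h'z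
    have hv' : vsum G h' v0 = - g e₀ := by
      rw [hh', vsum_sub G g _ v0, hvz v0,
        vsum_single G s(u, v0) ((G.mem_edgeSet).mpr hadj0) (g e₀) v0,
        if_pos (Sym2.mem_mk_right u v0)]
      ring
    have hgf : ∀ e, g e = flow G (Walk.cons hadj0 q0) (g e₀) e := by
      intro e
      rw [flow_cons]
      have hk := key e
      rw [hv'] at hk
      rw [← hk, hh']
      ring
    obtain ⟨ht, hentries, hiff, hpm⟩ := conclude G g hgcd (Walk.cons hadj0 q0) hnd (g e₀) hgf
    exact ⟨hentries, Or.inl ⟨u, Walk.cons hadj0 q0, hc, heven, hiff, hpm, hvz⟩⟩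
  · -- support is acyclic: C3
    set P : ℕ → Prop := fun n => ∃ (a b : V) (q : G.Walk a b), q.IsPath ∧
        (∀ σ ∈ q.edges, ∃ hσ : σ ∈ G.edgeSet, g ⟨σ, hσ⟩ ≠ 0) ∧ q.length = n with hP
    have hP1 : P 1 := by
      obtain ⟨e₁, he₁⟩ := hg0
      obtain ⟨σ, hσmem⟩ := e₁
      revert he₁
      revert hσmem
      induction σ using Sym2.ind with
      | _ a b =>
        intro hσmem he₁
        have hadj : G.Adj a b := (G.mem_edgeSet).mp hσmem
        refine ⟨a, b, Walk.cons hadj Walk.nil, ?_, ?_, rfl⟩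
        · rw [Walk.cons_isPath_iff]
          exact ⟨Walk.IsPath.nil, by simp [hadj.ne]⟩
        · intro σ' hσ'
          rw [Walk.edges_cons, Walk.edges_nil, List.mem_singleton] at hσ'
          subst hσ'
          exact ⟨hσmem, he₁⟩
    have hcard1 : 1 ≤ Fintype.card V := by omega
    have hPN : P (Nat.findGreatest P (Fintype.card V)) :=
      Nat.findGreatest_spec hcard1 hP1
    obtain ⟨u, w, p, hp, hpe, hplen⟩ := hPN
    have hmaxN : ∀ (a b : V) (q : G.Walk a b), q.IsPath →
        (∀ σ ∈ q.edges, ∃ hσ : σ ∈ G.edgeSet, g ⟨σ, hσ⟩ ≠ 0) → q.length ≤ p.length := by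
      intro a b q h1 h2
      rw [hplen]
      by_contra hlt
      push_neg at hlt
      exact Nat.findGreatest_is_greatest hlt (Nat.le_of_lt h1.length_lt) ⟨a, b, q, h1, h2, rfl⟩
    have hlen : 0 < p.length := by
      have h1 := Nat.le_findGreatest hcard1 hP1
      omega
    obtain ⟨e₀, hue₀, he₀p, huniq⟩ := endpoint_unique G g hcyc p hp hpe hmaxN hlen
    have hrevpe : ∀ σ ∈ p.reverse.edges, ∃ hσ : σ ∈ G.edgeSet, g ⟨σ, hσ⟩ ≠ 0 := by
      intro σ hσ
      rw [Walk.edges_reverse, List.mem_reverse] at hσ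
      exact hpe σ hσ
    have hrevmax : ∀ (a b : V) (q : G.Walk a b), q.IsPath →
        (∀ σ ∈ q.edges, ∃ hσ : σ ∈ G.edgeSet, g ⟨σ, hσ⟩ ≠ 0) → q.length ≤ p.reverse.length := by
      intro a b q h1 h2
      rw [Walk.length_reverse]
      exact hmaxN a b q h1 h2
    obtain ⟨e₁', hwe₁, he₁p, hwuniq⟩ := endpoint_unique G g hcyc p.reverse hp.reverse hrevpe
      hrevmax (by rw [Walk.length_reverse]; exact hlen)
    have hge₀ : g e₀ ≠ 0 := by
      obtain ⟨hσ, hne⟩ := hpe _ he₀p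
      rwa [Subtype.coe_eta] at hne
    have hge₁ : g e₁' ≠ 0 := by
      obtain ⟨hσ, hne⟩ := hrevpe _ he₁p
      rwa [Subtype.coe_eta] at hne
    have hvsu : vsum G g u = g e₀ := vsum_eq_single_val G g u e₀ hue₀ huniq
    have hvsw : vsum G g w = g e₁' := vsum_eq_single_val G g w e₁' hwe₁ hwuniq
    have hnd : p.edges.Nodup := hp.isTrail.edges_nodup
    set y : G.edgeSet → ℤ := flow G p 1 with hydef
    have hye₀ : y e₀ = 1 ∨ y e₀ = -1 := flow_eq_or G e₀ p 1 hnd he₀p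
    set yR : G.edgeSet → ℝ := fun e => ((y e : ℤ) : ℝ) with hyRdef
    have hyR0 : yR ≠ 0 := by
      intro hh
      have h1 := congrFun hh e₀
      simp only [hyRdef, Pi.zero_apply, Int.cast_eq_zero] at h1
      omega
    have hvyform := vsum_flow G p hp 1
    have hsle : SuppLE G yR (fun e => ((g e : ℤ) : ℝ)) := by
      constructor
      · intro e hye
        have h1 : y e ≠ 0 := fun hz => hye (by simp [hyRdef, hz])
        have hmem : (e : Sym2 V) ∈ p.edges := by
          by_contra hnm
          exact h1 (flow_eq_zero_of_not_mem G e p 1 hnm)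
        obtain ⟨hσ, hne⟩ := hpe _ hmem
        rw [Subtype.coe_eta] at hne
        exact Int.cast_ne_zero.mpr hne
      · intro v _ hvne
        have h2 : vsum G y v ≠ 0 := by
          intro hz
          exact hvne (by rw [hyRdef, vsum_cast, hz]; norm_num)
        have h3 : v = u ∨ v = w := by
          by_contra hk
          push_neg at hk
          rw [hydef, hvyform v, if_neg hk.1, if_neg hk.2] at h2
          simp at h2
        rw [vsum_cast, Int.cast_ne_zero]
        rcases h3 with rfl | rfl
        · rw [hvsu]; exact hge₀
        · rw [hvsw]; exact hge₁
    have hgy : SuppLE G (fun e => ((g e : ℤ) : ℝ)) yR := by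
      by_contra hk
      exact hmin yR hyR0 ⟨hsle, hk⟩
    have hsupp : ∀ e : G.edgeSet, g e ≠ 0 → (e : Sym2 V) ∈ p.edges := by
      intro e he
      have h2 : yR e ≠ 0 := hgy.1 e (Int.cast_ne_zero.mpr he)
      have h3 : y e ≠ 0 := fun hz => h2 (by simp [hyRdef, hz])
      by_contra hnm
      exact h3 (flow_eq_zero_of_not_mem G e p 1 hnm)
    have hint : ∀ x ∈ p.support, x ≠ u → x ≠ w → vsum G g x = 0 := by
      intro x hx hxu hxw
      by_contra hne
      have hdeg := path_internal_degree G hp hx hxu hxw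
      have h4 : vsum G (fun e => ((g e : ℤ) : ℝ)) x ≠ 0 := by
        rw [vsum_cast]
        exact fun hh => hne (by exact_mod_cast hh)
      refine (hgy.2 x hdeg h4) ?_
      rw [hyRdef, vsum_cast, hydef, hvyform x, if_neg hxu, if_neg hxw]
      norm_num
    have h0 : ∀ e : G.edgeSet, (e : Sym2 V) ∉ p.edges → g e = 0 := by
      intro e hne
      by_contra hgz
      exact hne (hsupp e hgz)
    have key := eq_flow G p hp g h0 hint
    have hgf : ∀ e, g e = flow G p (g e₀) e := by
      intro e
      rw [← hvsu]
      exact key e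
    obtain ⟨ht, hentries, hiff, hpm⟩ := conclude G g hgcd p hnd (g e₀) hgf
    exact ⟨hentries, Or.inr ⟨u, w, p, hp, hlen, hiff, hpm, hint⟩⟩
end
end

section
/- Let G be a simple graph containing no even cycle, and let C and D be two distinct odd cycles in G. Then |V(C) ∩ V(D)| ≤ 1. Equivalently, if a simple graph contains two distinct odd cycles sharing at least two vertices, then it contains an even cycle. -/
open SimpleGraph Walk

section Aux

variable {V : Type*} [DecidableEq V] {G : SimpleGraph V}

/-- Every vertex in the support of a nonempty closed walk is in the tail of the support. -/
lemma OCaux.mem_tail_of_closed {x : V} {C : G.Walk x x} (hC : ¬ C.Nil) {v : V}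
    (hv : v ∈ C.support) : v ∈ C.support.tail := by
  cases C with
  | nil => exact absurd .nil hC
  | cons h p =>
    rw [support_cons] at hv ⊢
    rcases List.mem_cons.mp hv with rfl | hv
    · exact p.end_mem_support
    · exact hv

/-- Split a walk at the first vertex satisfying a predicate. -/
lemma OCaux.walk_split_first (S : Set V) :
    ∀ {x y : V} (W : G.Walk x y), y ∈ S →
    ∃ (z : V) (P : G.Walk x z) (R : G.Walk z y),
      z ∈ S ∧ (∀ v ∈ P.support, v ≠ z → v ∉ S) ∧ P.append R = W := by
  intro x y W
  induction W with
  | nil => exact fun hy => ⟨_, .nil, .nil, hy, by simp, rfl⟩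
  | @cons x x₁ y h W ih =>
    intro hy
    by_cases hx : x ∈ S
    · exact ⟨x, .nil, .cons h W, hx, by simp, rfl⟩
    · obtain ⟨z, P, R, hz, hP, hPR⟩ := ih hy
      refine ⟨z, .cons h P, R, hz, ?_, by rw [cons_append, hPR]⟩
      intro v hv hvz
      rcases List.mem_cons.mp (by simpa [support_cons] using hv) with rfl | hv
      · exact hx
      · exact hP v hv hvz

/-- From a path between two vertices of `S` containing an edge outside `EC`,
extract a path between two distinct vertices of `S`, internally disjoint from `S`,
with no edge in `EC`. -/
lemma OCaux.exists_offpath {S : Set V} {EC : Set (Sym2 V)}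
    (hend : ∀ e ∈ EC, ∀ v ∈ e, v ∈ S) :
    ∀ {x y : V} (W : G.Walk x y), W.IsPath → x ∈ S → y ∈ S →
    (∃ e ∈ W.edges, e ∉ EC) →
    ∃ (p q : V) (P : G.Walk p q), p ∈ S ∧ q ∈ S ∧ p ≠ q ∧ P.IsPath ∧
      (∀ e ∈ P.edges, e ∉ EC) ∧ (∀ v ∈ P.support, v ≠ p → v ≠ q → v ∉ S) := by
  intro x y W
  induction W with
  | nil => rintro _ _ _ ⟨e, he, -⟩; simp at he
  | @cons x x₁ y h W ih =>
    rintro hWp hx hy ⟨e, he, heEC⟩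
    by_cases hce : s(x, x₁) ∈ EC
    · have hx₁ : x₁ ∈ S := hend _ hce x₁ (by simp)
      have heW : e ∈ W.edges := by
        rcases List.mem_cons.mp (by simpa [edges_cons] using he) with rfl | heW
        · exact absurd hce heEC
        · exact heW
      exact ih hWp.of_cons hx₁ hy ⟨e, heW, heEC⟩
    · obtain ⟨z, P, R, hz, hP, hPR⟩ := walk_split_first S W hy
      have hPsub : P.support ⊆ W.support := by
        rw [← hPR]; exact subset_support_append_left _ _
      have hxW : x ∉ W.support := ((cons_isPath_iff h W).mp hWp).2
      have hWpath : W.IsPath := hWp.of_cons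
      have hPpath : P.IsPath := by
        rw [← hPR] at hWpath; exact hWpath.of_append_left
      have hxz : x ≠ z := by
        rintro rfl
        exact hxW (hPsub P.end_mem_support)
      refine ⟨x, z, .cons h P, hx, hz, hxz, ?_, ?_, ?_⟩
      · exact (cons_isPath_iff h P).mpr ⟨hPpath, fun hc => hxW (hPsub hc)⟩
      · intro e' he' he'EC
        rcases List.mem_cons.mp (by simpa [edges_cons] using he') with rfl | he'P
        · exact hce he'EC
        · induction e' using Sym2.ind with
          | _ p' q' =>
            have hp' : p' ∈ P.support := P.fst_mem_support_of_mem_edges he'P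
            have hq' : q' ∈ P.support := P.snd_mem_support_of_mem_edges he'P
            have hpq : p' ≠ q' := by
              have := P.edges_subset_edgeSet he'P
              exact fun hc => G.irrefl (hc ▸ (G.mem_edgeSet.mp this))
            rcases eq_or_ne p' z with rfl | hpz
            · exact hP q' hq' (Ne.symm hpq) (hend _ he'EC q' (by simp))
            · exact hP p' hp' hpz (hend _ he'EC p' (by simp))
      · intro v hv hvx hvz
        rcases List.mem_cons.mp (by simpa [support_cons] using hv) with rfl | hv
        · exact absurd rfl hvx
        · exact hP v hv hvz

/-- Splitting a cycle at a vertex gives two paths. -/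
lemma OCaux.cycle_split {x : V} {C : G.Walk x x} (hC : C.IsCycle) {y : V} (hy : y ∈ C.support)
    (hyx : y ≠ x) :
    (C.takeUntil y hy).IsPath ∧ (C.dropUntil y hy).IsPath := by
  have hspec := C.take_spec hy
  have htail : C.support.tail
      = (C.takeUntil y hy).support.tail ++ (C.dropUntil y hy).support.tail := by
    conv_lhs => rw [← hspec]
    rw [tail_support_append]
  have hnodup := hC.support_nodup
  rw [htail, List.nodup_append] at hnodup
  obtain ⟨h1, h2, hdisj⟩ := hnodup
  constructor
  · rw [isPath_def, support_eq_cons]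
    refine List.nodup_cons.mpr ⟨fun hc => ?_, h1⟩
    have hxd : x ∈ (C.dropUntil y hy).support.tail :=
      end_mem_tail_support_of_ne hyx _
    exact hdisj x hc x hxd rfl
  · rw [isPath_def, support_eq_cons]
    refine List.nodup_cons.mpr ⟨fun hc => ?_, h2⟩
    have hyt : y ∈ (C.takeUntil y hy).support.tail :=
      end_mem_tail_support_of_ne (Ne.symm hyx) _
    exact hdisj y hyt y hc rfl

/-- Gluing two internally disjoint, edge-disjoint paths gives a cycle. -/
lemma OCaux.glue_cycle {x y : V} (hxy : x ≠ y) {P : G.Walk x y} {Q : G.Walk y x}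
    (hP : P.IsPath) (hQ : Q.IsPath)
    (hsup : ∀ v ∈ P.support, v ∈ Q.support → v = x ∨ v = y)
    (hedge : ∀ e ∈ P.edges, e ∉ Q.edges) :
    (P.append Q).IsCycle := by
  refine ⟨⟨⟨?_⟩, ?_⟩, ?_⟩
  · rw [edges_append]
    exact List.Nodup.append hP.isTrail.edges_nodup hQ.isTrail.edges_nodup hedge
  · intro hn
    have hlen := congrArg Walk.length hn
    rw [length_append] at hlen
    have hP0 : P.length = 0 := by simpa using Nat.eq_zero_of_add_eq_zero_right hlen
    exact hxy (Walk.Nil.eq (nil_iff_length_eq.mpr hP0))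
  · rw [tail_support_append]
    refine List.Nodup.append (hP.support_nodup.tail) (hQ.support_nodup.tail) ?_
    intro v hvP hvQ
    have hvP' : v ∈ P.support := by rw [support_eq_cons]; exact List.mem_cons_of_mem _ hvP
    have hvQ' : v ∈ Q.support := by rw [support_eq_cons]; exact List.mem_cons_of_mem _ hvQ
    rcases hsup v hvP' hvQ' with rfl | rfl
    · have := hP.support_nodup
      rw [support_eq_cons, List.nodup_cons] at this
      exact this.1 hvP
    · have := hQ.support_nodup
      rw [support_eq_cons, List.nodup_cons] at this
      exact this.1 hvQ

/-- Main auxiliary lemma: if `d` has an edge not on `c`, and the two cycles share two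
distinct vertices, we get an even cycle. -/
lemma OCaux.main {u w : V} {c : G.Walk u u} {d : G.Walk w w}
    (hnoeven : ∀ (v : V) (e : G.Walk v v), e.IsCycle → ¬ Even e.length)
    (hc : c.IsCycle) (hd : d.IsCycle) (hcodd : Odd c.length)
    (hex : ∃ e ∈ d.edges, e ∉ c.edges)
    {a b : V} (hac : a ∈ c.support) (had : a ∈ d.support) (hbc : b ∈ c.support)
    (hbd : b ∈ d.support) (hab : a ≠ b) : False := by
  classical
  set S : Set V := {v | v ∈ c.support} with hS
  set EC : Set (Sym2 V) := {e | e ∈ c.edges} with hEC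
  have hend : ∀ e ∈ EC, ∀ v ∈ e, v ∈ S := by
    intro e he v hv
    induction e using Sym2.ind with
    | _ p' q' =>
      rcases Sym2.mem_iff.mp hv with rfl | rfl
      · exact c.fst_mem_support_of_mem_edges he
      · exact c.snd_mem_support_of_mem_edges he
  -- rotate d at a and split at b
  have hd₁c : (d.rotate a had).IsCycle := hd.rotate had
  set d₁ : G.Walk a a := d.rotate a had with hd₁
  have hbd₁ : b ∈ d₁.support := by
    rw [support_eq_cons]
    refine List.mem_cons_of_mem _ ?_
    exact ((support_rotate d a had).perm.mem_iff).mpr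
      (mem_tail_of_closed hd.not_nil hbd)
  obtain ⟨hW₁p, hW₂p⟩ := cycle_split hd₁c hbd₁ (Ne.symm hab)
  set W₁ := d₁.takeUntil b hbd₁ with hW₁
  set W₂ := d₁.dropUntil b hbd₁ with hW₂
  obtain ⟨e, hed, hec⟩ := hex
  have hed₁ : e ∈ d₁.edges := ((rotate_edges d a had).perm.mem_iff).mpr hed
  have hsplit : e ∈ W₁.edges ∨ e ∈ W₂.edges := by
    have := congrArg Walk.edges (d₁.take_spec hbd₁)
    rw [edges_append] at this
    rw [← this] at hed₁
    exact List.mem_append.mp hed₁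
  -- obtain the off-cycle path P
  have hoff : ∃ (p q : V) (P : G.Walk p q), p ∈ S ∧ q ∈ S ∧ p ≠ q ∧ P.IsPath ∧
      (∀ e ∈ P.edges, e ∉ EC) ∧ (∀ v ∈ P.support, v ≠ p → v ≠ q → v ∉ S) := by
    rcases hsplit with h1 | h2
    · exact exists_offpath hend W₁ hW₁p hac hbc ⟨e, h1, hec⟩
    · exact exists_offpath hend W₂ hW₂p hbc hac ⟨e, h2, hec⟩
  obtain ⟨p, q, P, hpS, hqS, hpq, hPp, hPe, hPint⟩ := hoff
  -- rotate c at p and split at q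
  have hpc : p ∈ c.support := hpS
  have hc₂c : (c.rotate p hpc).IsCycle := hc.rotate hpc
  set c₂ : G.Walk p p := c.rotate p hpc with hc₂
  have hqc₂ : q ∈ c₂.support := by
    rw [support_eq_cons]
    exact List.mem_cons_of_mem _
      (((support_rotate c p hpc).perm.mem_iff).mpr (mem_tail_of_closed hc.not_nil hqS))
  obtain ⟨hQ₁p, hQ₂p⟩ := cycle_split hc₂c hqc₂ (Ne.symm hpq)
  set Q₁ := c₂.takeUntil q hqc₂ with hQ₁
  set Q₂ := c₂.dropUntil q hqc₂ with hQ₂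
  have hc₂edges : ∀ e' ∈ c₂.edges, e' ∈ c.edges :=
    fun e' he' => ((rotate_edges c p hpc).perm.mem_iff).mp he'
  have hc₂supp : ∀ v ∈ c₂.support, v ∈ c.support := by
    intro v hv
    rw [support_eq_cons] at hv
    rcases List.mem_cons.mp hv with rfl | hv
    · exact hpc
    · rw [support_eq_cons]
      exact List.mem_cons_of_mem _ (((support_rotate c p hpc).perm.mem_iff).mp hv)
  have hlensum : Odd (Q₁.length + Q₂.length) := by
    have h1 := congrArg Walk.length (c₂.take_spec hqc₂)
    rw [length_append] at h1
    have h2 : c₂.length = c.length := by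
      have := (rotate_edges c p hpc).perm.length_eq
      rwa [length_edges, length_edges] at this
    rw [h1, h2]
    exact hcodd
  -- the key gluing step
  have key : ∀ (Q : G.Walk q p), Q.IsPath → (∀ e' ∈ Q.edges, e' ∈ c.edges) →
      (∀ v ∈ Q.support, v ∈ c.support) → Even (P.length + Q.length) → False := by
    intro Q hQp hQe hQs heven
    have hcyc : (P.append Q).IsCycle := by
      refine glue_cycle hpq hPp hQp ?_ ?_
      · intro v hvP hvQ
        by_contra hcon
        push_neg at hcon
        exact hPint v hvP hcon.1 hcon.2 (hQs v hvQ)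
      · intro e' he' he'Q
        exact hPe e' he' (hQe e' he'Q)
    exact hnoeven p (P.append Q) hcyc (by rwa [length_append])
  have hQ₁e : ∀ e' ∈ Q₁.edges, e' ∈ c.edges :=
    fun e' he' => hc₂edges e' (edges_takeUntil_subset c₂ hqc₂ he')
  have hQ₂e : ∀ e' ∈ Q₂.edges, e' ∈ c.edges :=
    fun e' he' => hc₂edges e' (edges_dropUntil_subset c₂ hqc₂ he')
  have hQ₁s : ∀ v ∈ Q₁.support, v ∈ c.support :=
    fun v hv => hc₂supp v (support_takeUntil_subset c₂ hqc₂ hv)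
  have hQ₂s : ∀ v ∈ Q₂.support, v ∈ c.support :=
    fun v hv => hc₂supp v (support_dropUntil_subset c₂ hqc₂ hv)
  rcases Nat.even_or_odd (P.length + Q₁.length) with h1 | h1
  · refine key Q₁.reverse hQ₁p.reverse ?_ ?_ ?_
    · intro e' he'
      rw [edges_reverse, List.mem_reverse] at he'
      exact hQ₁e e' he'
    · intro v hv
      rw [support_reverse, List.mem_reverse] at hv
      exact hQ₁s v hv
    · rwa [length_reverse]
  · refine key Q₂ hQ₂p hQ₂e hQ₂s ?_
    rw [Nat.even_iff]
    rw [Nat.odd_iff] at h1 hlensum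
    omega

end Aux

/-- in a simple graph containing no even cycle, any two distinct odd
cycles share at most one vertex. -/
theorem odd_cycles_share_at_most_one_vertex
    {V : Type*} [DecidableEq V] (G : SimpleGraph V)
    (hnoeven : ∀ (v : V) (e : G.Walk v v), e.IsCycle → ¬ Even e.length)
    (u w : V) (c : G.Walk u u) (d : G.Walk w w)
    (hc : c.IsCycle) (hd : d.IsCycle)
    (hcodd : Odd c.length) (hdodd : Odd d.length)
    (hdist : c.edges.toFinset ≠ d.edges.toFinset) :
    ∀ a b : V, a ∈ c.support → a ∈ d.support → b ∈ c.support → b ∈ d.support → a = b := by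
  intro a b hac had hbc hbd
  by_contra hab
  by_cases hex : ∃ e ∈ d.edges, e ∉ c.edges
  · exact OCaux.main hnoeven hc hd hcodd hex hac had hbc hbd hab
  · push_neg at hex
    have hex' : ∃ e ∈ c.edges, e ∉ d.edges := by
      by_contra h
      push_neg at h
      apply hdist
      ext e
      simp only [List.mem_toFinset]
      exact ⟨fun h1 => h e h1, fun h1 => hex e h1⟩
    exact OCaux.main hnoeven hd hc hdodd hex' had hac hbd hbc hab
end

section
/- Let v ∈ ker(A) with v ≠ 0. Then v can be written as v = Σ_{i=1}^{k} αᵢ gⁱ where k ≤ n, each gⁱ ∈ C(A,B), each αᵢ ≥ 0, and for every i: gⁱ and v are sign-compatible with respect to B (i.e., (Bgⁱ)(j)·(Bv)(j) ≥ 0 for every row index j) and supp(Bgⁱ) ⊆ supp(Bv). -/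
open Matrix

noncomputable section

variable {n mA mB : ℕ}

/-- The real matrix obtained from an integer matrix. -/
def rmat {m k : Type*} (M : Matrix m k ℤ) : Matrix m k ℝ := M.map (fun z => (z : ℝ))

/-- `g` is a circuit of the system `Ax = b, Bx ≤ d`:  `g` is a nonzero kernel element of `A`
whose image `Bg` is support-minimal among `{By : y ∈ ker A, y ≠ 0}`. -/
def IsCircuit (A : Matrix (Fin mA) (Fin n) ℤ) (B : Matrix (Fin mB) (Fin n) ℤ)
    (g : Fin n → ℝ) : Prop :=
  g ≠ 0 ∧ (rmat A).mulVec g = 0 ∧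
    ∀ y : Fin n → ℝ, y ≠ 0 → (rmat A).mulVec y = 0 →
      ¬ ({i | (rmat B).mulVec y i ≠ 0} ⊂ {i | (rmat B).mulVec g i ≠ 0})

/-- The set `C(A,B)` of circuits, normalized to have coprime integer components. -/
def CAB (A : Matrix (Fin mA) (Fin n) ℤ) (B : Matrix (Fin mB) (Fin n) ℤ) :
    Set (Fin n → ℝ) :=
  {g | IsCircuit A B g ∧ ∃ gz : Fin n → ℤ, (∀ i, g i = (gz i : ℝ)) ∧
        Finset.univ.gcd (fun i => (gz i).natAbs) = 1}

namespace SignCompatAux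

open scoped Classical in
def sB (B : Matrix (Fin mB) (Fin n) ℤ) (y : Fin n → ℝ) : Finset (Fin mB) :=
  Finset.univ.filter fun j => (rmat B).mulVec y j ≠ 0

lemma mem_sB {B : Matrix (Fin mB) (Fin n) ℤ} {y : Fin n → ℝ} {j : Fin mB} :
    j ∈ sB B y ↔ (rmat B).mulVec y j ≠ 0 := by
  classical simp [sB]

lemma coe_sB (B : Matrix (Fin mB) (Fin n) ℤ) (y : Fin n → ℝ) :
    ((sB B y : Finset (Fin mB)) : Set (Fin mB)) = {j | (rmat B).mulVec y j ≠ 0} := by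
  ext j; simp [mem_sB]

lemma ker_zero (A : Matrix (Fin mA) (Fin n) ℤ) (B : Matrix (Fin mB) (Fin n) ℤ)
    (hAB : (rmat (Matrix.fromRows A B)).rank = n) {y : Fin n → ℝ}
    (h1 : (rmat A).mulVec y = 0) (h2 : (rmat B).mulVec y = 0) : y = 0 := by
  have hM : rmat (Matrix.fromRows A B) = Matrix.fromRows (rmat A) (rmat B) := by
    ext i j; cases i <;> rfl
  set M := rmat (Matrix.fromRows A B) with hMdef
  have hrank : Module.finrank ℝ (LinearMap.range M.mulVecLin) = n := hAB
  have hrn := LinearMap.finrank_range_add_finrank_ker M.mulVecLin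
  rw [Module.finrank_pi, Fintype.card_fin, hrank] at hrn
  have hker0 : Module.finrank ℝ (LinearMap.ker M.mulVecLin) = 0 := by omega
  have hbot : LinearMap.ker M.mulVecLin = ⊥ := Submodule.finrank_eq_zero.mp hker0
  have hy : y ∈ LinearMap.ker M.mulVecLin := by
    rw [LinearMap.mem_ker, Matrix.mulVecLin_apply, hM, Matrix.fromRows_mulVec, h1, h2]
    funext j; cases j <;> rfl
  rw [hbot, Submodule.mem_bot] at hy
  exact hy

lemma sign_trans {a b c : ℝ} (h1 : 0 ≤ a * b) (h2 : 0 ≤ b * c) (hb : b ≠ 0) : 0 ≤ a * c := by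
  have hb2 : 0 < b * b := mul_self_pos.mpr hb
  nlinarith [mul_nonneg h1 h2]

lemma reduce {u w : Fin mB → ℝ}
    (hsupp : ∀ j, w j = 0 → u j = 0)
    {j0 : Fin mB} (hj0 : 0 < u j0 * w j0) :
    ∃ t : ℝ, 0 < t ∧ ∃ j', u j' ≠ 0 ∧ w j' ≠ 0 ∧ w j' - t * u j' = 0 ∧
      (∀ j, w j = 0 → w j - t * u j = 0) ∧
      (∀ j, 0 ≤ (w j - t * u j) * w j) := by
  classical
  set F : Finset (Fin mB) := Finset.univ.filter fun j => 0 < u j * w j with hF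
  have hFne : F.Nonempty := ⟨j0, by simp [hF, hj0]⟩
  obtain ⟨j', hj'F, hmin⟩ := Finset.exists_min_image F (fun j => w j / u j) hFne
  have hj'prod : 0 < u j' * w j' := by simpa [hF] using hj'F
  have hu' : u j' ≠ 0 := fun h => by simp [h] at hj'prod
  have hw' : w j' ≠ 0 := fun h => by simp [h] at hj'prod
  have ht : 0 < w j' / u j' := by
    rcases mul_pos_iff.mp hj'prod with ⟨h1, h2⟩ | ⟨h1, h2⟩
    · exact div_pos h2 h1
    · exact div_pos_of_neg_of_neg h2 h1
  refine ⟨w j' / u j', ht, j', hu', hw', by field_simp; ring, ?_, ?_⟩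
  · intro j hj; rw [hj, hsupp j hj]; ring
  · intro j
    by_cases hjF : j ∈ F
    · have hprod : 0 < u j * w j := by simpa [hF] using hjF
      have hle : w j' / u j' ≤ w j / u j := hmin j hjF
      have hu : u j ≠ 0 := fun h => by simp [h] at hprod
      have h2 : (w j' / u j') * (u j * w j) ≤ (w j / u j) * (u j * w j) :=
        mul_le_mul_of_nonneg_right hle hprod.le
      have h3 : (w j / u j) * (u j * w j) = w j * w j := by field_simp
      nlinarith
    · have hprod : u j * w j ≤ 0 := by
        have := hjF
        simp only [hF, Finset.mem_filter, Finset.mem_univ, true_and, not_lt] at this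
        exact this
      nlinarith [mul_nonneg ht.le (neg_nonneg.mpr hprod), mul_self_nonneg (w j)]

end SignCompatAux

namespace SignCompatAux

def RC (A : Matrix (Fin mA) (Fin n) ℤ) (B : Matrix (Fin mB) (Fin n) ℤ) (g : Fin n → ℝ) : Prop :=
  g ≠ 0 ∧ (rmat A).mulVec g = 0 ∧
    ∀ y : Fin n → ℝ, y ≠ 0 → (rmat A).mulVec y = 0 → ¬ (sB B y ⊂ sB B g)

lemma exists_conformal_circuit (A : Matrix (Fin mA) (Fin n) ℤ) (B : Matrix (Fin mB) (Fin n) ℤ)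
    (hAB : (rmat (Matrix.fromRows A B)).rank = n) :
    ∀ c : ℕ, ∀ v : Fin n → ℝ, v ≠ 0 → (rmat A).mulVec v = 0 → (sB B v).card ≤ c →
    ∃ g, RC A B g ∧ (∀ j, (rmat B).mulVec v j = 0 → (rmat B).mulVec g j = 0) ∧
      (∀ j, 0 ≤ (rmat B).mulVec g j * (rmat B).mulVec v j) := by
  intro c
  induction c with
  | zero =>
    intro v hv hker hcard
    exfalso
    have hemp : sB B v = ∅ := Finset.card_eq_zero.mp (Nat.le_zero.mp hcard)
    have hBv : (rmat B).mulVec v = 0 := by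
      funext j
      by_contra h
      have : j ∈ sB B v := mem_sB.mpr h
      rw [hemp] at this
      exact absurd this (Finset.notMem_empty j)
    exact hv (ker_zero A B hAB hker hBv)
  | succ c ih =>
    intro v hv hker hcard
    by_cases hmin : ∀ y : Fin n → ℝ, y ≠ 0 → (rmat A).mulVec y = 0 → ¬ (sB B y ⊂ sB B v)
    · exact ⟨v, ⟨hv, hker, hmin⟩, fun j h => h, fun j => mul_self_nonneg _⟩
    · push_neg at hmin
      obtain ⟨y₀, hy₀ne, hy₀ker, hy₀ss⟩ := hmin
      have hy₀By : (rmat B).mulVec y₀ ≠ 0 := fun h => hy₀ne (ker_zero A B hAB hy₀ker h)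
      obtain ⟨j₀, hj₀⟩ : ∃ j, (rmat B).mulVec y₀ j ≠ 0 := by
        by_contra h; push_neg at h; exact hy₀By (funext h)
      have hj₀v : (rmat B).mulVec v j₀ ≠ 0 :=
        mem_sB.mp (hy₀ss.subset (mem_sB.mpr hj₀))
      obtain ⟨y, hyne, hyker, hyss, j0, hj0⟩ :
          ∃ y, y ≠ 0 ∧ (rmat A).mulVec y = 0 ∧ sB B y ⊂ sB B v ∧
            ∃ j0, 0 < (rmat B).mulVec y j0 * (rmat B).mulVec v j0 := by
        have hprod : (rmat B).mulVec y₀ j₀ * (rmat B).mulVec v j₀ ≠ 0 := mul_ne_zero hj₀ hj₀v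
        rcases hprod.lt_or_gt with hneg | hpos
        · refine ⟨-y₀, neg_ne_zero.mpr hy₀ne, by rw [Matrix.mulVec_neg, hy₀ker, neg_zero], ?_, j₀, ?_⟩
          · have hsame : sB B (-y₀) = sB B y₀ := by
              ext j; simp [mem_sB, Matrix.mulVec_neg]
            rwa [hsame]
          · rw [Matrix.mulVec_neg]
            simp only [Pi.neg_apply]
            nlinarith
        · exact ⟨y₀, hy₀ne, hy₀ker, hy₀ss, j₀, hpos⟩
      have hsuppyv : ∀ j, (rmat B).mulVec v j = 0 → (rmat B).mulVec y j = 0 := by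
        intro j hj
        by_contra h
        exact (mem_sB.mp (hyss.subset (mem_sB.mpr h))) hj
      obtain ⟨t, ht, j', huj', hwj', hzero, hsub, hconf⟩ := reduce hsuppyv hj0
      set w := v - t • y with hw
      have hBw : ∀ j, (rmat B).mulVec w j = (rmat B).mulVec v j - t * (rmat B).mulVec y j := by
        intro j
        rw [hw, Matrix.mulVec_sub, Matrix.mulVec_smul]
        simp
      have hwker : (rmat A).mulVec w = 0 := by
        rw [hw, Matrix.mulVec_sub, Matrix.mulVec_smul, hker, hyker]
        simp
      have hwne : w ≠ 0 := by
        intro h0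
        have hveq : v = t • y := by rwa [hw, sub_eq_zero] at h0
        have hsame : sB B v = sB B y := by
          ext j
          rw [mem_sB, mem_sB, hveq, Matrix.mulVec_smul]
          simp [ht.ne']
        rw [hsame] at hyss
        exact hyss.ne rfl
      have hwsub : ∀ j, (rmat B).mulVec v j = 0 → (rmat B).mulVec w j = 0 := by
        intro j hj; rw [hBw]; exact hsub j hj
      have hcard' : (sB B w).card ≤ c := by
        have hss : sB B w ⊂ sB B v := by
          rw [Finset.ssubset_def]
          constructor
          · intro j hj
            rw [mem_sB] at hj ⊢
            intro h; exact hj (hwsub j h)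
          · intro hcontra
            have hj'w : j' ∉ sB B w := by
              rw [mem_sB, not_not, hBw]; exact hzero
            exact hj'w (hcontra (mem_sB.mpr hwj'))
        have := Finset.card_lt_card hss
        omega
      obtain ⟨g, hgRC, hgsub, hgconf⟩ := ih w hwne hwker hcard'
      refine ⟨g, hgRC, fun j hj => hgsub j (hwsub j hj), ?_⟩
      intro j
      by_cases hgj : (rmat B).mulVec g j = 0
      · rw [hgj]; simp
      · have hwj : (rmat B).mulVec w j ≠ 0 := fun h => hgj (hgsub j h)
        have hconfw : 0 ≤ (rmat B).mulVec w j * (rmat B).mulVec v j := by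
          rw [hBw]; exact hconf j
        exact sign_trans (hgconf j) hconfw hwj

end SignCompatAux

namespace SignCompatAux

def Vspace (A : Matrix (Fin mA) (Fin n) ℤ) (B : Matrix (Fin mB) (Fin n) ℤ)
    (v : Fin n → ℝ) : Submodule ℝ (Fin n → ℝ) where
  carrier := {y | (rmat A).mulVec y = 0 ∧
    ∀ j, (rmat B).mulVec v j = 0 → (rmat B).mulVec y j = 0}
  add_mem' := by
    rintro a b ⟨ha1, ha2⟩ ⟨hb1, hb2⟩
    refine ⟨by rw [Matrix.mulVec_add, ha1, hb1, add_zero], fun j hj => ?_⟩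
    rw [Matrix.mulVec_add]
    simp [ha2 j hj, hb2 j hj]
  zero_mem' := ⟨by rw [Matrix.mulVec_zero], fun j _ => by rw [Matrix.mulVec_zero]; rfl⟩
  smul_mem' := by
    rintro c a ⟨ha1, ha2⟩
    refine ⟨by rw [Matrix.mulVec_smul, ha1, smul_zero], fun j hj => ?_⟩
    rw [Matrix.mulVec_smul]
    simp [ha2 j hj]

lemma mem_Vspace {A : Matrix (Fin mA) (Fin n) ℤ} {B : Matrix (Fin mB) (Fin n) ℤ}
    {v y : Fin n → ℝ} :
    y ∈ Vspace A B v ↔ (rmat A).mulVec y = 0 ∧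
      (∀ j, (rmat B).mulVec v j = 0 → (rmat B).mulVec y j = 0) := Iff.rfl

lemma decomp (A : Matrix (Fin mA) (Fin n) ℤ) (B : Matrix (Fin mB) (Fin n) ℤ)
    (hAB : (rmat (Matrix.fromRows A B)).rank = n) :
    ∀ d : ℕ, ∀ v : Fin n → ℝ, v ≠ 0 → (rmat A).mulVec v = 0 →
    Module.finrank ℝ (Vspace A B v) ≤ d →
    ∃ k, k ≤ d ∧ ∃ (g : Fin k → (Fin n → ℝ)) (α : Fin k → ℝ),
      v = ∑ i, α i • g i ∧
      ∀ i, RC A B (g i) ∧ 0 ≤ α i ∧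
        (∀ j, (rmat B).mulVec v j = 0 → (rmat B).mulVec (g i) j = 0) ∧
        (∀ j, 0 ≤ (rmat B).mulVec (g i) j * (rmat B).mulVec v j) := by
  intro d
  induction d with
  | zero =>
    intro v hv hker hrank
    exfalso
    have hmem : v ∈ Vspace A B v := ⟨hker, fun j h => h⟩
    have hbot : Vspace A B v = ⊥ :=
      Submodule.finrank_eq_zero.mp (Nat.le_zero.mp hrank)
    rw [hbot, Submodule.mem_bot] at hmem
    exact hv hmem
  | succ d ih =>
    intro v hv hker hrank
    obtain ⟨g, hgRC, hgsub, hgconf⟩ :=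
      exists_conformal_circuit A B hAB (sB B v).card v hv hker le_rfl
    have hgB : (rmat B).mulVec g ≠ 0 := fun h => hgRC.1 (ker_zero A B hAB hgRC.2.1 h)
    obtain ⟨j₀, hj₀⟩ : ∃ j, (rmat B).mulVec g j ≠ 0 := by
      by_contra h; push_neg at h; exact hgB (funext h)
    have hj₀v : (rmat B).mulVec v j₀ ≠ 0 := by
      intro h; exact hj₀ (hgsub j₀ h)
    have hj0pos : 0 < (rmat B).mulVec g j₀ * (rmat B).mulVec v j₀ :=
      lt_of_le_of_ne (hgconf j₀) (Ne.symm (mul_ne_zero hj₀ hj₀v))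
    obtain ⟨t, ht, j', huj', hwj', hzero, hsub, hconf⟩ := reduce hgsub hj0pos
    set w := v - t • g with hw
    have hBw : ∀ j, (rmat B).mulVec w j = (rmat B).mulVec v j - t * (rmat B).mulVec g j := by
      intro j
      rw [hw, Matrix.mulVec_sub, Matrix.mulVec_smul]
      simp
    have hveq : v = t • g + w := by rw [hw]; abel
    by_cases hw0 : w = 0
    · refine ⟨1, by omega, fun _ => g, fun _ => t, ?_, ?_⟩
      · rw [Fin.sum_univ_one, hveq, hw0, add_zero]
      · exact fun i => ⟨hgRC, ht.le, hgsub, hgconf⟩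
    · have hwker : (rmat A).mulVec w = 0 := by
        rw [hw, Matrix.mulVec_sub, Matrix.mulVec_smul, hker, hgRC.2.1]
        simp
      have hwsub : ∀ j, (rmat B).mulVec v j = 0 → (rmat B).mulVec w j = 0 := by
        intro j hj; rw [hBw]; exact hsub j hj
      have hwconf : ∀ j, 0 ≤ (rmat B).mulVec w j * (rmat B).mulVec v j := by
        intro j; rw [hBw]; exact hconf j
      have hlt : Vspace A B w < Vspace A B v := by
        rw [lt_iff_le_not_ge]
        constructor
        · intro y hy
          exact ⟨hy.1, fun j hj => hy.2 j (hwsub j hj)⟩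
        · intro hcontra
          have hgmem : g ∈ Vspace A B v := ⟨hgRC.2.1, hgsub⟩
          have hgw : g ∈ Vspace A B w := hcontra hgmem
          have : (rmat B).mulVec g j' = 0 := hgw.2 j' (by rw [hBw]; exact hzero)
          exact huj' this
      have hrank' : Module.finrank ℝ (Vspace A B w) ≤ d := by
        have := Submodule.finrank_lt_finrank_of_lt hlt
        omega
      obtain ⟨k', hk', g', α', hsum', hcond'⟩ := ih w hw0 hwker hrank'
      refine ⟨k' + 1, by omega, Fin.cons g g', Fin.cons t α', ?_, ?_⟩
      · rw [Fin.sum_univ_succ]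
        simp only [Fin.cons_zero, Fin.cons_succ]
        rw [← hsum', ← hveq]
      · intro i
        refine Fin.cases ?_ ?_ i
        · simp only [Fin.cons_zero]
          exact ⟨hgRC, ht.le, hgsub, hgconf⟩
        · intro i'
          simp only [Fin.cons_succ]
          obtain ⟨hRC', hα', hsub', hconf'⟩ := hcond' i'
          refine ⟨hRC', hα', fun j hj => hsub' j (hwsub j hj), ?_⟩
          intro j
          by_cases hgj : (rmat B).mulVec (g' i') j = 0
          · rw [hgj]; simp
          · have hwj : (rmat B).mulVec w j ≠ 0 := fun h => hgj (hsub' j h)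
            exact sign_trans (hconf' j) (hwconf j) hwj

end SignCompatAux

namespace SignCompatAux

lemma RC_smul {A : Matrix (Fin mA) (Fin n) ℤ} {B : Matrix (Fin mB) (Fin n) ℤ}
    {g : Fin n → ℝ} (hg : RC A B g) {s : ℝ} (hs : s ≠ 0) : RC A B (s • g) := by
  obtain ⟨h1, h2, h3⟩ := hg
  refine ⟨smul_ne_zero hs h1, by rw [Matrix.mulVec_smul, h2, smul_zero], ?_⟩
  intro y hy hyker
  have hsame : sB B (s • g) = sB B g := by
    ext j
    rw [mem_sB, mem_sB, Matrix.mulVec_smul]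
    simp [hs]
  rw [hsame]
  exact h3 y hy hyker

lemma exists_int_rep (A : Matrix (Fin mA) (Fin n) ℤ) (B : Matrix (Fin mB) (Fin n) ℤ)
    (hAB : (rmat (Matrix.fromRows A B)).rank = n) {g : Fin n → ℝ} (hg : RC A B g) :
    ∃ (g' : Fin n → ℝ) (c : ℝ), 0 < c ∧ g = c • g' ∧ RC A B g' ∧
      ∃ gz : Fin n → ℤ, (∀ i, g' i = (gz i : ℝ)) ∧
        Finset.univ.gcd (fun i => (gz i).natAbs) = 1 := by
  classical
  obtain ⟨hgne, hgker, hgmin⟩ := hg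
  -- the span lemma: V ⊆ ℝ·g
  have hspan : ∀ y : Fin n → ℝ, (rmat A).mulVec y = 0 →
      (∀ j, (rmat B).mulVec g j = 0 → (rmat B).mulVec y j = 0) → ∃ a : ℝ, y = a • g := by
    intro y hyker hysub
    by_cases hy0 : y = 0
    · exact ⟨0, by simp [hy0]⟩
    have hgB : (rmat B).mulVec g ≠ 0 := fun h => hgne (ker_zero A B hAB hgker h)
    obtain ⟨j0, hj0⟩ : ∃ j, (rmat B).mulVec g j ≠ 0 := by
      by_contra h; push_neg at h; exact hgB (funext h)
    set a := (rmat B).mulVec y j0 / (rmat B).mulVec g j0 with ha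
    set z := y - a • g with hz
    have hzker : (rmat A).mulVec z = 0 := by
      rw [hz, Matrix.mulVec_sub, Matrix.mulVec_smul, hyker, hgker]
      simp
    have hzB : ∀ j, (rmat B).mulVec z j =
        (rmat B).mulVec y j - a * (rmat B).mulVec g j := by
      intro j
      rw [hz, Matrix.mulVec_sub, Matrix.mulVec_smul]
      simp
    have hzj0 : (rmat B).mulVec z j0 = 0 := by
      rw [hzB, ha]; field_simp; ring
    have hzsub : sB B z ⊂ sB B g := by
      rw [Finset.ssubset_def]
      constructor
      · intro j hj
        rw [mem_sB] at hj ⊢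
        intro hjg
        exact hj (by rw [hzB, hysub j hjg, hjg]; ring)
      · intro hcontra
        exact (mem_sB.mp (hcontra (mem_sB.mpr hj0))) hzj0
    have hz0 : z = 0 := by
      by_contra hzne
      exact hgmin z hzne hzker hzsub
    exact ⟨a, by rwa [hz, sub_eq_zero] at hz0⟩
  -- the rational matrix whose real kernel is ℝ·g
  set S := sB B g with hS
  set M' : Matrix (Fin mA ⊕ Fin mB) (Fin n) ℚ :=
    Matrix.of (Sum.elim (fun a i => (A a i : ℚ))
      (fun j i => if j ∈ S then 0 else (B j i : ℚ))) with hM'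
  set Mr : Matrix (Fin mA ⊕ Fin mB) (Fin n) ℝ := M'.map (fun q : ℚ => (q : ℝ)) with hMrdef
  have hMr : ∀ y : Fin n → ℝ, Mr *ᵥ y =
      Sum.elim ((rmat A) *ᵥ y) (fun j => if j ∈ S then 0 else ((rmat B) *ᵥ y) j) := by
    intro y
    funext jj
    cases jj with
    | inl a =>
      simp only [hMrdef, hM', Matrix.mulVec, dotProduct, Sum.elim_inl, Matrix.map_apply,
        Matrix.of_apply, rmat]
      push_cast
      rfl
    | inr j =>
      by_cases hjS : j ∈ S
      · simp [hMrdef, hM', Matrix.mulVec, dotProduct, hjS]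
      · simp only [hMrdef, hM', Matrix.mulVec, dotProduct, Sum.elim_inr, Matrix.map_apply,
          Matrix.of_apply, hjS, if_false, rmat]
        push_cast
        rfl
  have hgMr : Mr *ᵥ g = 0 := by
    rw [hMr]
    funext jj
    cases jj with
    | inl a => simp [hgker]
    | inr j =>
      by_cases hjS : j ∈ S
      · simp [hjS]
      · have hBg : (rmat B).mulVec g j = 0 := by
          by_contra h
          exact hjS (hS ▸ mem_sB.mpr h)
        simp [hjS, hBg]
  -- rational kernel is nonzero
  have hqker : ∃ q : Fin n → ℚ, q ≠ 0 ∧ M' *ᵥ q = 0 := by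
    by_contra hcon
    push_neg at hcon
    have hinj : LinearMap.ker (Matrix.toLin' M') = ⊥ := by
      rw [LinearMap.ker_eq_bot']
      intro q hq
      by_contra hq0
      exact hcon q hq0 (by rwa [Matrix.toLin'_apply] at hq)
    obtain ⟨Ninv, hN⟩ := LinearMap.exists_leftInverse_of_injective _ hinj
    have hmat : LinearMap.toMatrix' Ninv * M' = 1 := by
      have h := congrArg LinearMap.toMatrix' hN
      rwa [LinearMap.toMatrix'_comp, LinearMap.toMatrix'_toLin', LinearMap.toMatrix'_id] at h
    have h1 : (((LinearMap.toMatrix' Ninv) * M').map (fun q : ℚ => (q : ℝ)))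
        = (1 : Matrix (Fin n) (Fin n) ℝ) := by
      rw [hmat]
      exact Matrix.map_one _ (by norm_num) (by norm_num)
    have h2 : ((LinearMap.toMatrix' Ninv).map (fun q : ℚ => (q : ℝ))) * Mr
        = (1 : Matrix (Fin n) (Fin n) ℝ) := by
      rw [hMrdef, ← h1]
      exact (Matrix.map_mul (f := Rat.castHom ℝ)).symm
    have hg0 : g = 0 := by
      calc g = (1 : Matrix (Fin n) (Fin n) ℝ) *ᵥ g := (Matrix.one_mulVec g).symm
        _ = ((LinearMap.toMatrix' Ninv).map (fun q : ℚ => (q : ℝ))) *ᵥ (Mr *ᵥ g) := by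
            rw [Matrix.mulVec_mulVec, h2]
        _ = 0 := by rw [hgMr, Matrix.mulVec_zero]
    exact hgne hg0
  obtain ⟨q, hq0, hq⟩ := hqker
  -- pass the rational kernel vector to ℝ
  have hqr : Mr *ᵥ (fun i => (q i : ℝ)) = 0 := by
    funext jj
    have h : (M' *ᵥ q) jj = 0 := by rw [hq]; rfl
    have h2 : (((M' *ᵥ q) jj : ℚ) : ℝ) = 0 := by rw [h]; simp
    rw [Matrix.mulVec, dotProduct] at h2
    push_cast at h2
    show (Mr *ᵥ fun i => (q i : ℝ)) jj = 0
    rw [hMrdef]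
    simp only [Matrix.mulVec, dotProduct, Matrix.map_apply]
    exact h2
  rw [hMr] at hqr
  have hqker' : (rmat A).mulVec (fun i => (q i : ℝ)) = 0 := by
    funext a
    exact congrFun hqr (Sum.inl a)
  have hqsub : ∀ j, (rmat B).mulVec g j = 0 → (rmat B).mulVec (fun i => (q i : ℝ)) j = 0 := by
    intro j hj
    have h := congrFun hqr (Sum.inr j)
    have hjS : j ∉ S := by
      rw [hS, mem_sB, not_not]
      exact hj
    simpa [hjS] using h
  obtain ⟨a, haq⟩ := hspan _ hqker' hqsub
  have hqr0 : (fun i => (q i : ℝ)) ≠ 0 := by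
    intro h
    apply hq0
    funext i
    have := congrFun h i
    simpa using this
  have ha0 : a ≠ 0 := by
    rintro rfl
    rw [zero_smul] at haq
    exact hqr0 haq
  -- clear denominators
  set D : ℤ := ∏ i, ((q i).den : ℤ) with hD
  have hDpos : 0 < D := Finset.prod_pos (fun i _ => Int.natCast_pos.mpr (q i).pos)
  set gz2 : Fin n → ℤ :=
    fun i => (q i).num * ∏ i' ∈ Finset.univ.erase i, ((q i').den : ℤ) with hgz2
  have hgz2q : ∀ i, (gz2 i : ℚ) = q i * (D : ℚ) := by
    intro i
    have hsplit : (D : ℚ) = ((q i).den : ℚ) * ∏ i' ∈ Finset.univ.erase i, ((q i').den : ℚ) := by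
      rw [hD]
      push_cast
      rw [← Finset.mul_prod_erase _ _ (Finset.mem_univ i)]
    rw [hgz2, hsplit, ← mul_assoc, Rat.mul_den_eq_num]
    push_cast
    ring
  have hgz2r : ∀ i, (gz2 i : ℝ) = (q i : ℝ) * (D : ℝ) := by
    intro i
    exact_mod_cast congrArg (fun x : ℚ => (x : ℝ)) (hgz2q i)
  -- divide by the gcd
  set G : ℕ := Finset.univ.gcd (fun i => (gz2 i).natAbs) with hG
  have hGdvd : ∀ i, (G : ℤ) ∣ gz2 i := fun i =>
    Int.dvd_natAbs.mp (Int.natCast_dvd_natCast.mpr (Finset.gcd_dvd (Finset.mem_univ i)))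
  have hgz2ne : ∃ i, gz2 i ≠ 0 := by
    obtain ⟨i, hi⟩ : ∃ i, q i ≠ 0 := by
      by_contra h; push_neg at h; exact hq0 (funext h)
    refine ⟨i, ?_⟩
    rw [hgz2]
    exact mul_ne_zero (Rat.num_ne_zero.mpr hi)
      (Finset.prod_ne_zero_iff.mpr fun i' _ => Int.natCast_ne_zero.mpr (q i').den_nz)
  have hGne : G ≠ 0 := by
    intro h
    obtain ⟨i, hi⟩ := hgz2ne
    have := Finset.gcd_eq_zero_iff.mp (hG ▸ h) i (Finset.mem_univ i)
    exact hi (Int.natAbs_eq_zero.mp this)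
  set gz : Fin n → ℤ := fun i => gz2 i / (G : ℤ) with hgz
  have hgzmul : ∀ i, (G : ℤ) * gz i = gz2 i := by
    intro i
    rw [hgz, mul_comm]
    exact Int.ediv_mul_cancel (hGdvd i)
  have hgcd1 : Finset.univ.gcd (fun i => (gz i).natAbs) = 1 := by
    have hnat : ∀ i, (gz2 i).natAbs = G * (gz i).natAbs := by
      intro i
      rw [← hgzmul i, Int.natAbs_mul, Int.natAbs_natCast]
    have heq : G = G * Finset.univ.gcd (fun i => (gz i).natAbs) := by
      conv_lhs => rw [hG]
      rw [show (fun i => (gz2 i).natAbs) = fun i => G * (gz i).natAbs from funext hnat]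
      rw [Finset.gcd_mul_left]
      simp
    have := Nat.eq_of_mul_eq_mul_left (Nat.pos_of_ne_zero hGne) (heq.symm.trans (mul_one G).symm)
    exact this
  -- assemble
  set b : ℝ := a * (D : ℝ) / (G : ℝ) with hb
  have hGr : ((G : ℕ) : ℝ) ≠ 0 := Nat.cast_ne_zero.mpr hGne
  have hDr : ((D : ℤ) : ℝ) ≠ 0 := Int.cast_ne_zero.mpr hDpos.ne'
  have hb0 : b ≠ 0 := by
    rw [hb]
    exact div_ne_zero (mul_ne_zero ha0 hDr) hGr
  have hgzr : (fun i => (gz i : ℝ)) = b • g := by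
    funext i
    have h1 : ((G : ℤ) : ℝ) * (gz i : ℝ) = (gz2 i : ℝ) := by exact_mod_cast congrArg (fun z : ℤ => (z : ℝ)) (hgzmul i)
    have h2 : (q i : ℝ) = a * g i := by
      have := congrFun haq i
      simpa using this
    have h3 : (gz2 i : ℝ) = a * g i * (D : ℝ) := by rw [hgz2r i, h2]
    have hGr' : ((G : ℤ) : ℝ) ≠ 0 := by exact_mod_cast hGr
    have : (gz i : ℝ) = (gz2 i : ℝ) / ((G : ℤ) : ℝ) := by
      field_simp [hGr'] at h1 ⊢
      linarith [h1]
    rw [this, h3, hb]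
    simp only [Pi.smul_apply, smul_eq_mul]
    push_cast
    field_simp
  have hgeq : g = b⁻¹ • (fun i => (gz i : ℝ)) := by
    rw [hgzr, smul_smul, inv_mul_cancel₀ hb0, one_smul]
  rcases lt_or_gt_of_ne hb0 with hbneg | hbpos
  · refine ⟨-(fun i => (gz i : ℝ)), -b⁻¹, by simp [hbneg, inv_neg''], ?_, ?_, ?_⟩
    · rw [smul_neg, neg_smul, neg_neg]
      exact hgeq
    · have : -(fun i => (gz i : ℝ)) = (-b) • g := by rw [hgzr]; funext i; simp
      rw [this]
      exact RC_smul ⟨hgne, hgker, hgmin⟩ (neg_ne_zero.mpr hb0)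
    · refine ⟨fun i => -gz i, fun i => by simp, ?_⟩
      simpa [Int.natAbs_neg] using hgcd1
  · refine ⟨(fun i => (gz i : ℝ)), b⁻¹, by positivity, hgeq, ?_, ?_⟩
    · rw [hgzr]
      exact RC_smul ⟨hgne, hgker, hgmin⟩ hb0
    · exact ⟨gz, fun i => rfl, hgcd1⟩

end SignCompatAux

namespace SignCompatAux

lemma rc_isCircuit {A : Matrix (Fin mA) (Fin n) ℤ} {B : Matrix (Fin mB) (Fin n) ℤ}
    {g : Fin n → ℝ} (h : RC A B g) : IsCircuit A B g := by
  obtain ⟨h1, h2, h3⟩ := h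
  refine ⟨h1, h2, fun y hy hyker => ?_⟩
  rw [← coe_sB, ← coe_sB, Finset.coe_ssubset]
  exact h3 y hy hyker

end SignCompatAux


open SignCompatAux

/-- sign-compatible representation property of circuits.
Every nonzero `v ∈ ker A` is a nonnegative combination of at most `n` circuits, each of
which is sign-compatible with `v` with respect to `B` and has `supp(Bgⁱ) ⊆ supp(Bv)`. -/
theorem sign_compatible_representation
    (A : Matrix (Fin mA) (Fin n) ℤ) (B : Matrix (Fin mB) (Fin n) ℤ)
    (hmB : 1 ≤ mB)
    (hA : (rmat A).rank = mA)
    (hAB : (rmat (Matrix.fromRows A B)).rank = n)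
    (v : Fin n → ℝ) (hv : v ≠ 0) (hker : (rmat A).mulVec v = 0) :
    ∃ k : ℕ, k ≤ n ∧ ∃ (g : Fin k → (Fin n → ℝ)) (α : Fin k → ℝ),
      v = ∑ i, α i • g i ∧
      ∀ i : Fin k,
        g i ∈ CAB A B ∧
        0 ≤ α i ∧
        (∀ j, 0 ≤ ((rmat B).mulVec (g i) j) * ((rmat B).mulVec v j)) ∧
        {j | (rmat B).mulVec (g i) j ≠ 0} ⊆ {j | (rmat B).mulVec v j ≠ 0} := by
  have hVn : Module.finrank ℝ (Vspace A B v) ≤ n := by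
    have h := Submodule.finrank_le (Vspace A B v)
    simpa [Module.finrank_pi] using h
  obtain ⟨k, hk, g, α, hsum, hcond⟩ := decomp A B hAB n v hv hker hVn
  choose g' c hcpos hgc hRC' hint using fun i => exists_int_rep A B hAB (hcond i).1
  refine ⟨k, hk, g', fun i => α i * c i, ?_, ?_⟩
  · rw [hsum]
    apply Finset.sum_congr rfl
    intro i _
    rw [hgc i, smul_smul]
  · intro i
    obtain ⟨hRC, hα, hsub, hconf⟩ := hcond i
    have hBg : ∀ j, (rmat B).mulVec (g i) j = c i * (rmat B).mulVec (g' i) j := by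
      intro j
      rw [hgc i, Matrix.mulVec_smul]
      simp
    refine ⟨⟨rc_isCircuit (hRC' i), hint i⟩, mul_nonneg hα (hcpos i).le, ?_, ?_⟩
    · intro j
      have h := hconf j
      rw [hBg j] at h
      nlinarith [hcpos i]
    · intro j hj
      simp only [Set.mem_setOf_eq] at hj ⊢
      intro hvj
      apply hj
      have h := hsub j hvj
      rw [hBg j] at h
      exact (mul_eq_zero.mp h).resolve_left (hcpos i).ne'
end
end

section
/- Let P = {x ∈ ℝⁿ : Ax = b, Bx ≤ d} be bounded (a polytope) and let c ∈ ℤⁿ. For every feasible point x̄ ∈ P there exist k ≤ n and a sequence x̄ = x₀, x₁, …, x_k such that each x_{i+1} = x_i + αᵢ gᵢ is a maximal augmentation along a circuit gᵢ ∈ C(A,B) with cᵀgᵢ ≤ 0, the point x_k is an extreme point (vertex) of P, and cᵀx_k ≤ cᵀx̄. -/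
noncomputable section

variable {n mA mB : ℕ}

/-- The real vector obtained from an integer vector. -/
def rvec {m : Type*} (v : m → ℤ) : m → ℝ := fun i => (v i : ℝ)

/-- The feasible region `P = {x : Ax = b, Bx ≤ d}`. -/
def Pset (A : Matrix (Fin mA) (Fin n) ℤ) (B : Matrix (Fin mB) (Fin n) ℤ)
    (b : Fin mA → ℤ) (d : Fin mB → ℤ) : Set (Fin n → ℝ) :=
  {x | (rmat A).mulVec x = rvec b ∧ ∀ i, (rmat B).mulVec x i ≤ (d i : ℝ)}

/-- `cᵀx` for an integer objective `c` and a real point `x`. -/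
def dotIC (c : Fin n → ℤ) (x : Fin n → ℝ) : ℝ := ∑ i, (c i : ℝ) * x i

/-- The 1-norm of a vector. -/
def norm1 (x : Fin n → ℝ) : ℝ := ∑ i, |x i|

/-- `α g` is a maximal augmentation at `x` (within `P`). -/
def IsMaxAug (P : Set (Fin n → ℝ)) (x g : Fin n → ℝ) (α : ℝ) : Prop :=
  0 < α ∧ x + α • g ∈ P ∧ ∀ ε : ℝ, 0 < ε → x + (α + ε) • g ∉ P

/-- `δ`: the largest absolute value of the determinant of an `n × n` submatrix of the
stacked matrix `(A; B)`. -/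
def deltaMax (A : Matrix (Fin mA) (Fin n) ℤ) (B : Matrix (Fin mB) (Fin n) ℤ) : ℝ :=
  sSup {r : ℝ | ∃ f : Fin n → (Fin mA ⊕ Fin mB), Function.Injective f ∧
        r = |((((Matrix.fromRows A B).submatrix f id).det : ℤ) : ℝ)|}

/-- `x` minimizes `cᵀ·` over `P`. -/
def IsMinimizer (P : Set (Fin n → ℝ)) (c : Fin n → ℤ) (x : Fin n → ℝ) : Prop :=
  x ∈ P ∧ ∀ y ∈ P, dotIC c x ≤ dotIC c y

/-! ### Auxiliary development -/

lemma mulVec_castRH {ι κ : Type*} [Fintype κ] {R S : Type*} [CommSemiring R] [CommSemiring S]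
    (f : R →+* S) (M : Matrix ι κ R) (v : κ → R) :
    (M.map f).mulVec (fun j => f (v j)) = fun i => f (M.mulVec v i) := by
  funext i
  simp [Matrix.mulVec, dotProduct, map_sum, Matrix.map_apply]

/-- transfer nonzero real kernel to nonzero integer kernel -/
lemma int_kernel_transfer {ι : Type*} [Fintype ι] [DecidableEq ι]
    (M : Matrix ι (Fin n) ℤ) (z : Fin n → ℝ) (hz : z ≠ 0)
    (h : (M.map (fun a : ℤ => (a : ℝ))).mulVec z = 0) :
    ∃ cz : Fin n → ℤ, cz ≠ 0 ∧ M.mulVec cz = 0 := by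
  classical
  set Mq : Matrix ι (Fin n) ℚ := M.map (fun a : ℤ => (a : ℚ)) with hMq
  by_cases hker : ∃ q : Fin n → ℚ, q ≠ 0 ∧ Mq.mulVec q = 0
  · obtain ⟨q, hq0, hq⟩ := hker
    obtain ⟨bb, hbb⟩ := IsLocalization.exist_integer_multiples_of_finite
      (nonZeroDivisors ℤ) q
    choose cz hcz using hbb
    have hb0 : ((bb : ℤ) : ℚ) ≠ 0 := by
      exact_mod_cast nonZeroDivisors.coe_ne_zero bb
    refine ⟨cz, ?_, ?_⟩
    · intro hc
      apply hq0
      funext i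
      have := hcz i
      rw [hc] at this
      simp only [Pi.zero_apply, algebraMap_int_eq, eq_intCast, Int.cast_zero] at this
      have h2 : ((bb : ℤ) : ℚ) * q i = 0 := by simpa [zsmul_eq_mul] using this.symm
      rcases mul_eq_zero.mp h2 with h' | h'
      · exact absurd h' hb0
      · simpa using h'
    · have key : (fun j => ((M.mulVec cz j : ℤ) : ℚ)) = fun _ => (0 : ℚ) := by
        have hc : (fun i => ((cz i : ℤ) : ℚ)) = (bb : ℤ) • q := by
          funext i
          have := hcz i
          simp only [algebraMap_int_eq, eq_intCast] at this
          simpa [Pi.smul_apply] using this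
        calc (fun j => ((M.mulVec cz j : ℤ) : ℚ))
            = Mq.mulVec (fun i => ((cz i : ℤ) : ℚ)) :=
              (mulVec_castRH (Int.castRingHom ℚ) M cz).symm
          _ = Mq.mulVec ((bb : ℤ) • q) := by rw [hc]
          _ = (bb : ℤ) • Mq.mulVec q := Matrix.mulVec_smul _ _ _
          _ = fun _ => 0 := by rw [hq]; funext j; simp
      funext j
      have := congrFun key j
      exact_mod_cast this
  · exfalso
    push_neg at hker
    have hinj : LinearMap.ker (Matrix.toLin' Mq) = ⊥ := by
      rw [LinearMap.ker_eq_bot']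
      intro q hq
      by_contra hq0
      exact hker q hq0 (by simpa [Matrix.toLin'_apply] using hq)
    obtain ⟨L, hL⟩ := (Matrix.toLin' Mq).exists_leftInverse_of_injective hinj
    set N : Matrix (Fin n) ι ℚ := LinearMap.toMatrix' L with hN
    have hNM : N * Mq = 1 := by
      have := congrArg LinearMap.toMatrix' hL
      rwa [LinearMap.toMatrix'_comp, LinearMap.toMatrix'_toLin',
        LinearMap.toMatrix'_id] at this
    have hNMr : (N.map (fun a : ℚ => (a : ℝ))) * (M.map (fun a : ℤ => (a : ℝ))) = 1 :=
      calc N.map (fun a : ℚ => (a : ℝ)) * M.map (fun a : ℤ => (a : ℝ))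
          = N.map (Rat.castHom ℝ) * Mq.map (Rat.castHom ℝ) := by
            rw [hMq, Matrix.map_map]; rfl
        _ = (N * Mq).map (Rat.castHom ℝ) := (Matrix.map_mul).symm
        _ = 1 := by rw [hNM]; exact Matrix.map_one _ (by simp) (by simp)
    apply hz
    have : z = ((N.map (fun a : ℚ => (a : ℝ))) * (M.map (fun a : ℤ => (a : ℝ)))).mulVec z := by
      rw [hNMr, Matrix.one_mulVec]
    rw [← Matrix.mulVec_mulVec, h, Matrix.mulVec_zero] at this
    exact this

/-- The tight set at `x`. -/
def Tset (B : Matrix (Fin mB) (Fin n) ℤ) (d : Fin mB → ℤ) (x : Fin n → ℝ) : Set (Fin mB) :=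
  {i | (rmat B).mulVec x i = (d i : ℝ)}

/-- The kernel of `A` intersected with the kernels of the rows of `B` indexed by `T`. -/
def Ksub (A : Matrix (Fin mA) (Fin n) ℤ) (B : Matrix (Fin mB) (Fin n) ℤ)
    (T : Set (Fin mB)) : Submodule ℝ (Fin n → ℝ) where
  carrier := {z | (rmat A).mulVec z = 0 ∧ ∀ i ∈ T, (rmat B).mulVec z i = 0}
  add_mem' := by
    intro y z ⟨hy1, hy2⟩ ⟨hz1, hz2⟩
    refine ⟨by rw [Matrix.mulVec_add, hy1, hz1, add_zero], fun i hi => ?_⟩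
    rw [Matrix.mulVec_add, Pi.add_apply, hy2 i hi, hz2 i hi, add_zero]
  zero_mem' := by
    refine ⟨Matrix.mulVec_zero _, fun i _ => ?_⟩
    rw [Matrix.mulVec_zero]; rfl
  smul_mem' := by
    intro a z ⟨hz1, hz2⟩
    refine ⟨by rw [Matrix.mulVec_smul, hz1, smul_zero], fun i hi => ?_⟩
    rw [Matrix.mulVec_smul, Pi.smul_apply, hz2 i hi, smul_zero]

lemma Ksub_mem {A : Matrix (Fin mA) (Fin n) ℤ} {B : Matrix (Fin mB) (Fin n) ℤ}
    {T : Set (Fin mB)} {z : Fin n → ℝ} :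
    z ∈ Ksub A B T ↔ (rmat A).mulVec z = 0 ∧ ∀ i ∈ T, (rmat B).mulVec z i = 0 :=
  Iff.rfl

lemma Ksub_mono {A : Matrix (Fin mA) (Fin n) ℤ} {B : Matrix (Fin mB) (Fin n) ℤ}
    {T T' : Set (Fin mB)} (h : T ⊆ T') : Ksub A B T' ≤ Ksub A B T := by
  intro z hz
  exact ⟨hz.1, fun i hi => hz.2 i (h hi)⟩

lemma Pset_closed (A : Matrix (Fin mA) (Fin n) ℤ) (B : Matrix (Fin mB) (Fin n) ℤ)
    (b : Fin mA → ℤ) (d : Fin mB → ℤ) : IsClosed (Pset A B b d) := by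
  have hA : Continuous fun x : Fin n → ℝ => (rmat A).mulVec x :=
    continuous_const.matrix_mulVec continuous_id
  have hB : Continuous fun x : Fin n → ℝ => (rmat B).mulVec x :=
    continuous_const.matrix_mulVec continuous_id
  have : Pset A B b d =
      {x | (rmat A).mulVec x = rvec b} ∩ ⋂ i, {x | (rmat B).mulVec x i ≤ (d i : ℝ)} := by
    ext x
    simp [Pset, Set.mem_iInter]
  rw [this]
  refine (isClosed_eq hA continuous_const).inter (isClosed_iInter fun i => ?_)
  exact isClosed_le ((continuous_apply i).comp hB) continuous_const

lemma dotIC_add_smul (c : Fin n → ℤ) (x g : Fin n → ℝ) (α : ℝ) :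
    dotIC c (x + α • g) = dotIC c x + α * dotIC c g := by
  simp only [dotIC, Pi.add_apply, Pi.smul_apply, smul_eq_mul, mul_add, Finset.sum_add_distrib,
    Finset.mul_sum]
  congr 1
  exact Finset.sum_congr rfl (fun i _ => by ring)

lemma dotIC_neg (c : Fin n → ℤ) (g : Fin n → ℝ) : dotIC c (-g) = - dotIC c g := by
  simp [dotIC, Finset.sum_neg_distrib]

lemma CAB_neg {A : Matrix (Fin mA) (Fin n) ℤ} {B : Matrix (Fin mB) (Fin n) ℤ}
    {g : Fin n → ℝ} (hg : g ∈ CAB A B) : -g ∈ CAB A B := by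
  obtain ⟨⟨hg0, hgA, hgmin⟩, gz, hgz, hgcd⟩ := hg
  refine ⟨⟨neg_ne_zero.mpr hg0, by rw [Matrix.mulVec_neg, hgA, neg_zero], ?_⟩,
    -gz, fun i => by simp [hgz i], by simpa using hgcd⟩
  intro y hy hAy hss
  refine hgmin y hy hAy ?_
  convert hss using 2
  ext i
  simp [Matrix.mulVec_neg]

/-- The existence of an integer circuit whose `B`-support is contained in that of
a given kernel element. -/
lemma exists_circuit {A : Matrix (Fin mA) (Fin n) ℤ} {B : Matrix (Fin mB) (Fin n) ℤ}
    (y₀ : Fin n → ℝ) (hy0 : y₀ ≠ 0) (hAy : (rmat A).mulVec y₀ = 0) :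
    ∃ g ∈ CAB A B, ∀ i, (rmat B).mulVec y₀ i = 0 → (rmat B).mulVec g i = 0 := by
  classical
  -- support as a finset
  let Supp : (Fin n → ℝ) → Finset (Fin mB) :=
    fun z => Finset.univ.filter (fun i => (rmat B).mulVec z i ≠ 0)
  let C : Finset (Finset (Fin mB)) :=
    Finset.univ.filter (fun S => S ⊆ Supp y₀ ∧ ∃ z : Fin n → ℝ, z ≠ 0 ∧
      (rmat A).mulVec z = 0 ∧ ∀ i, i ∉ S → (rmat B).mulVec z i = 0)
  have hCne : C.Nonempty := by
    refine ⟨Supp y₀, ?_⟩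
    simp only [C, Finset.mem_filter, Finset.mem_univ, true_and]
    exact ⟨Finset.Subset.refl _, y₀, hy0, hAy, fun i hi => by
      simpa [Supp] using hi⟩
  obtain ⟨S, hSC, hSmin⟩ := C.exists_min_image Finset.card hCne
  rw [Finset.mem_filter] at hSC
  obtain ⟨-, hSsub, zstar, hz0, hzA, hzB⟩ := hSC
  -- integer kernel element supported (w.r.t. B) inside S
  set B' : Matrix (Fin mB) (Fin n) ℤ :=
    Matrix.of (fun i j => if i ∈ S then 0 else B i j) with hB'
  set M2 : Matrix (Fin mA ⊕ Fin mB) (Fin n) ℤ := Matrix.fromRows A B' with hM2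
  have hM2z : (M2.map (fun a : ℤ => (a : ℝ))).mulVec zstar = 0 := by
    funext j
    rcases j with i | i
    · have := congrFun hzA i
      simpa [M2, Matrix.mulVec, dotProduct, rmat, Matrix.fromRows_apply_inl] using this
    · by_cases hiS : i ∈ S
      · simp [M2, B', Matrix.mulVec, dotProduct, Matrix.fromRows_apply_inr, hiS]
      · have := hzB i hiS
        simpa [M2, B', Matrix.mulVec, dotProduct, rmat, Matrix.fromRows_apply_inr, hiS] using this
  obtain ⟨cz, hcz0, hczM⟩ := int_kernel_transfer M2 zstar hz0 hM2z
  have hczA : A.mulVec cz = 0 := by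
    funext i
    have := congrFun hczM (Sum.inl i)
    simpa [M2, Matrix.mulVec, dotProduct, Matrix.fromRows_apply_inl] using this
  have hczB : ∀ i ∉ S, B.mulVec cz i = 0 := by
    intro i hiS
    have := congrFun hczM (Sum.inr i)
    simpa [M2, B', Matrix.mulVec, dotProduct, Matrix.fromRows_apply_inr, hiS] using this
  set N : ℕ := Finset.univ.gcd (fun i => (cz i).natAbs) with hNdef
  have hN0 : N ≠ 0 := by
    intro h
    apply hcz0
    funext i
    have := Finset.gcd_eq_zero_iff.mp h i (Finset.mem_univ i)
    exact Int.natAbs_eq_zero.mp this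
  have hdvd : ∀ i, (N : ℤ) ∣ cz i := fun i =>
    dvd_trans (Int.natCast_dvd_natCast.mpr (Finset.gcd_dvd (Finset.mem_univ i)))
      (Int.natAbs_dvd.mpr dvd_rfl)
  choose gz hgz using hdvd
  have hczeq : cz = (N : ℤ) • gz := by
    funext i
    simp [hgz i]
  have hgz0 : gz ≠ 0 := by
    intro h
    apply hcz0
    rw [hczeq, h, smul_zero]
  have hNZ : (N : ℤ) ≠ 0 := by exact_mod_cast hN0
  have hgzA : A.mulVec gz = 0 := by
    have h1 : (N : ℤ) • A.mulVec gz = 0 := by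
      rw [← Matrix.mulVec_smul, ← hczeq, hczA]
    funext j
    have := congrFun h1 j
    simp only [Pi.smul_apply, smul_eq_mul, Pi.zero_apply] at this ⊢
    rcases mul_eq_zero.mp this with h' | h'
    · exact absurd h' hNZ
    · exact h'
  have hgzB : ∀ i ∉ S, B.mulVec gz i = 0 := by
    intro i hiS
    have h1 : (N : ℤ) • B.mulVec gz = B.mulVec cz := by
      rw [← Matrix.mulVec_smul, ← hczeq]
    have := congrFun h1 i
    rw [hczB i hiS] at this
    simp only [Pi.smul_apply, smul_eq_mul] at this
    rcases mul_eq_zero.mp this with h' | h'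
    · exact absurd h' hNZ
    · exact h'
  have hgcd : Finset.univ.gcd (fun i => (gz i).natAbs) = 1 := by
    have h1 : ∀ i, (cz i).natAbs = N * (gz i).natAbs := fun i => by
      rw [hgz i, Int.natAbs_mul, Int.natAbs_natCast]
    have h2 : N = N * Finset.univ.gcd (fun i => (gz i).natAbs) := by
      conv_lhs => rw [hNdef, Finset.gcd_congr rfl (fun i _ => h1 i), Finset.gcd_mul_left]
      simp
    have h3 : N * Finset.univ.gcd (fun i => (gz i).natAbs) = N * 1 := by
      rw [← h2, mul_one]
    exact Nat.eq_of_mul_eq_mul_left (Nat.pos_of_ne_zero hN0) h3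
  set g : Fin n → ℝ := fun i => ((gz i : ℤ) : ℝ) with hgdef
  have hg0 : g ≠ 0 := by
    intro h
    apply hgz0
    funext i
    simp only [Pi.zero_apply]
    have h2 := congrFun h i
    simp only [hgdef, Pi.zero_apply] at h2
    exact_mod_cast h2
  have hgA : (rmat A).mulVec g = 0 := by
    have h1 : (rmat A).mulVec g = fun i => ((A.mulVec gz i : ℤ) : ℝ) :=
      mulVec_castRH (Int.castRingHom ℝ) A gz
    rw [h1, hgzA]
    funext i
    simp
  have hgB : ∀ i, i ∉ S → (rmat B).mulVec g i = 0 := by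
    intro i hi
    have h1 : (rmat B).mulVec g = fun i => ((B.mulVec gz i : ℤ) : ℝ) :=
      mulVec_castRH (Int.castRingHom ℝ) B gz
    rw [h1]
    show ((B.mulVec gz i : ℤ) : ℝ) = 0
    rw [hgzB i hi]
    simp
  have hsuppg : ∀ i, (rmat B).mulVec g i ≠ 0 → i ∈ S := by
    intro i h
    by_contra hiS
    exact h (hgB i hiS)
  refine ⟨g, ⟨⟨hg0, hgA, ?_⟩, gz, fun i => rfl, hgcd⟩, ?_⟩
  · intro y hy hAy hss
    have hySuppSub : Supp y ⊆ S := by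
      intro i hi
      simp only [Supp, Finset.mem_filter, Finset.mem_univ, true_and] at hi
      exact hsuppg i (hss.subset hi)
    have hyC : Supp y ∈ C := by
      simp only [C, Finset.mem_filter, Finset.mem_univ, true_and]
      exact ⟨hySuppSub.trans hSsub, y, hy, hAy, fun i hi => by simpa [Supp] using hi⟩
    have hcard := hSmin _ hyC
    have hstrict : Supp y ⊂ S := by
      refine (Finset.ssubset_iff_of_subset hySuppSub).mpr ?_
      obtain ⟨i, hig, hiy⟩ := Set.exists_of_ssubset hss
      exact ⟨i, hsuppg i hig, by simpa [Supp] using hiy⟩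
    exact absurd hcard (not_le.mpr (Finset.card_lt_card hstrict))
  · intro i hiy
    by_contra h
    have hiS := hsuppg i h
    have := hSsub hiS
    simp only [Supp, Finset.mem_filter] at this
    exact this.2 hiy

lemma small_step {A : Matrix (Fin mA) (Fin n) ℤ} {B : Matrix (Fin mB) (Fin n) ℤ}
    {b : Fin mA → ℤ} {d : Fin mB → ℤ} (hmB : 1 ≤ mB)
    {x g : Fin n → ℝ} (hx : x ∈ Pset A B b d) (hAg : (rmat A).mulVec g = 0)
    (hT : ∀ i, (rmat B).mulVec x i = (d i : ℝ) → (rmat B).mulVec g i = 0) :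
    ∃ t : ℝ, 0 < t ∧ x + t • g ∈ Pset A B b d := by
  classical
  have hne : (Finset.univ : Finset (Fin mB)).Nonempty := ⟨⟨0, hmB⟩, Finset.mem_univ _⟩
  set Bg := (rmat B).mulVec g with hBg
  set Bx := (rmat B).mulVec x with hBx
  set h : Fin mB → ℝ := fun i => if 0 < Bg i then ((d i : ℝ) - Bx i) / Bg i else 1 with hh
  have hpos : ∀ i, 0 < h i := by
    intro i
    by_cases hc : 0 < Bg i
    · have hne' : Bx i ≠ (d i : ℝ) := fun he => (ne_of_gt hc) (hT i he)
      have hlt : Bx i < (d i : ℝ) := lt_of_le_of_ne (hx.2 i) hne'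
      simp only [hh, if_pos hc]
      exact div_pos (by linarith) hc
    · simp only [hh, if_neg hc]
      norm_num
  set t := min 1 (Finset.univ.inf' hne h) with ht
  have ht0 : 0 < t := lt_min one_pos ((Finset.lt_inf'_iff hne).mpr (fun i _ => hpos i))
  refine ⟨t, ht0, ?_, ?_⟩
  · rw [Matrix.mulVec_add, Matrix.mulVec_smul, hAg, smul_zero, add_zero]
    exact hx.1
  · intro i
    have hexp : (rmat B).mulVec (x + t • g) i = Bx i + t * Bg i := by
      rw [Matrix.mulVec_add, Matrix.mulVec_smul]
      simp [hBx, hBg]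
    rw [hexp]
    by_cases hc : 0 < Bg i
    · have hti : t ≤ h i := le_trans (min_le_right _ _) (Finset.inf'_le _ (Finset.mem_univ i))
      have hkey : t * Bg i ≤ (d i : ℝ) - Bx i := by
        rw [hh] at hti
        simp only [if_pos hc] at hti
        calc t * Bg i ≤ (((d i : ℝ) - Bx i) / Bg i) * Bg i :=
              mul_le_mul_of_nonneg_right hti (le_of_lt hc)
          _ = (d i : ℝ) - Bx i := div_mul_cancel₀ _ (ne_of_gt hc)
      linarith
    · push_neg at hc
      have h1 : t * Bg i ≤ 0 := mul_nonpos_of_nonneg_of_nonpos (le_of_lt ht0) hc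
      have h2 := hx.2 i
      rw [← hBx] at h2
      linarith

lemma max_step {A : Matrix (Fin mA) (Fin n) ℤ} {B : Matrix (Fin mB) (Fin n) ℤ}
    {b : Fin mA → ℤ} {d : Fin mB → ℤ}
    (hbdd : Bornology.IsBounded (Pset A B b d)) (hmB : 1 ≤ mB) {x g : Fin n → ℝ}
    (hx : x ∈ Pset A B b d) (hg : g ≠ 0) (hAg : (rmat A).mulVec g = 0)
    (hT : ∀ i, (rmat B).mulVec x i = (d i : ℝ) → (rmat B).mulVec g i = 0) :
    ∃ α : ℝ, IsMaxAug (Pset A B b d) x g α := by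
  obtain ⟨Cb, hCb⟩ := isBounded_iff_forall_norm_le.mp hbdd
  set E : Set ℝ := {t | 0 ≤ t ∧ x + t • g ∈ Pset A B b d} with hE
  have hgn : 0 < ‖g‖ := norm_pos_iff.mpr hg
  set Mb : ℝ := (Cb + ‖x‖) / ‖g‖ with hM
  have hEb : ∀ t ∈ E, t ≤ Mb := by
    rintro t ⟨ht0, htP⟩
    have h1 : ‖x + t • g‖ ≤ Cb := hCb _ htP
    have h2 : ‖t • g‖ ≤ Cb + ‖x‖ := by
      have he : t • g = (x + t • g) - x := (add_sub_cancel_left x (t • g)).symm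
      rw [he]
      calc ‖(x + t • g) - x‖ ≤ ‖x + t • g‖ + ‖x‖ := norm_sub_le _ _
        _ ≤ Cb + ‖x‖ := by linarith
    have h3 : t * ‖g‖ ≤ Cb + ‖x‖ := by
      rw [norm_smul, Real.norm_eq_abs, abs_of_nonneg ht0] at h2
      exact h2
    exact (le_div_iff₀ hgn).mpr h3
  have hbdd' : BddAbove E := ⟨Mb, fun t ht => hEb t ht⟩
  have hclosed : IsClosed E := by
    have hc : Continuous fun t : ℝ => x + t • g := by continuity
    have heq : E = Set.Ici (0 : ℝ) ∩ ((fun t : ℝ => x + t • g) ⁻¹' Pset A B b d) := by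
      ext t
      simp [hE, Set.mem_Ici]
    rw [heq]
    exact isClosed_Ici.inter ((Pset_closed A B b d).preimage hc)
  have h0E : (0 : ℝ) ∈ E := ⟨le_refl 0, by simpa using hx⟩
  have hcomp : IsCompact E :=
    IsCompact.of_isClosed_subset (isCompact_Icc (a := (0:ℝ)) (b := Mb)) hclosed
      (fun t ht => Set.mem_Icc.mpr ⟨ht.1, hEb t ht⟩)
  have hsup : sSup E ∈ E := hcomp.sSup_mem ⟨0, h0E⟩
  obtain ⟨ts, hts0, htsP⟩ := small_step hmB hx hAg hT
  have htsE : ts ∈ E := ⟨le_of_lt hts0, htsP⟩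
  refine ⟨sSup E, lt_of_lt_of_le hts0 (le_csSup hbdd' htsE), hsup.2, ?_⟩
  intro ε hε hmem
  have hin : sSup E + ε ∈ E := ⟨by have := hsup.1; linarith, hmem⟩
  have := le_csSup hbdd' hin
  linarith

lemma mem_extreme_of_Ksub_bot {A : Matrix (Fin mA) (Fin n) ℤ} {B : Matrix (Fin mB) (Fin n) ℤ}
    {b : Fin mA → ℤ} {d : Fin mB → ℤ} {x : Fin n → ℝ} (hx : x ∈ Pset A B b d)
    (hbot : Ksub A B (Tset B d x) = ⊥) : x ∈ Set.extremePoints ℝ (Pset A B b d) := by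
  refine ⟨hx, ?_⟩
  intro x₁ hx₁ x₂ hx₂ hseg
  obtain ⟨a, b', ha, hb', hab, hsum⟩ := hseg
  have hz : x₁ - x₂ ∈ Ksub A B (Tset B d x) := by
    refine ⟨?_, ?_⟩
    · rw [Matrix.mulVec_sub, hx₁.1, hx₂.1, sub_self]
    · intro i hi
      have hxi : (rmat B).mulVec x i = (d i : ℝ) := hi
      have hcomb : (rmat B).mulVec x = a • (rmat B).mulVec x₁ + b' • (rmat B).mulVec x₂ := by
        rw [← hsum, Matrix.mulVec_add, Matrix.mulVec_smul, Matrix.mulVec_smul]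
      have hexp : a * (rmat B).mulVec x₁ i + b' * (rmat B).mulVec x₂ i = (d i : ℝ) := by
        have h2 := congrFun hcomb i
        simp only [Pi.add_apply, Pi.smul_apply, smul_eq_mul] at h2
        rw [hxi] at h2
        exact h2.symm
      have h1 : (rmat B).mulVec x₁ i ≤ (d i : ℝ) := hx₁.2 i
      have h2 : (rmat B).mulVec x₂ i ≤ (d i : ℝ) := hx₂.2 i
      have he3 : a * (d i : ℝ) + b' * (d i : ℝ) = (d i : ℝ) := by
        rw [← add_mul, hab, one_mul]
      have he1 : (rmat B).mulVec x₁ i = (d i : ℝ) := by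
        by_contra hne
        have hlt : (rmat B).mulVec x₁ i < (d i : ℝ) := lt_of_le_of_ne h1 hne
        have e1 : a * (rmat B).mulVec x₁ i < a * (d i : ℝ) := mul_lt_mul_of_pos_left hlt ha
        have e2 : b' * (rmat B).mulVec x₂ i ≤ b' * (d i : ℝ) :=
          mul_le_mul_of_nonneg_left h2 hb'.le
        linarith
      have he2 : (rmat B).mulVec x₂ i = (d i : ℝ) := by
        by_contra hne
        have hlt : (rmat B).mulVec x₂ i < (d i : ℝ) := lt_of_le_of_ne h2 hne
        have e1 : b' * (rmat B).mulVec x₂ i < b' * (d i : ℝ) := mul_lt_mul_of_pos_left hlt hb'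
        have e2 : a * (rmat B).mulVec x₁ i ≤ a * (d i : ℝ) :=
          mul_le_mul_of_nonneg_left h1 ha.le
        linarith
      rw [Matrix.mulVec_sub, Pi.sub_apply, he1, he2, sub_self]
  rw [hbot] at hz
  have hz0 : x₁ - x₂ = 0 := by simpa using hz
  have hx12 : x₁ = x₂ := sub_eq_zero.mp hz0
  have hx1x : x₁ = x := by
    calc x₁ = (a + b') • x₁ := by rw [hab, one_smul]
      _ = a • x₁ + b' • x₂ := by rw [add_smul, hx12]
      _ = x := hsum
  exact hx1x

lemma step_lemma {A : Matrix (Fin mA) (Fin n) ℤ} {B : Matrix (Fin mB) (Fin n) ℤ}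
    {b : Fin mA → ℤ} {d : Fin mB → ℤ} (c : Fin n → ℤ) (hmB : 1 ≤ mB)
    (hbdd : Bornology.IsBounded (Pset A B b d)) {x : Fin n → ℝ} (hx : x ∈ Pset A B b d)
    (hne : Ksub A B (Tset B d x) ≠ ⊥) :
    ∃ (g : Fin n → ℝ) (α : ℝ), g ∈ CAB A B ∧ dotIC c g ≤ 0 ∧
      IsMaxAug (Pset A B b d) x g α ∧
      Ksub A B (Tset B d (x + α • g)) < Ksub A B (Tset B d x) := by
  obtain ⟨y₀, hy₀mem, hy₀0⟩ := (Submodule.ne_bot_iff _).mp hne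
  obtain ⟨hy₀A, hy₀T⟩ := hy₀mem
  obtain ⟨g₀, hg₀CAB, hg₀supp⟩ := exists_circuit y₀ hy₀0 hy₀A
  obtain ⟨g, hgCAB, hgsupp, hgc⟩ : ∃ g, g ∈ CAB A B ∧
      (∀ i, (rmat B).mulVec y₀ i = 0 → (rmat B).mulVec g i = 0) ∧ dotIC c g ≤ 0 := by
    by_cases hc : dotIC c g₀ ≤ 0
    · exact ⟨g₀, hg₀CAB, hg₀supp, hc⟩
    · refine ⟨-g₀, CAB_neg hg₀CAB, ?_, ?_⟩
      · intro i hi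
        rw [Matrix.mulVec_neg, Pi.neg_apply, hg₀supp i hi, neg_zero]
      · rw [dotIC_neg]
        linarith
  have hg0 : g ≠ 0 := hgCAB.1.1
  have hgA : (rmat A).mulVec g = 0 := hgCAB.1.2.1
  have hgT : ∀ i, (rmat B).mulVec x i = (d i : ℝ) → (rmat B).mulVec g i = 0 :=
    fun i hi => hgsupp i (hy₀T i hi)
  obtain ⟨α, hmax⟩ := max_step hbdd hmB hx hg0 hgA hgT
  refine ⟨g, α, hgCAB, hgc, hmax, ?_⟩
  set x' := x + α • g with hx'
  have hx'P : x' ∈ Pset A B b d := hmax.2.1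
  have hTmono : Tset B d x ⊆ Tset B d x' := by
    intro i hi
    have hBi : (rmat B).mulVec x' i = (rmat B).mulVec x i + α * (rmat B).mulVec g i := by
      rw [hx', Matrix.mulVec_add, Matrix.mulVec_smul]
      simp
    show (rmat B).mulVec x' i = (d i : ℝ)
    rw [hBi, hgT i hi, mul_zero, add_zero]
    exact hi
  have hKle : Ksub A B (Tset B d x') ≤ Ksub A B (Tset B d x) := Ksub_mono hTmono
  have hgin : g ∈ Ksub A B (Tset B d x) := ⟨hgA, fun i hi => hgT i hi⟩
  have hgnot : g ∉ Ksub A B (Tset B d x') := by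
    intro hgin'
    obtain ⟨t, ht0, htP⟩ := small_step hmB hx'P hgA (fun i hi => hgin'.2 i hi)
    have heq : x + (α + t) • g = x' + t • g := by
      rw [hx', add_smul, ← add_assoc]
    exact hmax.2.2 t ht0 (by rw [heq]; exact htP)
  exact lt_of_le_of_ne hKle (fun heq => hgnot (by rw [heq]; exact hgin))

lemma snap_aux {A : Matrix (Fin mA) (Fin n) ℤ} {B : Matrix (Fin mB) (Fin n) ℤ}
    {b : Fin mA → ℤ} {d : Fin mB → ℤ} (c : Fin n → ℤ) (hmB : 1 ≤ mB)
    (hbdd : Bornology.IsBounded (Pset A B b d)) :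
    ∀ (m : ℕ) (x : Fin n → ℝ), x ∈ Pset A B b d →
      Module.finrank ℝ (Ksub A B (Tset B d x)) ≤ m →
      ∃ k : ℕ, k ≤ m ∧ ∃ xs : ℕ → (Fin n → ℝ),
        xs 0 = x ∧
        (∀ i < k, ∃ (g : Fin n → ℝ) (α : ℝ), g ∈ CAB A B ∧ dotIC c g ≤ 0 ∧
          IsMaxAug (Pset A B b d) (xs i) g α ∧ xs (i + 1) = xs i + α • g) ∧
        xs k ∈ Set.extremePoints ℝ (Pset A B b d) ∧
        dotIC c (xs k) ≤ dotIC c x := by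
  intro m
  induction m with
  | zero =>
    intro x hx hr
    have hbot : Ksub A B (Tset B d x) = ⊥ := Submodule.finrank_eq_zero.mp (Nat.le_zero.mp hr)
    exact ⟨0, le_refl 0, fun _ => x, rfl, fun i hi => absurd hi (Nat.not_lt_zero i),
      mem_extreme_of_Ksub_bot hx hbot, le_refl _⟩
  | succ m ih =>
    intro x hx hr
    by_cases hbot : Ksub A B (Tset B d x) = ⊥
    · exact ⟨0, Nat.zero_le _, fun _ => x, rfl, fun i hi => absurd hi (Nat.not_lt_zero i),
        mem_extreme_of_Ksub_bot hx hbot, le_refl _⟩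
    · obtain ⟨g, α, hgCAB, hgc, hmax, hlt⟩ := step_lemma c hmB hbdd hx hbot
      have hx'P : x + α • g ∈ Pset A B b d := hmax.2.1
      have hr' : Module.finrank ℝ (Ksub A B (Tset B d (x + α • g))) ≤ m := by
        have h1 := Submodule.finrank_lt_finrank_of_lt hlt
        omega
      obtain ⟨k', hk', xs, hxs0, hsteps, hext, hobj⟩ := ih (x + α • g) hx'P hr'
      refine ⟨k' + 1, Nat.succ_le_succ hk',
        fun i => if i = 0 then x else xs (i - 1), by simp, ?_, ?_, ?_⟩
      · intro i hi
        match i with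
        | 0 =>
          refine ⟨g, α, hgCAB, hgc, ?_, ?_⟩
          · simpa using hmax
          · simpa using hxs0
        | Nat.succ j =>
          obtain ⟨g', α', h1, h2, h3, h4⟩ := hsteps j (by omega)
          refine ⟨g', α', h1, h2, ?_, ?_⟩
          · simpa [Nat.succ_sub_one] using h3
          · simpa [Nat.succ_sub_one] using h4
      · simpa using hext
      · have hd : dotIC c (x + α • g) ≤ dotIC c x := by
          rw [dotIC_add_smul]
          have : α * dotIC c g ≤ 0 :=
            mul_nonpos_of_nonneg_of_nonpos (le_of_lt hmax.1) hgc
          linarith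
        have : dotIC c (xs k') ≤ dotIC c x := le_trans hobj hd
        simpa using this

/-- snapping to a vertex.  From any feasible point of a bounded polyhedron
one can reach a vertex of no larger objective value by at most `n` maximal augmentations
along circuits `g` with `cᵀg ≤ 0`. -/
theorem snap_to_vertex
    (A : Matrix (Fin mA) (Fin n) ℤ) (B : Matrix (Fin mB) (Fin n) ℤ)
    (b : Fin mA → ℤ) (d : Fin mB → ℤ) (c : Fin n → ℤ)
    (hmB : 1 ≤ mB)
    (hA : (rmat A).rank = mA)
    (hAB : (rmat (Matrix.fromRows A B)).rank = n)
    (hbdd : Bornology.IsBounded (Pset A B b d))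
    (xbar : Fin n → ℝ) (hxbar : xbar ∈ Pset A B b d) :
    ∃ k : ℕ, k ≤ n ∧ ∃ x : ℕ → (Fin n → ℝ),
      x 0 = xbar ∧
      (∀ i < k, ∃ (g : Fin n → ℝ) (α : ℝ), g ∈ CAB A B ∧ dotIC c g ≤ 0 ∧
        IsMaxAug (Pset A B b d) (x i) g α ∧ x (i + 1) = x i + α • g) ∧
      x k ∈ Set.extremePoints ℝ (Pset A B b d) ∧
      dotIC c (x k) ≤ dotIC c xbar := by
  have h1 : Module.finrank ℝ (Ksub A B (Tset B d xbar)) ≤ n := by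
    have h2 := Submodule.finrank_le (Ksub A B (Tset B d xbar))
    simpa [Module.finrank_fin_fun] using h2
  obtain ⟨k, hk, xs, h0, hsteps, hext, hobj⟩ := snap_aux c hmB hbdd n xbar hxbar h1
  exact ⟨k, hk, xs, h0, hsteps, hext, hobj⟩
end
end

section
/- Let P = {x ∈ ℝⁿ : Ax = b, Bx ≤ d}, let c ∈ ℤⁿ, and suppose the minimum of cᵀx over P is attained at x_min. Then for every feasible x ∈ P with cᵀx > cᵀx_min there exist a circuit g ∈ C(A,B) and α > 0 such that x + αg ∈ P and −cᵀ(αg) ≥ (cᵀx − cᵀx_min)/n. -/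
noncomputable section

variable {n mA mB : ℕ}

open Matrix

namespace CircuitAux

variable {n mA mB : ℕ}

/-- `u` is conformal to `v`. -/
def Conf {mB : ℕ} (u v : Fin mB → ℝ) : Prop := ∀ i, 0 ≤ u i * v i ∧ (v i = 0 → u i = 0)

lemma conf_trans {u v w : Fin mB → ℝ} (h1 : Conf u v) (h2 : Conf v w) : Conf u w := by
  intro i
  obtain ⟨h1a, h1b⟩ := h1 i
  obtain ⟨h2a, h2b⟩ := h2 i
  by_cases hv : v i = 0
  · simp [h1b hv]
  refine ⟨?_, fun hw => h1b (h2b hw)⟩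
  nlinarith [mul_nonneg h1a h2a, mul_self_pos.mpr hv]

lemma inj_of_rank (A : Matrix (Fin mA) (Fin n) ℤ) (B : Matrix (Fin mB) (Fin n) ℤ)
    (hAB : (rmat (Matrix.fromRows A B)).rank = n) :
    ∀ z : Fin n → ℝ, (rmat A).mulVec z = 0 → (rmat B).mulVec z = 0 → z = 0 := by
  intro z hAz hBz
  have hmap : rmat (Matrix.fromRows A B) = Matrix.fromRows (rmat A) (rmat B) := by
    ext i j; cases i <;> rfl
  have hz : (rmat (Matrix.fromRows A B)).mulVec z = 0 := by
    rw [hmap, Matrix.fromRows_mulVec, hAz, hBz]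
    ext i; cases i <;> rfl
  set C := rmat (Matrix.fromRows A B) with hC
  have h1 : Module.finrank ℝ (LinearMap.range C.mulVecLin) = n := hAB
  have h2 := LinearMap.finrank_range_add_finrank_ker C.mulVecLin
  have h3 : Module.finrank ℝ (Fin n → ℝ) = n := Module.finrank_fin_fun ℝ
  rw [h1, h3] at h2
  have hker : LinearMap.ker C.mulVecLin = ⊥ := Submodule.finrank_eq_zero.mp (by omega)
  have hmem : z ∈ LinearMap.ker C.mulVecLin := by
    simp only [LinearMap.mem_ker, Matrix.mulVecLin_apply]; exact hz
  rw [hker, Submodule.mem_bot] at hmem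
  exact hmem

end CircuitAux
namespace CircuitAux
variable {n mA mB : ℕ}

lemma circuit_smul {A : Matrix (Fin mA) (Fin n) ℤ} {B : Matrix (Fin mB) (Fin n) ℤ}
    {g : Fin n → ℝ} (h : IsCircuit A B g) {t : ℝ} (ht : t ≠ 0) : IsCircuit A B (t • g) := by
  obtain ⟨h0, hA, hmin⟩ := h
  refine ⟨smul_ne_zero ht h0, by rw [Matrix.mulVec_smul, hA, smul_zero], ?_⟩
  intro y hy hAy
  have hset : {i | (rmat B).mulVec (t • g) i ≠ 0} = {i | (rmat B).mulVec g i ≠ 0} := by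
    ext i
    simp [Matrix.mulVec_smul, Pi.smul_apply, smul_eq_mul, ht]
  rw [hset]
  exact hmin y hy hAy

lemma parallel (A : Matrix (Fin mA) (Fin n) ℤ) (B : Matrix (Fin mB) (Fin n) ℤ)
    (hinj : ∀ z : Fin n → ℝ, (rmat A).mulVec z = 0 → (rmat B).mulVec z = 0 → z = 0)
    {g z : Fin n → ℝ} (hg : IsCircuit A B g) (hz0 : z ≠ 0) (hAz : (rmat A).mulVec z = 0)
    (hsupp : ∀ i, (rmat B).mulVec g i = 0 → (rmat B).mulVec z i = 0) :
    ∃ t : ℝ, t ≠ 0 ∧ z = t • g := by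
  obtain ⟨hg0, hAg, hmin⟩ := hg
  have hBz : (rmat B).mulVec z ≠ 0 := fun h => hz0 (hinj z hAz h)
  obtain ⟨i0, hi0⟩ : ∃ i0, (rmat B).mulVec z i0 ≠ 0 := by
    by_contra h; push_neg at h; exact hBz (funext h)
  have hgi0 : (rmat B).mulVec g i0 ≠ 0 := fun h => hi0 (hsupp i0 h)
  set w := (rmat B).mulVec g i0 • z - (rmat B).mulVec z i0 • g with hw
  have hAw : (rmat A).mulVec w = 0 := by
    rw [hw, Matrix.mulVec_sub, Matrix.mulVec_smul, Matrix.mulVec_smul, hAz, hAg]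
    simp
  have hBw : ∀ i, (rmat B).mulVec w i =
      (rmat B).mulVec g i0 * (rmat B).mulVec z i - (rmat B).mulVec z i0 * (rmat B).mulVec g i := by
    intro i
    rw [hw, Matrix.mulVec_sub, Matrix.mulVec_smul, Matrix.mulVec_smul]
    simp [smul_eq_mul]
  have hBwi0 : (rmat B).mulVec w i0 = 0 := by rw [hBw]; ring
  have hwz : w = 0 := by
    by_contra hw0
    refine hmin w hw0 hAw ?_
    constructor
    · intro i hi
      simp only [Set.mem_setOf_eq] at hi ⊢
      intro hgi
      exact hi (by rw [hBw i, hsupp i hgi, hgi]; ring)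
    · intro hsub
      exact (hsub (show i0 ∈ {i | (rmat B).mulVec g i ≠ 0} from hgi0)) hBwi0
  refine ⟨(rmat B).mulVec z i0 / (rmat B).mulVec g i0, div_ne_zero hi0 hgi0, ?_⟩
  funext j
  have := congrFun hwz j
  simp only [hw, Pi.sub_apply, Pi.smul_apply, smul_eq_mul, Pi.zero_apply] at this
  simp only [Pi.smul_apply, smul_eq_mul]
  field_simp
  linarith [this]

end CircuitAux
namespace CircuitAux
variable {n mA mB : ℕ}

lemma exists_conformal_circuit (A : Matrix (Fin mA) (Fin n) ℤ) (B : Matrix (Fin mB) (Fin n) ℤ)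
    (hinj : ∀ z : Fin n → ℝ, (rmat A).mulVec z = 0 → (rmat B).mulVec z = 0 → z = 0) :
    ∀ (N : ℕ) (y : Fin n → ℝ), y ≠ 0 → (rmat A).mulVec y = 0 →
      ({i | (rmat B).mulVec y i ≠ 0}).ncard ≤ N →
      ∃ g, IsCircuit A B g ∧ Conf ((rmat B).mulVec g) ((rmat B).mulVec y) := by
  intro N
  induction N with
  | zero =>
    intro y hy0 hAy hcard
    exfalso
    have hemp : {i | (rmat B).mulVec y i ≠ 0} = ∅ := by
      rw [← Set.ncard_eq_zero (Set.toFinite _)]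
      omega
    refine hy0 (hinj y hAy ?_)
    funext i
    by_contra hne
    exact absurd (show i ∈ {i | (rmat B).mulVec y i ≠ 0} from hne) (by rw [hemp]; simp)
  | succ N ih =>
    intro y hy0 hAy hcard
    classical
    -- the continuation, given a circuit with support inside supp(By) and an agreeing sign
    have key : ∀ g0 : Fin n → ℝ, IsCircuit A B g0 →
        (∀ i, (rmat B).mulVec y i = 0 → (rmat B).mulVec g0 i = 0) →
        (∃ i0, 0 < (rmat B).mulVec g0 i0 * (rmat B).mulVec y i0) →
        ∃ g, IsCircuit A B g ∧ Conf ((rmat B).mulVec g) ((rmat B).mulVec y) := by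
      rintro g0 hcirc hsupp ⟨i0, hpos⟩
      set P : Finset (Fin mB) :=
        Finset.univ.filter (fun i => 0 < (rmat B).mulVec g0 i * (rmat B).mulVec y i) with hP
      have hPne : P.Nonempty := ⟨i0, by simp [hP, hpos]⟩
      set r : Fin mB → ℝ := fun i => (rmat B).mulVec y i / (rmat B).mulVec g0 i with hr
      set t := P.inf' hPne r with ht
      have hmemP : ∀ i ∈ P, 0 < (rmat B).mulVec g0 i * (rmat B).mulVec y i := by
        intro i hi
        simpa [hP] using hi
      have hrpos : ∀ i ∈ P, 0 < r i := by
        intro i hi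
        have := hmemP i hi
        rcases mul_pos_iff.mp this with ⟨h1, h2⟩ | ⟨h1, h2⟩
        · exact div_pos h2 h1
        · exact div_pos_of_neg_of_neg h2 h1
      obtain ⟨imin, himinP, himineq⟩ := Finset.exists_mem_eq_inf' hPne r
      have htpos : 0 < t := by rw [ht, himineq]; exact hrpos imin himinP
      set y' := y - t • g0 with hy'
      have hAy' : (rmat A).mulVec y' = 0 := by
        rw [hy', Matrix.mulVec_sub, Matrix.mulVec_smul, hAy, hcirc.2.1]
        simp
      have hBy' : ∀ i, (rmat B).mulVec y' i =
          (rmat B).mulVec y i - t * (rmat B).mulVec g0 i := by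
        intro i
        rw [hy', Matrix.mulVec_sub, Matrix.mulVec_smul]
        simp [smul_eq_mul]
      have hvan : ∀ i, (rmat B).mulVec y i = 0 → (rmat B).mulVec y' i = 0 := by
        intro i h
        rw [hBy' i, h, hsupp i h]
        ring
      have himin0 : (rmat B).mulVec g0 imin ≠ 0 := by
        have := hmemP imin himinP
        intro h
        rw [h] at this
        simp at this
      have hy'imin : (rmat B).mulVec y' imin = 0 := by
        rw [hBy', ht, himineq, hr]
        field_simp
        ring
      have hconf' : Conf ((rmat B).mulVec y') ((rmat B).mulVec y) := by
        intro i
        by_cases hi : i ∈ P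
        · have hle : t ≤ r i := by rw [ht]; exact Finset.inf'_le r hi
          have hprod := hmemP i hi
          have hgne : (rmat B).mulVec g0 i ≠ 0 := by
            intro h; rw [h] at hprod; simp at hprod
          have hform : (rmat B).mulVec y' i = (rmat B).mulVec g0 i * (r i - t) := by
            rw [hBy', hr]
            field_simp
          constructor
          · rw [hform]
            nlinarith [sub_nonneg.mpr hle]
          · intro h0
            exfalso
            have : (rmat B).mulVec y i ≠ 0 := by
              intro h; rw [h] at hprod; simp at hprod
            exact this h0
        · have hle : (rmat B).mulVec g0 i * (rmat B).mulVec y i ≤ 0 := by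
            have : ¬ 0 < (rmat B).mulVec g0 i * (rmat B).mulVec y i := by
              intro h; exact hi (by simp [hP, h])
            linarith [not_lt.mp this]
          constructor
          · rw [hBy']
            nlinarith [mul_self_nonneg ((rmat B).mulVec y i)]
          · intro h0
            rw [hBy', h0, hsupp i h0]
            ring
      by_cases hy'0 : y' = 0
      · have hyt : y = t • g0 := by
          have : y - t • g0 = 0 := by rw [← hy']; exact hy'0
          rwa [sub_eq_zero] at this
        have hBy : ∀ i, (rmat B).mulVec y i = t * (rmat B).mulVec g0 i := by
          intro i
          rw [hyt, Matrix.mulVec_smul]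
          simp [smul_eq_mul]
        refine ⟨g0, hcirc, fun i => ⟨?_, ?_⟩⟩
        · rw [hBy]
          nlinarith [mul_self_nonneg ((rmat B).mulVec g0 i)]
        · intro h0
          rw [hBy i] at h0
          rcases mul_eq_zero.mp h0 with h | h
          · exact absurd h (ne_of_gt htpos)
          · exact h
      · have hssub : {i | (rmat B).mulVec y' i ≠ 0} ⊂ {i | (rmat B).mulVec y i ≠ 0} := by
          constructor
          · intro i hi
            simp only [Set.mem_setOf_eq] at hi ⊢
            intro h
            exact hi (hvan i h)
          · intro hsub
            have himy : (rmat B).mulVec y imin ≠ 0 := by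
              have := hmemP imin himinP
              intro h; rw [h] at this; simp at this
            exact (hsub himy) hy'imin
        have hcard' : ({i | (rmat B).mulVec y' i ≠ 0}).ncard ≤ N := by
          have h1 := Set.ncard_lt_ncard hssub (Set.toFinite _)
          omega
        obtain ⟨g, hgcirc, hgconf⟩ := ih y' hy'0 hAy' hcard'
        exact ⟨g, hgcirc, conf_trans hgconf hconf'⟩
    -- find a support-minimal nonzero kernel vector with support inside supp(By)
    set S : Set ℕ := {k | ∃ z : Fin n → ℝ, z ≠ 0 ∧ (rmat A).mulVec z = 0 ∧
      (∀ i, (rmat B).mulVec y i = 0 → (rmat B).mulVec z i = 0) ∧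
      ({i | (rmat B).mulVec z i ≠ 0}).ncard = k} with hS
    have hSne : S.Nonempty := ⟨_, y, hy0, hAy, fun _ h => h, rfl⟩
    obtain ⟨z0, hz00, hAz0, hz0y, hz0card⟩ := Nat.sInf_mem hSne
    have hcirc0 : IsCircuit A B z0 := by
      refine ⟨hz00, hAz0, ?_⟩
      intro y' hy'0 hAy' hss
      have h1 : ({i | (rmat B).mulVec y' i ≠ 0}).ncard ∈ S := by
        refine ⟨y', hy'0, hAy', ?_, rfl⟩
        intro i hi
        by_contra hne
        exact (hss.1 (show i ∈ {i | (rmat B).mulVec y' i ≠ 0} from hne)) (hz0y i hi)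
      have h2 := Set.ncard_lt_ncard hss (Set.toFinite _)
      rw [hz0card] at h2
      exact absurd (Nat.sInf_le h1) (not_le.mpr h2)
    -- choose agreeing sign
    have hBz0 : (rmat B).mulVec z0 ≠ 0 := fun h => hz00 (hinj z0 hAz0 h)
    obtain ⟨i0, hi0⟩ : ∃ i0, (rmat B).mulVec z0 i0 ≠ 0 := by
      by_contra h; push_neg at h; exact hBz0 (funext h)
    have hyi0 : (rmat B).mulVec y i0 ≠ 0 := fun h => hi0 (hz0y i0 h)
    by_cases hsign : 0 < (rmat B).mulVec z0 i0 * (rmat B).mulVec y i0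
    · exact key z0 hcirc0 hz0y ⟨i0, hsign⟩
    · have hneg : (rmat B).mulVec z0 i0 * (rmat B).mulVec y i0 < 0 :=
        lt_of_le_of_ne (not_lt.mp hsign) (mul_ne_zero hi0 hyi0)
      have hcircneg : IsCircuit A B (-z0) := by
        have := circuit_smul hcirc0 (t := (-1 : ℝ)) (by norm_num)
        simpa using this
      refine key (-z0) hcircneg ?_ ⟨i0, ?_⟩
      · intro i hi
        rw [Matrix.mulVec_neg]
        simp [hz0y i hi]
      · rw [Matrix.mulVec_neg]
        simp only [Pi.neg_apply]
        nlinarith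

end CircuitAux
namespace CircuitAux
variable {n mA mB : ℕ}

/-- The ambient space used to bound the number of circuits in a decomposition. -/
def Wsp (A : Matrix (Fin mA) (Fin n) ℤ) (B : Matrix (Fin mB) (Fin n) ℤ)
    (y : Fin n → ℝ) : Submodule ℝ (Fin mB → ℝ) :=
  (LinearMap.ker (rmat A).mulVecLin).map (rmat B).mulVecLin ⊓
    Submodule.pi {i | (rmat B).mulVec y i = 0} (fun _ => ⊥)

lemma Wsp_finrank_le (A : Matrix (Fin mA) (Fin n) ℤ) (B : Matrix (Fin mB) (Fin n) ℤ)
    (y : Fin n → ℝ) : Module.finrank ℝ (Wsp A B y) ≤ n := by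
  calc Module.finrank ℝ (Wsp A B y)
      ≤ Module.finrank ℝ ((LinearMap.ker (rmat A).mulVecLin).map (rmat B).mulVecLin) :=
        Submodule.finrank_mono inf_le_left
    _ ≤ Module.finrank ℝ (LinearMap.ker (rmat A).mulVecLin) := Submodule.finrank_map_le _ _
    _ ≤ Module.finrank ℝ (Fin n → ℝ) := Submodule.finrank_le _
    _ = n := Module.finrank_fin_fun ℝ

lemma conformal_decomposition (A : Matrix (Fin mA) (Fin n) ℤ) (B : Matrix (Fin mB) (Fin n) ℤ)
    (hinj : ∀ z : Fin n → ℝ, (rmat A).mulVec z = 0 → (rmat B).mulVec z = 0 → z = 0) :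
    ∀ (N : ℕ) (y : Fin n → ℝ), (rmat A).mulVec y = 0 →
      ({i | (rmat B).mulVec y i ≠ 0}).ncard ≤ N →
      ∃ (s : ℕ) (lam : Fin s → ℝ) (g : Fin s → Fin n → ℝ),
        y = ∑ k, lam k • g k ∧ (∀ k, 0 < lam k) ∧ (∀ k, IsCircuit A B (g k)) ∧
        (∀ k, Conf ((rmat B).mulVec (g k)) ((rmat B).mulVec y)) ∧
        s ≤ Module.finrank ℝ (Wsp A B y) := by
  intro N
  induction N with
  | zero =>
    intro y hAy hcard
    by_cases hy0 : y = 0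
    · exact ⟨0, Fin.elim0, Fin.elim0, by simp [hy0], fun k => k.elim0, fun k => k.elim0,
        fun k => k.elim0, Nat.zero_le _⟩
    · exfalso
      have hemp : {i | (rmat B).mulVec y i ≠ 0} = ∅ := by
        rw [← Set.ncard_eq_zero (Set.toFinite _)]
        omega
      refine hy0 (hinj y hAy ?_)
      funext i
      by_contra hne
      exact absurd (show i ∈ {i | (rmat B).mulVec y i ≠ 0} from hne) (by rw [hemp]; simp)
  | succ N ih =>
    intro y hAy hcard
    classical
    by_cases hy0 : y = 0
    · exact ⟨0, Fin.elim0, Fin.elim0, by simp [hy0], fun k => k.elim0, fun k => k.elim0,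
        fun k => k.elim0, Nat.zero_le _⟩
    obtain ⟨g0, hcirc, hconf⟩ :=
      exists_conformal_circuit A B hinj (N + 1) y hy0 hAy hcard
    -- the maximal step length
    set P : Finset (Fin mB) :=
      Finset.univ.filter (fun i => (rmat B).mulVec g0 i ≠ 0) with hP
    have hBg0 : (rmat B).mulVec g0 ≠ 0 := fun h => hcirc.1 (hinj g0 hcirc.2.1 h)
    have hPne : P.Nonempty := by
      by_contra h
      rw [Finset.not_nonempty_iff_eq_empty] at h
      refine hBg0 (funext fun i => ?_)
      simp only [Pi.zero_apply]
      by_contra hne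
      exact absurd (show i ∈ P by simp [hP, hne]) (by rw [h]; simp)
    set r : Fin mB → ℝ := fun i => (rmat B).mulVec y i / (rmat B).mulVec g0 i with hr
    set t := P.inf' hPne r with ht
    have hmemP : ∀ i ∈ P, (rmat B).mulVec g0 i ≠ 0 := by
      intro i hi; simpa [hP] using hi
    have hprodpos : ∀ i ∈ P, 0 < (rmat B).mulVec g0 i * (rmat B).mulVec y i := by
      intro i hi
      have h1 := (hconf i).1
      have h2 : (rmat B).mulVec y i ≠ 0 := by
        intro h
        exact hmemP i hi ((hconf i).2 h)
      exact lt_of_le_of_ne h1 (Ne.symm (mul_ne_zero (hmemP i hi) h2))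
    have hrpos : ∀ i ∈ P, 0 < r i := by
      intro i hi
      rcases mul_pos_iff.mp (hprodpos i hi) with ⟨h1, h2⟩ | ⟨h1, h2⟩
      · exact div_pos h2 h1
      · exact div_pos_of_neg_of_neg h2 h1
    obtain ⟨imin, himinP, himineq⟩ := Finset.exists_mem_eq_inf' hPne r
    have htpos : 0 < t := by rw [ht, himineq]; exact hrpos imin himinP
    set y' := y - t • g0 with hy'
    have hAy' : (rmat A).mulVec y' = 0 := by
      rw [hy', Matrix.mulVec_sub, Matrix.mulVec_smul, hAy, hcirc.2.1]
      simp
    have hBy' : ∀ i, (rmat B).mulVec y' i =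
        (rmat B).mulVec y i - t * (rmat B).mulVec g0 i := by
      intro i
      rw [hy', Matrix.mulVec_sub, Matrix.mulVec_smul]
      simp [smul_eq_mul]
    have hvan : ∀ i, (rmat B).mulVec y i = 0 → (rmat B).mulVec y' i = 0 := by
      intro i h
      rw [hBy' i, h, (hconf i).2 h]
      ring
    have himing0 : (rmat B).mulVec g0 imin ≠ 0 := hmemP imin himinP
    have hy'imin : (rmat B).mulVec y' imin = 0 := by
      rw [hBy', ht, himineq, hr]
      field_simp
      ring
    have hconf' : Conf ((rmat B).mulVec y') ((rmat B).mulVec y) := by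
      intro i
      by_cases hi : i ∈ P
      · have hle : t ≤ r i := by rw [ht]; exact Finset.inf'_le r hi
        have hprod := hprodpos i hi
        have hgne := hmemP i hi
        have hform : (rmat B).mulVec y' i = (rmat B).mulVec g0 i * (r i - t) := by
          rw [hBy', hr]
          field_simp
        constructor
        · rw [hform]
          nlinarith [sub_nonneg.mpr hle]
        · intro h0
          exfalso
          have : (rmat B).mulVec y i ≠ 0 := by
            intro h; rw [h] at hprod; simp at hprod
          exact this h0
      · have hg0i : (rmat B).mulVec g0 i = 0 := by
          by_contra h
          exact hi (by simp [hP, h])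
        have heq : (rmat B).mulVec y' i = (rmat B).mulVec y i := by
          rw [hBy', hg0i]; ring
        exact ⟨by rw [heq]; exact mul_self_nonneg _, fun h0 => by rw [heq]; exact h0⟩
    -- apply the inductive hypothesis to y'
    have hssub0 : ∀ i, (rmat B).mulVec y' i ≠ 0 → (rmat B).mulVec y i ≠ 0 := by
      intro i hi h
      exact hi (hvan i h)
    have hcard' : ({i | (rmat B).mulVec y' i ≠ 0}).ncard ≤ N := by
      have hss : {i | (rmat B).mulVec y' i ≠ 0} ⊂ {i | (rmat B).mulVec y i ≠ 0} := by
        constructor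
        · intro i hi; exact hssub0 i hi
        · intro hsub
          have himy : (rmat B).mulVec y imin ≠ 0 := by
            intro h
            exact himing0 ((hconf imin).2 h)
          exact (hsub himy) hy'imin
      have h1 := Set.ncard_lt_ncard hss (Set.toFinite _)
      omega
    obtain ⟨s', lam', g', hsum', hlam', hcirc', hconf'', hs'⟩ := ih y' hAy' hcard'
    -- the strict dimension increase
    have hWle : Wsp A B y' ≤ Wsp A B y := by
      refine le_inf_iff.mpr ⟨le_trans inf_le_left le_rfl, ?_⟩
      intro w hw
      have hw2 := (Submodule.mem_inf.mp hw).2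
      rw [Submodule.mem_pi] at hw2 ⊢
      intro i hi
      exact hw2 i (hvan i hi)
    have hBg0mem : (rmat B).mulVec g0 ∈ Wsp A B y := by
      refine Submodule.mem_inf.mpr ⟨?_, ?_⟩
      · exact Submodule.mem_map.mpr ⟨g0, by
          simp only [LinearMap.mem_ker, Matrix.mulVecLin_apply]; exact hcirc.2.1,
          by simp [Matrix.mulVecLin_apply]⟩
      · rw [Submodule.mem_pi]
        intro i hi
        simp only [Submodule.mem_bot]
        exact (hconf i).2 hi
    have hBg0nmem : (rmat B).mulVec g0 ∉ Wsp A B y' := by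
      intro h
      have h2 := (Submodule.mem_inf.mp h).2
      rw [Submodule.mem_pi] at h2
      have := h2 imin hy'imin
      rw [Submodule.mem_bot] at this
      exact himing0 this
    have hWlt : Wsp A B y' < Wsp A B y :=
      lt_of_le_of_ne hWle (fun h => hBg0nmem (h ▸ hBg0mem))
    have hrank : Module.finrank ℝ (Wsp A B y') < Module.finrank ℝ (Wsp A B y) :=
      Submodule.finrank_lt_finrank_of_lt hWlt
    -- assemble
    refine ⟨s' + 1, Fin.cons (α := fun _ => ℝ) t lam', Fin.cons (α := fun _ => Fin n → ℝ) g0 g', ?_, ?_, ?_, ?_, ?_⟩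
    · have hfun : (fun k : Fin (s' + 1) => Fin.cons (α := fun _ => ℝ) t lam' k • Fin.cons (α := fun _ => Fin n → ℝ) g0 g' k) =
          Fin.cons (t • g0) (fun k => lam' k • g' k) := by
        funext k
        refine Fin.cases ?_ (fun j => ?_) k <;> simp
      rw [hfun, Fin.sum_cons, ← hsum', hy']
      abel
    · intro k
      refine Fin.cases ?_ (fun j => ?_) k <;> simp [htpos, hlam']
    · intro k
      refine Fin.cases ?_ (fun j => ?_) k <;> simp [hcirc, hcirc']
    · intro k
      refine Fin.cases ?_ (fun j => ?_) k
      · simpa using hconf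
      · simpa using conf_trans (hconf'' j) hconf'
    · omega

end CircuitAux
namespace CircuitAux
variable {n mA mB : ℕ}

lemma cast_mulVec_int {p q : ℕ} (M : Matrix (Fin p) (Fin q) ℤ) (w : Fin q → ℤ) (k : Fin p) :
    (rmat M).mulVec (fun i => ((w i : ℝ))) k = ((M.mulVec w k : ℤ) : ℝ) := by
  simp only [rmat, Matrix.mulVec, dotProduct, Matrix.map_apply]
  push_cast
  rfl

lemma cast_mulVec_int_rat {p q : ℕ} (M : Matrix (Fin p) (Fin q) ℤ) (w : Fin q → ℤ) (k : Fin p) :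
    (M.map (fun z : ℤ => (z : ℚ))).mulVec (fun i => ((w i : ℚ))) k = ((M.mulVec w k : ℤ) : ℚ) := by
  simp only [Matrix.mulVec, dotProduct, Matrix.map_apply]
  push_cast
  rfl

lemma circuit_rational (A : Matrix (Fin mA) (Fin n) ℤ) (B : Matrix (Fin mB) (Fin n) ℤ)
    (hinj : ∀ z : Fin n → ℝ, (rmat A).mulVec z = 0 → (rmat B).mulVec z = 0 → z = 0)
    {g : Fin n → ℝ} (hg : IsCircuit A B g) :
    ∃ gc : Fin n → ℝ, gc ∈ CAB A B ∧ ∃ u : ℝ, 0 < u ∧ g = u • gc := by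
  classical
  set M : Matrix (Fin mA ⊕ Fin mB) (Fin n) ℤ :=
    Matrix.of (Sum.elim (fun j => A j) (fun i => if (rmat B).mulVec g i = 0 then B i else 0))
      with hM
  have hrowl : ∀ (z : Fin n → ℝ) (j : Fin mA),
      (rmat M).mulVec z (Sum.inl j) = (rmat A).mulVec z j := by
    intro z j
    simp [hM, rmat, Matrix.mulVec, dotProduct, Matrix.map_apply]
  have hrowr : ∀ (z : Fin n → ℝ) (i : Fin mB),
      (rmat M).mulVec z (Sum.inr i) =
        if (rmat B).mulVec g i = 0 then (rmat B).mulVec z i else 0 := by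
    intro z i
    by_cases hi : (rmat B).mulVec g i = 0
    · rw [if_pos hi]
      have hrow : ∀ j, M (Sum.inr i) j = B i j := by simp [hM, hi]
      simp [rmat, Matrix.mulVec, dotProduct, Matrix.map_apply, hrow]
    · rw [if_neg hi]
      have hrow : ∀ j, M (Sum.inr i) j = 0 := by simp [hM, hi]
      simp [rmat, Matrix.mulVec, dotProduct, Matrix.map_apply, hrow]
  have hMiff : ∀ z : Fin n → ℝ, (rmat M).mulVec z = 0 ↔
      ((rmat A).mulVec z = 0 ∧ ∀ i, (rmat B).mulVec g i = 0 → (rmat B).mulVec z i = 0) := by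
    intro z
    constructor
    · intro h
      constructor
      · funext j
        have := congrFun h (Sum.inl j)
        rw [hrowl] at this
        simpa using this
      · intro i hi
        have := congrFun h (Sum.inr i)
        rw [hrowr, if_pos hi] at this
        simpa using this
    · rintro ⟨h1, h2⟩
      funext k
      rcases k with j | i
      · rw [hrowl]; simpa using congrFun h1 j
      · rw [hrowr]
        by_cases hi : (rmat B).mulVec g i = 0
        · rw [if_pos hi]; simpa using h2 i hi
        · rw [if_neg hi]; rfl
  have hMg : (rmat M).mulVec g = 0 := (hMiff g).mpr ⟨hg.2.1, fun i hi => hi⟩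
  set N : Matrix (Fin n) (Fin n) ℤ := Mᵀ * M with hN
  have hrmatN : rmat N = (rmat M)ᵀ * rmat M := by
    show (Mᵀ * M).map (fun z : ℤ => (z : ℝ)) = _
    rw [show (fun z : ℤ => (z : ℝ)) = ⇑(Int.castRingHom ℝ) from rfl, Matrix.map_mul]
    congr 1
  have hNg : (rmat N).mulVec g = 0 := by
    rw [hrmatN, ← Matrix.mulVec_mulVec, hMg, Matrix.mulVec_zero]
  have hdetR : (rmat N).det = 0 := Matrix.exists_mulVec_eq_zero_iff.mp ⟨g, hg.1, hNg⟩
  have hdetZ : N.det = 0 := by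
    have h1 : ((N.det : ℤ) : ℝ) = 0 := by
      rw [show ((N.det : ℤ) : ℝ) = (Int.castRingHom ℝ) N.det from rfl, RingHom.map_det]
      exact hdetR
    exact_mod_cast h1
  have hdetQ : (N.map (fun z : ℤ => (z : ℚ))).det = 0 := by
    rw [show (fun z : ℤ => (z : ℚ)) = ⇑(Int.castRingHom ℚ) from rfl,
      ← RingHom.mapMatrix_apply, ← RingHom.map_det, hdetZ]
    simp
  obtain ⟨v, hv0, hvN⟩ := Matrix.exists_mulVec_eq_zero_iff.mpr hdetQ
  -- clear denominators
  set w : Fin n → ℤ := fun i => (v i).num * ∏ j ∈ Finset.univ.erase i, ((v j).den : ℤ) with hw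
  set D : ℚ := ∏ j, ((v j).den : ℚ) with hD
  have hdenne : ∀ i : Fin n, ((v i).den : ℚ) ≠ 0 := by
    intro i
    exact_mod_cast (v i).den_nz
  have hDne : D ≠ 0 := Finset.prod_ne_zero_iff.mpr (fun i _ => hdenne i)
  have hcast : ∀ i, (w i : ℚ) = v i * D := by
    intro i
    have hnum : ((v i).num : ℚ) = v i * (v i).den :=
      (div_eq_iff (hdenne i)).mp (Rat.num_div_den (v i))
    rw [hw]
    push_cast
    rw [hnum, hD, ← Finset.mul_prod_erase Finset.univ (fun j => ((v j).den : ℚ))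
      (Finset.mem_univ i)]
    ring
  have hw0 : w ≠ 0 := by
    obtain ⟨i1, hi1⟩ : ∃ i1, v i1 ≠ 0 := by
      by_contra h; push_neg at h; exact hv0 (funext h)
    intro h
    have h2 : (w i1 : ℚ) = 0 := by rw [h]; simp
    rw [hcast i1] at h2
    rcases mul_eq_zero.mp h2 with h3 | h3
    · exact hi1 h3
    · exact hDne h3
  have hNw : ∀ k, N.mulVec w k = 0 := by
    intro k
    have h1 : (fun i => ((w i : ℚ))) = D • v := by
      funext i
      rw [hcast i]
      simp [smul_eq_mul, mul_comm]
    have h2 : (N.map (fun z : ℤ => (z : ℚ))).mulVec (fun i => ((w i : ℚ))) k = 0 := by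
      rw [h1, Matrix.mulVec_smul, hvN]
      simp
    rw [cast_mulVec_int_rat] at h2
    exact_mod_cast h2
  -- back to ℝ
  set z : Fin n → ℝ := fun i => ((w i : ℝ)) with hz
  have hNz : (rmat N).mulVec z = 0 := by
    funext k
    rw [hz, cast_mulVec_int, hNw k]
    simp
  have hMz : (rmat M).mulVec z = 0 := by
    have hdot : (rmat M).mulVec z ⬝ᵥ (rmat M).mulVec z = 0 := by
      have h1 : z ⬝ᵥ ((rmat N).mulVec z) = (rmat M).mulVec z ⬝ᵥ (rmat M).mulVec z := by
        rw [hrmatN, ← Matrix.mulVec_mulVec, Matrix.dotProduct_mulVec, Matrix.vecMul_transpose]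
      rw [← h1, hNz, dotProduct_zero]
    funext k
    have h2 : ∀ i ∈ Finset.univ, (0:ℝ) ≤ (rmat M).mulVec z i * (rmat M).mulVec z i :=
      fun i _ => mul_self_nonneg _
    have h3 := (Finset.sum_eq_zero_iff_of_nonneg h2).mp hdot k (Finset.mem_univ k)
    simpa using mul_self_eq_zero.mp h3
  have hz0 : z ≠ 0 := by
    intro h
    refine hw0 (funext fun i => ?_)
    simp only [Pi.zero_apply]
    have h2 : ((w i : ℝ)) = 0 := by simpa [hz] using congrFun h i
    exact_mod_cast h2
  obtain ⟨hAz, hBsup⟩ := (hMiff z).mp hMz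
  obtain ⟨t, ht0, htz⟩ := parallel A B hinj hg hz0 hAz hBsup
  -- normalize by the gcd
  set dn : ℕ := Finset.univ.gcd (fun i => (w i).natAbs) with hdn
  obtain ⟨i1, hi1⟩ : ∃ i1, w i1 ≠ 0 := by
    by_contra h; push_neg at h; exact hw0 (funext h)
  have hdn0 : dn ≠ 0 := by
    intro h
    rw [hdn, Finset.gcd_eq_zero_iff] at h
    exact hi1 (Int.natAbs_eq_zero.mp (h i1 (Finset.mem_univ i1)))
  have hdvd : ∀ i, (dn : ℤ) ∣ w i := by
    intro i
    have h1 : dn ∣ (w i).natAbs := Finset.gcd_dvd (Finset.mem_univ i)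
    exact Int.dvd_natAbs.mp (Int.natCast_dvd_natCast.mpr h1)
  set gz : Fin n → ℤ := fun i => w i / (dn : ℤ) with hgz
  have hdnpos : (0:ℝ) < (dn : ℝ) := by exact_mod_cast Nat.pos_of_ne_zero hdn0
  have hdnR0 : (dn : ℝ) ≠ 0 := ne_of_gt hdnpos
  have hgzcast : ∀ i, ((gz i : ℤ) : ℝ) = (w i : ℝ) / (dn : ℝ) := by
    intro i
    show (((w i / (dn : ℤ) : ℤ)) : ℝ) = (w i : ℝ) / (dn : ℝ)
    have h1 := Int.cast_div_charZero (k := ℝ) (hdvd i)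
    simpa using h1
  have hgcd1 : Finset.univ.gcd (fun i => (gz i).natAbs) = 1 := by
    have habs : ∀ i : Fin n, (gz i).natAbs = (w i).natAbs / dn := by
      intro i
      show ((w i / (dn : ℤ)).natAbs) = (w i).natAbs / dn
      rw [Int.natAbs_ediv_of_dvd (hdvd i)]
      simp
    have h2 : (fun i : Fin n => (gz i).natAbs)
        = fun i => (w i).natAbs / Finset.univ.gcd (fun j => (w j).natAbs) := by
      funext i
      rw [habs i, hdn]
    rw [h2]
    exact Finset.gcd_div_eq_one (Finset.mem_univ i1) (Int.natAbs_ne_zero.mpr hi1)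
  set gc : Fin n → ℝ := fun i => ((gz i : ℝ)) with hgc
  have hgcg : gc = (t / (dn : ℝ)) • g := by
    funext i
    show ((gz i : ℝ)) = _
    rw [hgzcast i]
    have hzi : (w i : ℝ) = z i := rfl
    rw [hzi, htz]
    simp only [Pi.smul_apply, smul_eq_mul]
    ring
  have htd0 : t / (dn : ℝ) ≠ 0 := div_ne_zero ht0 hdnR0
  have hcircgc : IsCircuit A B gc := by
    rw [hgcg]
    exact circuit_smul hg htd0
  have hgrec : g = ((dn : ℝ) / t) • gc := by
    rw [hgcg, smul_smul]
    have h1 : (dn : ℝ) / t * (t / (dn : ℝ)) = 1 := by field_simp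
    rw [h1, one_smul]
  rcases ht0.lt_or_gt with htneg | htpos
  · refine ⟨-gc, ⟨?_, ⟨fun i => -(gz i), fun i => by simp [hgc], ?_⟩⟩, -((dn : ℝ) / t), ?_, ?_⟩
    · have hneg : -gc = (-(t / (dn : ℝ))) • g := by rw [hgcg, neg_smul]
      rw [hneg]
      exact circuit_smul hg (neg_ne_zero.mpr htd0)
    · simpa [Int.natAbs_neg] using hgcd1
    · have h1 : (dn : ℝ) / t < 0 := div_neg_of_pos_of_neg hdnpos htneg
      linarith
    · rw [hgrec]
      simp [neg_smul, smul_neg, neg_neg]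
  · exact ⟨gc, ⟨hcircgc, ⟨gz, fun i => rfl, hgcd1⟩⟩, (dn : ℝ) / t,
      div_pos hdnpos htpos, hgrec⟩

end CircuitAux
namespace CircuitAux
variable {n mA mB : ℕ}

lemma dotIC_sub (c : Fin n → ℤ) (u v : Fin n → ℝ) : dotIC c (u - v) = dotIC c u - dotIC c v := by
  simp [dotIC, mul_sub, Finset.sum_sub_distrib]

lemma dotIC_smul (c : Fin n → ℤ) (r : ℝ) (u : Fin n → ℝ) : dotIC c (r • u) = r * dotIC c u := by
  simp [dotIC, Finset.mul_sum, Pi.smul_apply, smul_eq_mul]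
  congr 1
  funext i
  ring

lemma dotIC_sum (c : Fin n → ℤ) {s : ℕ} (f : Fin s → Fin n → ℝ) :
    dotIC c (∑ k, f k) = ∑ k, dotIC c (f k) := by
  simp only [dotIC, Finset.sum_apply, Finset.mul_sum]
  rw [Finset.sum_comm]

end CircuitAux
/-- at any non-optimal feasible point there is a feasible circuit
augmentation gaining at least a `1/n` fraction of the optimality gap. -/
theorem exists_good_circuit_augmentation
    (A : Matrix (Fin mA) (Fin n) ℤ) (B : Matrix (Fin mB) (Fin n) ℤ)
    (b : Fin mA → ℤ) (d : Fin mB → ℤ) (c : Fin n → ℤ)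
    (hmB : 1 ≤ mB)
    (hA : (rmat A).rank = mA)
    (hAB : (rmat (Matrix.fromRows A B)).rank = n)
    (xmin : Fin n → ℝ) (hxmin : xmin ∈ Pset A B b d)
    (hopt : ∀ y ∈ Pset A B b d, dotIC c xmin ≤ dotIC c y)
    (x : Fin n → ℝ) (hx : x ∈ Pset A B b d)
    (hgap : dotIC c xmin < dotIC c x) :
    ∃ (g : Fin n → ℝ) (α : ℝ), g ∈ CAB A B ∧ 0 < α ∧ x + α • g ∈ Pset A B b d ∧
      (dotIC c x - dotIC c xmin) / n ≤ -(dotIC c (α • g)) := by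
  classical
  have hinj := CircuitAux.inj_of_rank A B hAB
  have hn0 : n ≠ 0 := by
    intro h
    subst h
    exact lt_irrefl (0:ℝ) (by simp [dotIC] at hgap)
  have hnpos : (0:ℝ) < n := by exact_mod_cast Nat.pos_of_ne_zero hn0
  set y := xmin - x with hy
  have hAy : (rmat A).mulVec y = 0 := by
    rw [hy, Matrix.mulVec_sub, hxmin.1, hx.1]
    simp
  obtain ⟨s, lam, g, hsum, hlam, hcirc, hconf, hsle⟩ :=
    CircuitAux.conformal_decomposition A B hinj ({i | (rmat B).mulVec y i ≠ 0}).ncard y hAy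
      le_rfl
  have hsn : (s:ℝ) ≤ n := by
    have h1 := le_trans hsle (CircuitAux.Wsp_finrank_le A B y)
    exact_mod_cast h1
  set gap := dotIC c x - dotIC c xmin with hgapdef
  have hgappos : 0 < gap := by rw [hgapdef]; linarith
  have hdoty : dotIC c y = -gap := by
    rw [hy, CircuitAux.dotIC_sub, hgapdef]
    ring
  have hsum' : ∑ k, lam k * dotIC c (g k) = -gap := by
    rw [← hdoty, hsum, CircuitAux.dotIC_sum]
    congr 1
    funext k
    rw [CircuitAux.dotIC_smul]
  -- select a good circuit
  have hex : ∃ k : Fin s, lam k * dotIC c (g k) ≤ -gap / n := by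
    by_contra hc
    push_neg at hc
    have hspos : 0 < s := by
      by_contra hs0
      push_neg at hs0
      have hseq : s = 0 := by omega
      subst hseq
      rw [show (Finset.univ : Finset (Fin 0)) = ∅ from rfl, Finset.sum_empty] at hsum'
      linarith
    haveI : Nonempty (Fin s) := ⟨⟨0, hspos⟩⟩
    have hlt : ∑ _k : Fin s, (-gap / n) < ∑ k, lam k * dotIC c (g k) :=
      Finset.sum_lt_sum_of_nonempty Finset.univ_nonempty (fun k _ => hc k)
    rw [hsum', Finset.sum_const, Finset.card_univ, Fintype.card_fin] at hlt
    have h2 : (s:ℝ) * (-gap / n) < -gap := by simpa [nsmul_eq_mul] using hlt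
    have h3 : (s:ℝ) * (gap / n) ≤ gap := by
      have h4 : (s:ℝ) * (gap / n) ≤ (n:ℝ) * (gap / n) :=
        mul_le_mul_of_nonneg_right hsn (by positivity)
      have h5 : (n:ℝ) * (gap / n) = gap := by field_simp
      linarith
    have h6 : (s:ℝ) * (-gap / n) = -((s:ℝ) * (gap / n)) := by ring
    linarith
  obtain ⟨k0, hk0⟩ := hex
  -- feasibility of the chosen augmentation
  have hBy : (rmat B).mulVec y = ∑ k, lam k • (rmat B).mulVec (g k) := by
    rw [hsum]
    rw [show (rmat B).mulVec (∑ k, lam k • g k) = (rmat B).mulVecLin (∑ k, lam k • g k) from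
      (Matrix.mulVecLin_apply _ _).symm]
    rw [map_sum]
    congr 1
    funext k
    rw [LinearMap.map_smul, Matrix.mulVecLin_apply]
  have hBxmin : ∀ i, (rmat B).mulVec xmin i = (rmat B).mulVec x i + (rmat B).mulVec y i := by
    intro i
    rw [hy, Matrix.mulVec_sub]
    simp
  have hfeas : x + lam k0 • g k0 ∈ Pset A B b d := by
    constructor
    · rw [Matrix.mulVec_add, Matrix.mulVec_smul, (hcirc k0).2.1]
      simpa using hx.1
    · intro i
      have hval : (rmat B).mulVec (x + lam k0 • g k0) i =
          (rmat B).mulVec x i + lam k0 * (rmat B).mulVec (g k0) i := by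
        rw [Matrix.mulVec_add, Matrix.mulVec_smul]
        simp [smul_eq_mul]
      rw [hval]
      rcases lt_trichotomy ((rmat B).mulVec y i) 0 with hyi | hyi | hyi
      · have hg0 : (rmat B).mulVec (g k0) i ≤ 0 := by
          have := (hconf k0 i).1
          nlinarith
        have : lam k0 * (rmat B).mulVec (g k0) i ≤ 0 :=
          mul_nonpos_of_nonneg_of_nonpos (le_of_lt (hlam k0)) hg0
        linarith [hx.2 i]
      · have hg0 : (rmat B).mulVec (g k0) i = 0 := (hconf k0 i).2 hyi
        rw [hg0]
        simpa using hx.2 i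
      · have hterm : ∀ k : Fin s, 0 ≤ lam k * (rmat B).mulVec (g k) i := by
          intro k
          have h1 := (hconf k i).1
          have h2 : 0 ≤ (rmat B).mulVec (g k) i := by nlinarith
          exact mul_nonneg (le_of_lt (hlam k)) h2
        have hsumi : ∑ k, lam k * (rmat B).mulVec (g k) i = (rmat B).mulVec y i := by
          rw [hBy]
          simp [Finset.sum_apply, smul_eq_mul]
        have hle : lam k0 * (rmat B).mulVec (g k0) i ≤ (rmat B).mulVec y i := by
          rw [← hsumi]
          exact Finset.single_le_sum (fun k _ => hterm k) (Finset.mem_univ k0)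
        have := hxmin.2 i
        rw [hBxmin i] at this
        linarith
  -- normalize the circuit
  obtain ⟨gc, hgcCAB, u, hu, hgu⟩ := CircuitAux.circuit_rational A B hinj (hcirc k0)
  refine ⟨gc, lam k0 * u, hgcCAB, mul_pos (hlam k0) hu, ?_, ?_⟩
  · have heq : (lam k0 * u) • gc = lam k0 • g k0 := by rw [mul_smul, ← hgu]
    rw [heq]
    exact hfeas
  · have h1 : dotIC c ((lam k0 * u) • gc) = lam k0 * dotIC c (g k0) := by
      rw [CircuitAux.dotIC_smul, show dotIC c (g k0) = dotIC c (u • gc) from by rw [← hgu],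
        CircuitAux.dotIC_smul]
      ring
    rw [h1]
    have hrw : -gap / (n:ℝ) = -(gap / n) := by ring
    linarith [hk0]
end
end

section
/- Let P = {x ∈ ℝⁿ : Ax = b, Bx ≤ d} with integer data, let c ∈ ℤⁿ, and let u and v be vertices of P. If cᵀu ≠ cᵀv, then |cᵀu − cᵀv| ≥ 1/δ². -/
noncomputable section

variable {n mA mB : ℕ}

open Matrix in
lemma aux_exists_ker_of_span_ne_top {m : Type*} [Fintype m] (N : Matrix m (Fin n) ℝ)
    (h : Submodule.span ℝ (Set.range (fun j => N j)) ≠ ⊤) :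
    ∃ z : Fin n → ℝ, z ≠ 0 ∧ N *ᵥ z = 0 := by
  by_contra hcon
  push_neg at hcon
  have hker : LinearMap.ker N.mulVecLin = ⊥ := by
    rw [Matrix.ker_mulVecLin_eq_bot_iff]
    intro v hv
    by_contra hv0
    exact (hcon v hv0) hv
  have hrn : N.rank = n := by
    have := LinearMap.finrank_range_add_finrank_ker N.mulVecLin
    rw [hker, finrank_bot] at this
    simpa [Matrix.rank, Module.finrank_pi] using this
  have h2 : Nᵀ.rank = Module.finrank ℝ (Submodule.span ℝ (Set.range (fun j => N j))) := by
    rw [Matrix.rank_eq_finrank_span_cols]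
    congr 1
  rw [Matrix.rank_transpose, hrn] at h2
  have hlt : Module.finrank ℝ (Submodule.span ℝ (Set.range (fun j => N j))) < n := by
    have := Submodule.finrank_lt (K := ℝ) (V := Fin n → ℝ) h
    simpa [Module.finrank_pi] using this
  omega

open Matrix in
lemma aux_exists_indep_rows {ι : Type*} [Fintype ι] (g : ι → (Fin n → ℝ)) (S : Set ι)
    (hspan : Submodule.span ℝ (g '' S) = ⊤) :
    ∃ f : Fin n → ι, Function.Injective f ∧ (∀ i, f i ∈ S) ∧
      LinearIndependent ℝ (fun i => g (f i)) := by
  classical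
  obtain ⟨t, hts, htspan, htli⟩ := exists_linearIndependent ℝ (g '' S)
  rw [hspan] at htspan
  have htfin : t.Finite := (S.toFinite.image g).subset hts
  haveI : Fintype t := htfin.fintype
  let bas : Module.Basis t ℝ (Fin n → ℝ) := Module.Basis.mk htli (by rw [Subtype.range_coe, htspan])
  have hcard : Fintype.card t = n := by
    have := Module.finrank_eq_card_basis bas
    simpa [Module.finrank_pi] using this.symm
  let e : Fin n ≃ t := (Fintype.equivFinOfCardEq hcard).symm
  have hpre : ∀ w : t, ∃ j, j ∈ S ∧ g j = w := by
    intro w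
    obtain ⟨j, hj, hjw⟩ := hts w.2
    exact ⟨j, hj, hjw⟩
  choose h hS hg using hpre
  refine ⟨fun i => h (e i), ?_, fun i => hS (e i), ?_⟩
  · intro i i' hii
    apply e.injective
    apply Subtype.ext
    calc ((e i : t) : Fin n → ℝ) = g (h (e i)) := (hg (e i)).symm
      _ = g (h (e i')) := by simp only [] at hii; rw [hii]
      _ = ((e i' : t) : Fin n → ℝ) := hg (e i')
  · have : LinearIndependent ℝ (fun i : Fin n => ((e i : t) : Fin n → ℝ)) :=
      htli.comp e e.injective
    convert this using 1
    funext i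
    exact hg (e i)

open Matrix in
/-- Every extreme point of `Pset` solves an invertible integer subsystem. -/
lemma aux_vertex_rep (A : Matrix (Fin mA) (Fin n) ℤ) (B : Matrix (Fin mB) (Fin n) ℤ)
    (b : Fin mA → ℤ) (d : Fin mB → ℤ) (u : Fin n → ℝ)
    (hu : u ∈ Set.extremePoints ℝ (Pset A B b d)) :
    ∃ f : Fin n → (Fin mA ⊕ Fin mB), Function.Injective f ∧
      ((Matrix.fromRows A B).submatrix f id).det ≠ 0 ∧
      (rmat ((Matrix.fromRows A B).submatrix f id)) *ᵥ u
        = rvec (fun i => Sum.elim b d (f i)) := by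
  classical
  obtain ⟨huP, huex⟩ := hu
  obtain ⟨hA, hB⟩ := huP
  set g : Fin mA ⊕ Fin mB → (Fin n → ℝ) := fun j => rmat (Matrix.fromRows A B) j with hg
  set S : Set (Fin mA ⊕ Fin mB) :=
    Set.range Sum.inl ∪ Sum.inr '' {i | (rmat B).mulVec u i = (d i : ℝ)} with hS
  have hspan : Submodule.span ℝ (g '' S) = ⊤ := by
    by_contra hne
    haveI : Fintype S := (Set.toFinite S).fintype
    set N : Matrix S (Fin n) ℝ := Matrix.of (fun (j : S) => g j.1) with hN
    have hrange : Set.range (fun j : S => N j) = g '' S := by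
      rw [hN]
      exact (Set.image_eq_range g S).symm
    obtain ⟨z, hz0, hzker⟩ := aux_exists_ker_of_span_ne_top N (by rw [hrange]; exact hne)
    have hz : ∀ j ∈ S, g j ⬝ᵥ z = 0 := by
      intro j hj
      exact congrFun hzker ⟨j, hj⟩
    have hAz : (rmat A) *ᵥ z = 0 := by
      funext j
      have : g (Sum.inl j) ⬝ᵥ z = 0 := hz _ (Or.inl ⟨j, rfl⟩)
      simpa [hg, Matrix.mulVec, rmat, dotProduct, Matrix.fromRows_apply_inl] using this
    have hBz : ∀ i, (rmat B).mulVec u i = (d i : ℝ) → ((rmat B) *ᵥ z) i = 0 := by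
      intro i hi
      have : g (Sum.inr i) ⬝ᵥ z = 0 := hz _ (Or.inr ⟨i, hi, rfl⟩)
      simpa [hg, Matrix.mulVec, rmat, dotProduct, Matrix.fromRows_apply_inr] using this
    -- choose ε
    set T : Finset (Fin mB) := Finset.univ.filter (fun i => (rmat B).mulVec u i < (d i : ℝ))
      with hT
    set ε : ℝ := if hTne : T.Nonempty then
        min 1 (T.inf' hTne (fun i => ((d i : ℝ) - (rmat B).mulVec u i) /
          (|(rmat B).mulVec z i| + 1))) else 1 with hε
    have hεpos : 0 < ε := by
      rw [hε]
      split_ifs with hTne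
      · refine lt_min one_pos ?_
        rw [Finset.lt_inf'_iff]
        intro i hi
        rw [hT, Finset.mem_filter] at hi
        have h1 : 0 < (d i : ℝ) - (rmat B).mulVec u i := by linarith [hi.2]
        have h2 : 0 < |(rmat B).mulVec z i| + 1 := by positivity
        positivity
      · exact one_pos
    have hmem : ∀ s : ℝ, |s| ≤ ε → u + s • z ∈ Pset A B b d := by
      intro s hs
      constructor
      · rw [Matrix.mulVec_add, hA, Matrix.mulVec_smul, hAz]
        simp
      · intro i
        rw [Matrix.mulVec_add, Matrix.mulVec_smul]
        rcases lt_or_eq_of_le (hB i) with hlt | heq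
        · have hiT : i ∈ T := by rw [hT, Finset.mem_filter]; exact ⟨Finset.mem_univ _, hlt⟩
          have hTne : T.Nonempty := ⟨i, hiT⟩
          have hεle : ε ≤ ((d i : ℝ) - (rmat B).mulVec u i) / (|(rmat B).mulVec z i| + 1) := by
            rw [hε, dif_pos hTne]
            exact le_trans (min_le_right _ _) (Finset.inf'_le _ hiT)
          have habs : |(rmat B).mulVec z i| + 1 > 0 := by positivity
          have key : s * (rmat B).mulVec z i ≤ (d i : ℝ) - (rmat B).mulVec u i := by
            calc s * (rmat B).mulVec z i ≤ |s * (rmat B).mulVec z i| := le_abs_self _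
              _ = |s| * |(rmat B).mulVec z i| := abs_mul _ _
              _ ≤ ε * |(rmat B).mulVec z i| :=
                  mul_le_mul_of_nonneg_right hs (abs_nonneg _)
              _ ≤ (((d i : ℝ) - (rmat B).mulVec u i) / (|(rmat B).mulVec z i| + 1))
                    * |(rmat B).mulVec z i| :=
                  mul_le_mul_of_nonneg_right hεle (abs_nonneg _)
              _ ≤ (d i : ℝ) - (rmat B).mulVec u i := by
                  rw [div_mul_eq_mul_div, div_le_iff₀ habs]
                  have h0 : 0 ≤ (d i : ℝ) - (rmat B).mulVec u i := by linarith
                  nlinarith [abs_nonneg ((rmat B).mulVec z i)]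
          have := key
          simp only [Pi.add_apply, Pi.smul_apply, smul_eq_mul]
          linarith
        · have hz0' : ((rmat B) *ᵥ z) i = 0 := hBz i heq
          simp only [Pi.add_apply, Pi.smul_apply, smul_eq_mul, hz0']
          rw [heq]
          simp
    have h1 : u + ε • z ∈ Pset A B b d := hmem ε (by rw [abs_of_pos hεpos])
    have h2 : u + (-ε) • z ∈ Pset A B b d := hmem (-ε) (by rw [abs_neg, abs_of_pos hεpos])
    have hseg : u ∈ openSegment ℝ (u + (-ε) • z) (u + ε • z) := by
      refine ⟨1/2, 1/2, by norm_num, by norm_num, by norm_num, ?_⟩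
      module
    have he1 := (huex h2 h1 hseg).symm
    apply hz0
    have : (-ε) • z = 0 := by
      have := congrArg (fun w => w - u) he1
      simpa [add_sub_cancel_left] using this
    rcases smul_eq_zero.mp this with h | h
    · exact absurd h (by simp; positivity)
    · exact h
  obtain ⟨f, hfinj, hfS, hfli⟩ := aux_exists_indep_rows g S hspan
  have hmap : rmat ((Matrix.fromRows A B).submatrix f id)
      = (rmat (Matrix.fromRows A B)).submatrix f id := rfl
  refine ⟨f, hfinj, ?_, ?_⟩
  · have hrows : LinearIndependent ℝ
        (fun i => ((rmat (Matrix.fromRows A B)).submatrix f id) i) := by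
      convert hfli using 1
      rfl
    have hunit : IsUnit ((rmat (Matrix.fromRows A B)).submatrix f id) :=
      Matrix.linearIndependent_rows_iff_isUnit.mp hrows
    have hdetR : ((rmat (Matrix.fromRows A B)).submatrix f id).det ≠ 0 :=
      (Matrix.isUnit_iff_isUnit_det _).mp hunit |>.ne_zero
    intro hdz
    apply hdetR
    rw [← hmap]
    have : rmat ((Matrix.fromRows A B).submatrix f id)
        = ((Matrix.fromRows A B).submatrix f id).map (Int.castRingHom ℝ) := rfl
    rw [this, ← RingHom.mapMatrix_apply, ← RingHom.map_det, hdz]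
    simp
  · funext i
    rw [hmap]
    rcases hj : f i with j | j
    · have : (rmat A).mulVec u j = (b j : ℝ) := by rw [hA]; rfl
      simp only [Matrix.mulVec, Matrix.submatrix_apply, hj, rvec, Sum.elim_inl]
      simpa [Matrix.mulVec, rmat, Matrix.fromRows_apply_inl] using this
    · have hact : (rmat B).mulVec u j = (d j : ℝ) := by
        have := hfS i
        rw [hj] at this
        rcases this with ⟨k, hk⟩ | ⟨k, hk1, hk2⟩
        · exact absurd hk (by simp)
        · have hkj := Sum.inr_injective hk2
          rwa [← hkj]
      simp only [Matrix.mulVec, Matrix.submatrix_apply, hj, rvec, Sum.elim_inr]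
      simpa [Matrix.mulVec, rmat, Matrix.fromRows_apply_inr] using hact

open Matrix in
lemma aux_det_le_deltaMax (A : Matrix (Fin mA) (Fin n) ℤ) (B : Matrix (Fin mB) (Fin n) ℤ)
    (f : Fin n → (Fin mA ⊕ Fin mB)) (hf : Function.Injective f) :
    |((((Matrix.fromRows A B).submatrix f id).det : ℤ) : ℝ)| ≤ deltaMax A B := by
  have hset : {r : ℝ | ∃ f : Fin n → (Fin mA ⊕ Fin mB), Function.Injective f ∧
        r = |((((Matrix.fromRows A B).submatrix f id).det : ℤ) : ℝ)|}
      = (fun f : Fin n → (Fin mA ⊕ Fin mB) =>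
          |((((Matrix.fromRows A B).submatrix f id).det : ℤ) : ℝ)|) ''
        {f | Function.Injective f} := by
    ext r
    simp only [Set.mem_setOf_eq, Set.mem_image]
    constructor
    · rintro ⟨f, hf, rfl⟩; exact ⟨f, hf, rfl⟩
    · rintro ⟨f, hf, rfl⟩; exact ⟨f, hf, rfl⟩
  have hbdd : BddAbove {r : ℝ | ∃ f : Fin n → (Fin mA ⊕ Fin mB), Function.Injective f ∧
        r = |((((Matrix.fromRows A B).submatrix f id).det : ℤ) : ℝ)|} := by
    rw [hset]
    exact (Set.toFinite _).image _ |>.bddAbove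
  exact le_csSup hbdd ⟨f, hf, rfl⟩

open Matrix in
lemma aux_dot_rep (Mz : Matrix (Fin n) (Fin n) ℤ) (wz : Fin n → ℤ) (u : Fin n → ℝ)
    (hdet : Mz.det ≠ 0) (h : (rmat Mz) *ᵥ u = rvec wz) (c : Fin n → ℤ) :
    dotIC c u = ((∑ i, c i * (Mz.adjugate *ᵥ wz) i : ℤ) : ℝ) / ((Mz.det : ℤ) : ℝ) := by
  have hmapM : rmat Mz = (Int.castRingHom ℝ).mapMatrix Mz := rfl
  have hadj : rmat (Mz.adjugate) = (rmat Mz).adjugate := by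
    rw [hmapM]
    exact RingHom.map_adjugate (Int.castRingHom ℝ) Mz
  have hdetR : (rmat Mz).det = ((Mz.det : ℤ) : ℝ) := by
    rw [hmapM, ← RingHom.map_det]
    simp
  have hdetR0 : ((Mz.det : ℤ) : ℝ) ≠ 0 := Int.cast_ne_zero.mpr hdet
  have hsmul : ((Mz.det : ℤ) : ℝ) • u = rvec (Mz.adjugate *ᵥ wz) := by
    have h1 : rmat (Mz.adjugate) *ᵥ ((rmat Mz) *ᵥ u) = ((Mz.det : ℤ) : ℝ) • u := by
      rw [hadj, Matrix.mulVec_mulVec, Matrix.adjugate_mul, hdetR,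
        Matrix.smul_mulVec, Matrix.one_mulVec]
    have h2 : rmat (Mz.adjugate) *ᵥ rvec wz = rvec (Mz.adjugate *ᵥ wz) := by
      funext i
      simp [rmat, rvec, Matrix.mulVec, dotProduct]
    rw [← h1, h, h2]
  have hu : ∀ i, u i = (((Mz.adjugate *ᵥ wz) i : ℤ) : ℝ) / ((Mz.det : ℤ) : ℝ) := by
    intro i
    have := congrFun hsmul i
    simp only [Pi.smul_apply, smul_eq_mul, rvec] at this
    field_simp
    linarith [this]
  unfold dotIC
  push_cast
  rw [Finset.sum_div]
  congr 1
  funext i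
  rw [hu i]
  rw [← hdetR]; unfold rmat; ring


/-- distinct objective values at vertices of `P` differ by at least `1/δ²`. -/
theorem vertex_objective_gap
    (A : Matrix (Fin mA) (Fin n) ℤ) (B : Matrix (Fin mB) (Fin n) ℤ)
    (b : Fin mA → ℤ) (d : Fin mB → ℤ) (c : Fin n → ℤ)
    (hmB : 1 ≤ mB)
    (hA : (rmat A).rank = mA)
    (hAB : (rmat (Matrix.fromRows A B)).rank = n)
    (u v : Fin n → ℝ)
    (hu : u ∈ Set.extremePoints ℝ (Pset A B b d))
    (hv : v ∈ Set.extremePoints ℝ (Pset A B b d))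
    (hne : dotIC c u ≠ dotIC c v) :
    1 / (deltaMax A B) ^ 2 ≤ |dotIC c u - dotIC c v| := by
  obtain ⟨f1, hf1inj, hdet1, heq1⟩ := aux_vertex_rep A B b d u hu
  obtain ⟨f2, hf2inj, hdet2, heq2⟩ := aux_vertex_rep A B b d v hv
  set M1 := (Matrix.fromRows A B).submatrix f1 id with hM1
  set M2 := (Matrix.fromRows A B).submatrix f2 id with hM2
  set wz1 : Fin n → ℤ := fun i => Sum.elim b d (f1 i) with hwz1
  set wz2 : Fin n → ℤ := fun i => Sum.elim b d (f2 i) with hwz2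
  set D1 : ℤ := M1.det with hD1
  set D2 : ℤ := M2.det with hD2
  set a1 : ℤ := ∑ i, c i * (M1.adjugate.mulVec wz1) i with ha1
  set a2 : ℤ := ∑ i, c i * (M2.adjugate.mulVec wz2) i with ha2
  have hu' : dotIC c u = (a1 : ℝ) / (D1 : ℝ) := aux_dot_rep M1 wz1 u hdet1 heq1 c
  have hv' : dotIC c v = (a2 : ℝ) / (D2 : ℝ) := aux_dot_rep M2 wz2 v hdet2 heq2 c
  have hδ1 : |((D1 : ℤ) : ℝ)| ≤ deltaMax A B := aux_det_le_deltaMax A B f1 hf1inj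
  have hδ2 : |((D2 : ℤ) : ℝ)| ≤ deltaMax A B := aux_det_le_deltaMax A B f2 hf2inj
  have h1le : (1 : ℝ) ≤ |(D1 : ℝ)| := by exact_mod_cast Int.one_le_abs hdet1
  have h2le : (1 : ℝ) ≤ |(D2 : ℝ)| := by exact_mod_cast Int.one_le_abs hdet2
  have hδpos : 0 < deltaMax A B := lt_of_lt_of_le one_pos (le_trans h1le hδ1)
  have hD1R : ((D1 : ℤ) : ℝ) ≠ 0 := Int.cast_ne_zero.mpr hdet1
  have hD2R : ((D2 : ℤ) : ℝ) ≠ 0 := Int.cast_ne_zero.mpr hdet2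
  set K : ℤ := a1 * D2 - a2 * D1 with hK
  have hdiff : dotIC c u - dotIC c v = (K : ℝ) / ((D1 : ℝ) * (D2 : ℝ)) := by
    rw [hu', hv', hK]
    push_cast
    field_simp
  have hK0 : K ≠ 0 := by
    intro h0
    apply hne
    have : dotIC c u - dotIC c v = 0 := by rw [hdiff, h0]; simp
    linarith
  have hKabs : (1 : ℝ) ≤ |(K : ℝ)| := by exact_mod_cast Int.one_le_abs hK0
  have habs : |dotIC c u - dotIC c v| = |(K : ℝ)| / (|(D1 : ℝ)| * |(D2 : ℝ)|) := by
    rw [hdiff, abs_div, abs_mul]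
  rw [habs]
  have hDDpos : 0 < |(D1 : ℝ)| * |(D2 : ℝ)| := by positivity
  have hDDle : |(D1 : ℝ)| * |(D2 : ℝ)| ≤ (deltaMax A B) ^ 2 := by
    rw [sq]
    exact mul_le_mul hδ1 hδ2 (abs_nonneg _) (le_of_lt hδpos)
  calc 1 / (deltaMax A B) ^ 2 ≤ 1 / (|(D1 : ℝ)| * |(D2 : ℝ)|) :=
        one_div_le_one_div_of_le hDDpos hDDle
    _ ≤ |(K : ℝ)| / (|(D1 : ℝ)| * |(D2 : ℝ)|) := by
        gcongr
end
end
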